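/- arXiv:1101.3427 — 7 statements merged into one kernel-verified Lean document; each statement's English description precedes it below -/
import Mathlib

section
/- Let R be a commutative ring, n ≥ 1, k ≥ 1, and let M^{(1)},…,M^{(k)} be n×n matrices over R. For ordered k-tuples 𝓘 = (I_1,…,I_k) and 𝓙 = (J_1,…,J_k) of pairwise disjoint subsets of {1,…,n} whose unions are {1,…,n}, write 𝓘 ∼ 𝓙 if |I_a| = |J_a| for all a, and in that case let ε(𝓘,𝓙) be the sign of the unique permutation of {1,…,n} that, for each a, maps the r-th smallest element of I_a to the r-th smallest element of J_a. Then det( Σ_{a=1}^k M^{(a)} ) = Σ_{𝓘 ∼ 𝓙} ε(𝓘,𝓙) · ∏_{a=1}^k det( M^{(a)}_{I_a, J_a} ), where the sum is over all pairs of compatible k-tuples, and M^{(a)}_{I_a,J_a} denotes the submatrix of M^{(a)} with rows indexed by I_a and columns indexed by J_a, each taken in increasing order. -/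
open Finset Equiv Equiv.Perm


private lemma sign_sigmaCongrRight_single {ι : Type*} [DecidableEq ι] [Fintype ι]
    {β : ι → Type*} [∀ i, DecidableEq (β i)] [∀ i, Fintype (β i)]
    (a : ι) (p : Equiv.Perm (β a)) :
    Equiv.Perm.sign (Equiv.Perm.sigmaCongrRight (Pi.mulSingle a p)) = Equiv.Perm.sign p := by
  classical
  let f : β a ≃ {x : Σ i, β i // x.1 = a} :=
    { toFun := fun t => ⟨⟨a, t⟩, rfl⟩
      invFun := fun x => cast (congrArg β x.2) x.1.2
      left_inv := fun t => rfl
      right_inv := by rintro ⟨⟨i, t⟩, h⟩; dsimp at h; subst h; rfl }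
  have key : Equiv.Perm.sigmaCongrRight (Pi.mulSingle a p) = p.extendDomain f := by
    apply Equiv.ext
    rintro ⟨i, t⟩
    by_cases h : i = a
    · subst h
      rw [Equiv.Perm.extendDomain_apply_subtype _ f (show (⟨i, t⟩ : Σ j, β j).1 = i from rfl)]
      simp [f, Pi.mulSingle_eq_same]
    · rw [Equiv.Perm.extendDomain_apply_not_subtype _ f h]
      simp [Equiv.Perm.sigmaCongrRight, Pi.mulSingle_eq_of_ne h]
  rw [key, Equiv.Perm.sign_extendDomain]

private lemma sign_sigmaCongrRight' {ι : Type*} [DecidableEq ι] [Fintype ι]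
    {β : ι → Type*} [∀ i, DecidableEq (β i)] [∀ i, Fintype (β i)]
    (τ : ∀ i, Equiv.Perm (β i)) :
    Equiv.Perm.sign (Equiv.Perm.sigmaCongrRight τ) = ∏ i, Equiv.Perm.sign (τ i) := by
  classical
  let g1 : (∀ i, Equiv.Perm (β i)) →* ℤˣ :=
    Equiv.Perm.sign.comp (Equiv.Perm.sigmaCongrRightHom β)
  let g2 : (∀ i, Equiv.Perm (β i)) →* ℤˣ :=
    ∏ i, Equiv.Perm.sign.comp (Pi.evalMonoidHom (fun i => Equiv.Perm (β i)) i)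
  have hg : g1 = g2 := by
    apply MonoidHom.pi_ext
    intro i x
    have h2 : g2 (Pi.mulSingle i x) = ∏ j, Equiv.Perm.sign (Pi.mulSingle (M := fun j => Equiv.Perm (β j)) i x j) := by
      rw [show g2 = ∏ j, Equiv.Perm.sign.comp (Pi.evalMonoidHom (fun i => Equiv.Perm (β i)) j) from rfl,
        MonoidHom.finset_prod_apply]
      rfl
    rw [h2]
    have h1 : g1 (Pi.mulSingle i x) = Equiv.Perm.sign x := sign_sigmaCongrRight_single i x
    rw [h1, Fintype.prod_eq_single i (fun j hj => by rw [Pi.mulSingle_eq_of_ne hj, map_one]),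
      Pi.mulSingle_eq_same]
  have := DFunLike.congr_fun hg τ
  rw [show g1 τ = Equiv.Perm.sign (Equiv.Perm.sigmaCongrRight τ) from rfl] at this
  rw [this, show g2 = ∏ j, Equiv.Perm.sign.comp (Pi.evalMonoidHom (fun i => Equiv.Perm (β i)) j) from rfl,
    MonoidHom.finset_prod_apply]
  rfl

variable {n k : ℕ}

private abbrev blk (c : Fin n → Fin k) (a : Fin k) : Finset (Fin n) :=
  univ.filter fun i => c i = a

private def blkE (c : Fin n → Fin k) (m : Fin k → ℕ) (h : ∀ a, (blk c a).card = m a) :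
    (Σ a : Fin k, Fin (m a)) ≃ Fin n :=
  (Equiv.sigmaCongrRight fun a =>
    ((blk c a).orderIsoOfFin (h a)).toEquiv.trans
      (Equiv.subtypeEquivRight fun x => by simp)).trans (Equiv.sigmaFiberEquiv c)

private lemma blkE_apply (c : Fin n → Fin k) (m : Fin k → ℕ) (h : ∀ a, (blk c a).card = m a)
    (a : Fin k) (t : Fin (m a)) :
    blkE c m h ⟨a, t⟩ = (blk c a).orderEmbOfFin (h a) t := rfl

private lemma blkE_symm_fst (c : Fin n → Fin k) (m : Fin k → ℕ) (h : ∀ a, (blk c a).card = m a)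
    (x : Fin n) : ((blkE c m h).symm x).1 = c x := rfl

private lemma blkE_fst (c : Fin n → Fin k) (m : Fin k → ℕ) (h : ∀ a, (blk c a).card = m a)
    (x : Σ a : Fin k, Fin (m a)) : c (blkE c m h x) = x.1 := by
  rw [← blkE_symm_fst c m h (blkE c m h x), Equiv.symm_apply_apply]

section
variable (c d : Fin n → Fin k)

private lemma cond_iff (σ : Equiv.Perm (Fin n)) :
    (d ∘ ⇑σ.symm = c) ↔ ∀ x, c (σ x) = d x := by
  constructor
  · intro H x
    rw [← H]; simp
  · intro H
    funext x
    simp only [Function.comp_apply]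
    rw [← H (σ.symm x)]; simp

variable (h : ∀ a, (blk c a).card = (blk d a).card)

private lemma filter_empty (hcd : ¬ ∀ a, (blk c a).card = (blk d a).card) :
    (univ.filter fun σ : Equiv.Perm (Fin n) => d ∘ ⇑σ.symm = c) = ∅ := by
  rw [Finset.filter_eq_empty_iff]
  intro σ _ hσ
  apply hcd
  intro a
  have hσ' := (cond_iff c d σ).1 hσ
  apply Finset.card_bij' (fun x _ => σ.symm x) (fun y _ => σ y)
  · intro x hx
    simp only [blk, mem_filter, mem_univ, true_and] at hx ⊢
    rw [show d (σ.symm x) = c x from congrFun hσ x, hx]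
  · intro y hy
    simp only [blk, mem_filter, mem_univ, true_and] at hy ⊢
    rw [hσ' y, hy]
  · intro x _; simp
  · intro y _; simp
end

section
variable (c d : Fin n → Fin k) (h : ∀ a, (blk c a).card = (blk d a).card)

private def EC (c : Fin n → Fin k) : (Σ a : Fin k, Fin ((blk c a).card)) ≃ Fin n :=
  blkE c _ (fun _ => rfl)

private def ED : (Σ a : Fin k, Fin ((blk c a).card)) ≃ Fin n :=
  blkE d _ (fun a => (h a).symm)

private def rho : Equiv.Perm (Fin n) := (EC c).symm.trans (ED c d h)

private def sfam (τ : ∀ a : Fin k, Equiv.Perm (Fin ((blk c a).card))) : Equiv.Perm (Fin n) :=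
  ((ED c d h).symm.trans (Equiv.sigmaCongrRight τ)).trans (EC c)

private def tfam (σ : Equiv.Perm (Fin n)) (hσ : ∀ x, c (σ x) = d x) (a : Fin k) :
    Equiv.Perm (Fin ((blk c a).card)) :=
  (((blk d a).orderIsoOfFin (h a).symm).toEquiv.trans
    ((σ : Fin n ≃ Fin n).subtypeEquiv (fun x => by
      simp only [mem_filter, mem_univ, true_and, hσ x]))).trans
    ((blk c a).orderIsoOfFin rfl).toEquiv.symm

private lemma K1 (τ : ∀ a : Fin k, Equiv.Perm (Fin ((blk c a).card))) (a : Fin k)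
    (t : Fin ((blk c a).card)) :
    sfam c d h τ ((blk d a).orderEmbOfFin (h a).symm t) =
      (blk c a).orderEmbOfFin rfl (τ a t) := by
  have h1 : (blk d a).orderEmbOfFin (h a).symm t = ED c d h ⟨a, t⟩ := rfl
  rw [h1]
  show EC c (Equiv.sigmaCongrRight τ ((ED c d h).symm (ED c d h ⟨a, t⟩))) = _
  rw [Equiv.symm_apply_apply]
  rfl

private lemma K2 (σ : Equiv.Perm (Fin n)) (hσ : ∀ x, c (σ x) = d x) (a : Fin k)
    (t : Fin ((blk c a).card)) :
    (blk c a).orderEmbOfFin rfl (tfam c d h σ hσ a t) =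
      σ ((blk d a).orderEmbOfFin (h a).symm t) := by
  simp only [tfam, Equiv.trans_apply, Equiv.subtypeEquiv_apply]
  rw [show ∀ u : {x // x ∈ blk c a}, (blk c a).orderEmbOfFin rfl
      (((blk c a).orderIsoOfFin rfl).toEquiv.symm u) = u.1 from fun u => by
    rw [← Finset.coe_orderIsoOfFin_apply]
    congr 1
    exact ((blk c a).orderIsoOfFin rfl).apply_symm_apply u]
  simp [Finset.coe_orderIsoOfFin_apply]

private lemma K3 (τ : ∀ a : Fin k, Equiv.Perm (Fin ((blk c a).card))) (x : Fin n) :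
    c (sfam c d h τ x) = d x := by
  have h1 := blkE_fst c (fun a => (blk c a).card) (fun _ => rfl)
    (Equiv.sigmaCongrRight τ ((ED c d h).symm x))
  have h2 := blkE_symm_fst d (fun a => (blk c a).card) (fun a => (h a).symm) x
  exact h1.trans h2
end

section
variable (c d : Fin n → Fin k) (h : ∀ a, (blk c a).card = (blk d a).card)

private lemma K4 (τ : ∀ a : Fin k, Equiv.Perm (Fin ((blk c a).card))) :
    tfam c d h (sfam c d h τ) (K3 c d h τ) = τ := by
  funext a
  apply Equiv.ext
  intro t
  apply ((blk c a).orderEmbOfFin rfl).injective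
  rw [K2, K1]

private lemma K5 (σ : Equiv.Perm (Fin n)) (hσ : ∀ x, c (σ x) = d x) :
    sfam c d h (tfam c d h σ hσ) = σ := by
  apply Equiv.ext
  intro x
  obtain ⟨y, rfl⟩ : ∃ y, x = ED c d h y :=
    ⟨(ED c d h).symm x, (Equiv.apply_symm_apply _ _).symm⟩
  obtain ⟨a, t⟩ := y
  have h1 : ED c d h ⟨a, t⟩ = (blk d a).orderEmbOfFin (h a).symm t := rfl
  rw [h1, K1, K2]

private lemma K6 (τ : ∀ a : Fin k, Equiv.Perm (Fin ((blk c a).card))) :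
    Equiv.Perm.sign (sfam c d h τ) =
      Equiv.Perm.sign (rho c d h) * ∏ a, Equiv.Perm.sign (τ a) := by
  have hdecomp : sfam c d h τ =
      ((ED c d h).symm.trans (EC c) : Equiv.Perm (Fin n)) *
        (ED c d h).permCongr (Equiv.Perm.sigmaCongrRight τ) := by
    apply Equiv.ext
    intro x
    simp [sfam, Equiv.Perm.mul_apply, Equiv.permCongr_apply]
  have hinv : ((ED c d h).symm.trans (EC c) : Equiv.Perm (Fin n)) = (rho c d h)⁻¹ := rfl
  rw [hdecomp, map_mul, hinv, Equiv.Perm.sign_inv, Equiv.Perm.sign_permCongr,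
    sign_sigmaCongrRight']

private lemma K7 {R : Type*} [CommRing R] (M : Fin k → Matrix (Fin n) (Fin n) R)
    (τ : ∀ a : Fin k, Equiv.Perm (Fin ((blk c a).card))) :
    ∏ i, M (d i) (sfam c d h τ i) i =
      ∏ a, ∏ t : Fin ((blk c a).card),
        M a ((blk c a).orderEmbOfFin rfl (τ a t)) ((blk d a).orderEmbOfFin (h a).symm t) := by
  rw [← Equiv.prod_comp (ED c d h) (fun i => M (d i) (sfam c d h τ i) i)]
  rw [← Finset.univ_sigma_univ, Finset.prod_sigma]
  apply Finset.prod_congr rfl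
  intro a _
  apply Finset.prod_congr rfl
  intro t _
  have h1 : ED c d h ⟨a, t⟩ = (blk d a).orderEmbOfFin (h a).symm t := rfl
  have h2 : d (ED c d h ⟨a, t⟩) = a :=
    blkE_fst d (fun a => (blk c a).card) (fun a => (h a).symm) ⟨a, t⟩
  rw [h2, h1, K1]
end

private lemma compat_sum {R : Type*} [CommRing R] (M : Fin k → Matrix (Fin n) (Fin n) R)
    (c d : Fin n → Fin k) (h : ∀ a, (blk c a).card = (blk d a).card) :
    ∑ σ ∈ univ.filter (fun σ : Equiv.Perm (Fin n) => d ∘ ⇑σ.symm = c),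
        ((Equiv.Perm.sign σ : ℤ) : R) * ∏ i, M (d i) (σ i) i
    = ((Equiv.Perm.sign (rho c d h) : ℤ) : R) *
      ∏ a, Matrix.det (Matrix.of fun r t : Fin ((blk c a).card) =>
        M a ((blk c a).orderEmbOfFin rfl r) ((blk d a).orderEmbOfFin (h a).symm t)) := by
  have hdet : ∀ a : Fin k, Matrix.det (Matrix.of fun r t : Fin ((blk c a).card) =>
      M a ((blk c a).orderEmbOfFin rfl r) ((blk d a).orderEmbOfFin (h a).symm t)) =
      ∑ τa : Equiv.Perm (Fin ((blk c a).card)), ((Equiv.Perm.sign τa : ℤ) : R) *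
        ∏ t, M a ((blk c a).orderEmbOfFin rfl (τa t)) ((blk d a).orderEmbOfFin (h a).symm t) := by
    intro a
    rw [Matrix.det_apply']
    rfl
  rw [Finset.prod_congr rfl (fun a _ => hdet a),
    Finset.prod_univ_sum (fun a => (univ : Finset (Equiv.Perm (Fin ((blk c a).card))))),
    Finset.mul_sum]
  refine (Finset.sum_bij' (fun τ _ => sfam c d h τ)
    (fun σ hσ => tfam c d h σ ((cond_iff c d σ).1 (Finset.mem_filter.1 hσ).2))
    ?_ ?_ ?_ ?_ ?_).symm
  · intro τ _
    exact Finset.mem_filter.2 ⟨Finset.mem_univ _, (cond_iff c d _).2 (K3 c d h τ)⟩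
  · intro σ hσ
    simp [Fintype.mem_piFinset]
  · intro τ _
    exact K4 c d h τ
  · intro σ hσ
    exact K5 c d h σ _
  · intro τ _
    rw [K6, K7 c d h M τ]
    push_cast
    rw [Finset.prod_mul_distrib]
    ring

private lemma rho_d (c d : Fin n → Fin k) (h : ∀ a, (blk c a).card = (blk d a).card)
    (x : Fin n) : d (rho c d h x) = c x := by
  have h1 := blkE_fst d (fun a => (blk c a).card) (fun a => (h a).symm) ((EC c).symm x)
  have h2 := blkE_symm_fst c (fun a => (blk c a).card) (fun _ => rfl) x
  exact h1.trans h2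

private lemma rho_mono (c d : Fin n → Fin k) (h : ∀ a, (blk c a).card = (blk d a).card)
    (i j : Fin n) (hc : c i = c j) (hij : i ≤ j) : rho c d h i ≤ rho c d h j := by
  obtain ⟨yi, rfl⟩ : ∃ y, i = EC c y := ⟨(EC c).symm i, (Equiv.apply_symm_apply _ _).symm⟩
  obtain ⟨yj, rfl⟩ : ∃ y, j = EC c y := ⟨(EC c).symm j, (Equiv.apply_symm_apply _ _).symm⟩
  obtain ⟨ai, ti⟩ := yi
  obtain ⟨aj, tj⟩ := yj
  have ha : ai = aj := by
    have h1 : c (EC c ⟨ai, ti⟩) = ai := blkE_fst c _ (fun _ => rfl) ⟨ai, ti⟩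
    have h2 : c (EC c ⟨aj, tj⟩) = aj := blkE_fst c _ (fun _ => rfl) ⟨aj, tj⟩
    rw [← h1, ← h2, hc]
  subst ha
  have hr : ∀ t, rho c d h (EC c ⟨ai, t⟩) = ED c d h ⟨ai, t⟩ := by
    intro t
    show ED c d h ((EC c).symm (EC c ⟨ai, t⟩)) = _
    rw [Equiv.symm_apply_apply]
  rw [hr, hr]
  have hEC : ∀ t, EC c ⟨ai, t⟩ = (blk c ai).orderEmbOfFin rfl t := fun _ => rfl
  have ht : ti ≤ tj := by
    have := hij
    rw [hEC, hEC] at this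
    exact ((blk c ai).orderEmbOfFin rfl).le_iff_le.1 this
  show (blk d ai).orderEmbOfFin (h ai).symm ti ≤ (blk d ai).orderEmbOfFin (h ai).symm tj
  exact ((blk d ai).orderEmbOfFin (h ai).symm).le_iff_le.2 ht



open Finset in
/-- Minor expansion of a determinant of a sum of matrices.
Colorings `c d : Fin n → Fin k` encode the ordered partitions `𝓘 = (c⁻¹ 1, …, c⁻¹ k)` and
`𝓙 = (d⁻¹ 1, …, d⁻¹ k)` of `{1,…,n}`; they are compatible when corresponding blocks have equal
cardinalities.  The function `e` is assumed to give, on each compatible pair, the sign of the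
unique permutation `σ` mapping each block of `𝓘` onto the corresponding block of `𝓙`
monotonically (i.e. `r`-th smallest to `r`-th smallest). -/
theorem det_sum_minor_expansion {R : Type*} [CommRing R] (n k : ℕ) (hn : 1 ≤ n) (hk : 1 ≤ k)
    (M : Fin k → Matrix (Fin n) (Fin n) R)
    (e : (Fin n → Fin k) → (Fin n → Fin k) → ℤ)
    (he : ∀ c d : Fin n → Fin k,
      (∀ a, (univ.filter fun i => c i = a).card = (univ.filter fun i => d i = a).card) →
      ∀ σ : Equiv.Perm (Fin n),
        (∀ i, d (σ i) = c i) →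
        (∀ i j, c i = c j → i ≤ j → σ i ≤ σ j) →
        e c d = (Equiv.Perm.sign σ : ℤ)) :
    Matrix.det (∑ a, M a) =
      ∑ c : Fin n → Fin k, ∑ d : Fin n → Fin k,
        if h : ∀ a, (univ.filter fun i => c i = a).card = (univ.filter fun i => d i = a).card
        then (e c d : R) *
          ∏ a : Fin k,
            Matrix.det (Matrix.of
              fun (r t : Fin ((univ.filter fun i => c i = a).card)) =>
                M a ((univ.filter fun i => c i = a).orderEmbOfFin rfl r)
                    ((univ.filter fun i => d i = a).orderEmbOfFin (h a).symm t))
        else 0 := by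
  classical
  rw [Matrix.det_apply']
  have step1 : ∀ σ : Equiv.Perm (Fin n), ∏ i, (∑ a, M a) (σ i) i
      = ∑ dd : Fin n → Fin k, ∏ i, M (dd i) (σ i) i := by
    intro σ
    have h0 : ∀ i : Fin n, (∑ a, M a) (σ i) i = ∑ a, M a (σ i) i := by
      intro i; simp [Matrix.sum_apply]
    rw [Finset.prod_congr rfl fun i _ => h0 i,
      Finset.prod_univ_sum (fun _ : Fin n => (univ : Finset (Fin k))), Fintype.piFinset_univ]
  calc
    ∑ σ : Equiv.Perm (Fin n), ((Equiv.Perm.sign σ : ℤ) : R) * ∏ i, (∑ a, M a) (σ i) i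
      = ∑ σ : Equiv.Perm (Fin n), ∑ dd : Fin n → Fin k,
          ((Equiv.Perm.sign σ : ℤ) : R) * ∏ i, M (dd i) (σ i) i := by
        refine Finset.sum_congr rfl fun σ _ => ?_
        rw [step1 σ, Finset.mul_sum]
    _ = ∑ dd : Fin n → Fin k, ∑ σ : Equiv.Perm (Fin n),
          ((Equiv.Perm.sign σ : ℤ) : R) * ∏ i, M (dd i) (σ i) i := Finset.sum_comm
    _ = ∑ dd : Fin n → Fin k, ∑ cc : Fin n → Fin k,
          ∑ σ ∈ univ.filter (fun σ : Equiv.Perm (Fin n) => dd ∘ ⇑σ.symm = cc),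
            ((Equiv.Perm.sign σ : ℤ) : R) * ∏ i, M (dd i) (σ i) i := by
        refine Finset.sum_congr rfl fun dd _ => ?_
        exact (Finset.sum_fiberwise univ (fun σ : Equiv.Perm (Fin n) => dd ∘ ⇑σ.symm) _).symm
    _ = ∑ cc : Fin n → Fin k, ∑ dd : Fin n → Fin k,
          ∑ σ ∈ univ.filter (fun σ : Equiv.Perm (Fin n) => dd ∘ ⇑σ.symm = cc),
            ((Equiv.Perm.sign σ : ℤ) : R) * ∏ i, M (dd i) (σ i) i := Finset.sum_comm
    _ = _ := by
        refine Finset.sum_congr rfl fun cc _ => Finset.sum_congr rfl fun dd _ => ?_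
        by_cases hcd : ∀ a, (blk cc a).card = (blk dd a).card
        · rw [dif_pos hcd, compat_sum M cc dd hcd,
            he cc dd hcd (rho cc dd hcd) (rho_d cc dd hcd) (rho_mono cc dd hcd)]
        · rw [dif_neg hcd, filter_empty cc dd hcd, Finset.sum_empty]
end

section
/- Let m ≥ n ≥ k ≥ 0 be integers, let f_1,…,f_m be univariate polynomials over ℂ, and define the Slater determinant P(x_1,…,x_m) = det( f_j(x_i) )_{1≤i,j≤m}. Work in the polynomial ring S = ℂ[z_1,…,z_m, y_1,…,y_n, (u_i^a)_{1≤i≤n,1≤a≤k}, (v_j^a)_{1≤j≤n,1≤a≤k}] in all indicated indeterminates. Then the polynomial P(z_1,…,z_m)^{n−k} divides, in S, the determinant det( Σ_{a=1}^k u_i^a v_j^a · P(z_1,…,ẑ_i,…,z_m, y_j) )_{1≤i,j≤n}, where P(z_1,…,ẑ_i,…,z_m, y_j) means P evaluated with the variable z_i removed from the list (z_1,…,z_m) and y_j appended as the last argument. -/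
open Matrix Finset Equiv

namespace SlaterAux

variable {R : Type*} [CommRing R]

/-- determinant as a sum over permutations, `M i (σ i)` orientation. -/
lemma det_eq_sum_perm {p : ℕ} (M : Matrix (Fin p) (Fin p) R) :
    M.det = ∑ σ : Equiv.Perm (Fin p), Equiv.Perm.sign σ • ∏ i, M i (σ i) := by
  rw [← Matrix.det_transpose, Matrix.det_apply]
  rfl

/-- column-multilinear expansion of `det (A * B)`. -/
lemma det_mul_expand {p : ℕ} {γ : Type*} [Fintype γ] [DecidableEq γ]
    (A : Matrix (Fin p) γ R) (B : Matrix γ (Fin p) R) :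
    (A * B).det
      = ∑ l : Fin p → γ, (∏ i, B (l i) i) * (A.submatrix id l).det := by
  simp only [Matrix.det_apply, Matrix.mul_apply, Matrix.submatrix_apply, id_eq,
    Finset.prod_univ_sum, Fintype.piFinset_univ, Finset.smul_sum]
  rw [Finset.sum_comm]
  refine Finset.sum_congr rfl fun l _ => ?_
  rw [Finset.mul_sum]
  refine Finset.sum_congr rfl fun σ _ => ?_
  rw [Finset.prod_mul_distrib, Units.smul_def, Units.smul_def, zsmul_eq_mul, zsmul_eq_mul]
  ring

/-- weak Cauchy–Binet: divisibility of `det (A * B)` from divisibility of the maximal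
minors of `A`. -/
lemma dvd_det_mul {p : ℕ} {γ : Type*} [Fintype γ] [DecidableEq γ]
    (A : Matrix (Fin p) γ R) (B : Matrix γ (Fin p) R) (d : R)
    (H : ∀ l : Fin p → γ, Function.Injective l → d ∣ (A.submatrix id l).det) :
    d ∣ (A * B).det := by
  rw [det_mul_expand]
  refine Finset.dvd_sum fun l _ => ?_
  by_cases hl : Function.Injective l
  · exact (H l hl).mul_left _
  · rw [Function.not_injective_iff] at hl
    obtain ⟨i, j, hij, hne⟩ := hl
    rw [Matrix.det_zero_of_column_eq hne (fun r => by simp [hij]), mul_zero]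
    exact dvd_zero d

/-- any injection `Fin r → Fin m` extends to an equivalence `Fin r ⊕ Fin (m-r) ≃ Fin m`. -/
lemma exists_equiv_extend {r m : ℕ} (e : Fin r → Fin m) (he : Function.Injective e) :
    ∃ E : (Fin r ⊕ Fin (m - r)) ≃ Fin m, ∀ s, E (Sum.inl s) = e s := by
  classical
  set S : Set (Fin m) := Set.range e with hS
  have hcardS : Fintype.card S = r := by
    simpa using Fintype.card_range (⟨e, he⟩ : Fin r ↪ Fin m)
  have hcardSc : Fintype.card (Sᶜ : Set (Fin m)) = m - r := by
    rw [Fintype.card_compl_set, hcardS, Fintype.card_fin]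
  let e₂ : Fin (m - r) ≃ (Sᶜ : Set (Fin m)) :=
    Fintype.equivOfCardEq (by rw [hcardSc, Fintype.card_fin])
  refine ⟨(Equiv.sumCongr (Equiv.ofInjective e he) e₂).trans (Equiv.Set.sumCompl S),
    fun s => ?_⟩
  simp [Equiv.Set.sumCompl]
  rfl

/-- Jacobi-type divisibility: a `ρ×ρ` minor of the adjugate is divisible by
`det A ^ (card ρ - 1)`. -/
lemma jacobi_dvd {ι ρ π : Type*} [Fintype ι] [DecidableEq ι] [Fintype ρ] [DecidableEq ρ]
    [Fintype π] [DecidableEq π] [IsDomain R]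
    (A : Matrix ι ι R) (hA : A.det ≠ 0) (E G : (ρ ⊕ π) ≃ ι) :
    A.det ^ (Fintype.card ρ - 1) ∣
      Matrix.det (Matrix.of fun s t : ρ => A.adjugate (E (Sum.inl s)) (G (Sum.inl t))) := by
  set d := A.det with hd
  set B := A.adjugate with hB
  set T : Matrix ρ ρ R := Matrix.of fun s t : ρ => B (E (Sum.inl s)) (G (Sum.inl t)) with hT
  set M' : Matrix (ρ ⊕ π) (ρ ⊕ π) R :=
    Matrix.fromBlocks T 0 (Matrix.of fun p t => B (E (Sum.inr p)) (G (Sum.inl t))) 1 with hM'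
  set N : Matrix (ρ ⊕ π) (ρ ⊕ π) R := Matrix.of fun x y =>
    Sum.elim (fun t => if E x = G (Sum.inl t) then (1:R) else 0)
      (fun t' => A (E x) (E (Sum.inr t'))) y with hN
  have key : A.submatrix E E * M' = Matrix.of fun x y =>
      (Sum.elim (fun _ : ρ => d) (fun _ : π => (1:R)) y) * N x y := by
    ext x y
    cases y with
    | inl t =>
      have hcol : ∀ z, M' z (Sum.inl t) = B (E z) (G (Sum.inl t)) := by
        rintro (s | p) <;> rfl
      simp only [Matrix.mul_apply, Matrix.submatrix_apply, hcol]
      have h2 : ∑ z, A (E x) (E z) * B (E z) (G (Sum.inl t))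
          = ∑ q, A (E x) q * B q (G (Sum.inl t)) :=
        Fintype.sum_equiv E _ _ (fun z => rfl)
      rw [h2, ← Matrix.mul_apply, hB, Matrix.mul_adjugate]
      simp [Matrix.one_apply, hN, mul_ite, ← hd]
    | inr t' =>
      have hcol : ∀ z, M' z (Sum.inr t') =
          Sum.elim (fun _ : ρ => (0:R)) (fun p => if p = t' then (1:R) else 0) z := by
        rintro (s | p)
        · rfl
        · simp [hM', Matrix.fromBlocks, Matrix.one_apply]
      simp only [Matrix.mul_apply, Matrix.submatrix_apply, hcol]
      rw [Fintype.sum_sum_type]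
      simp [mul_ite, Finset.sum_ite_eq', hN]
  have hdet : d * T.det = d ^ (Fintype.card ρ) * N.det := by
    have h1 := Matrix.det_mul (A.submatrix E E) M'
    rw [key, Matrix.det_submatrix_equiv_self] at h1
    have h2 : M'.det = T.det := by
      rw [hM', Matrix.det_fromBlocks_zero₁₂, Matrix.det_one, mul_one]
    have h3 : Matrix.det (Matrix.of fun x y =>
          (Sum.elim (fun _ : ρ => d) (fun _ : π => (1:R)) y) * N x y)
        = d ^ (Fintype.card ρ) * N.det := by
      rw [Matrix.det_mul_row]
      congr 1
      rw [Fintype.prod_sum_type]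
      simp [Finset.prod_const, Finset.card_univ]
    rw [h2, h3, ← hd] at h1
    exact h1.symm
  rcases Nat.eq_zero_or_pos (Fintype.card ρ) with hr0 | hrpos
  · rw [hr0]
    simpa using one_dvd _
  · obtain ⟨r', hr'⟩ : ∃ r', Fintype.card ρ = r' + 1 := ⟨Fintype.card ρ - 1, by omega⟩
    have hTd : T.det = d ^ r' * N.det := by
      apply mul_left_cancel₀ hA
      rw [hdet, hr', pow_succ']
      ring
    rw [hr']
    simpa [hTd] using dvd_mul_right (d ^ r') N.det

/-- Jacobi divisibility for minors of the matrix of (unsigned) cofactor-minors of `W`. -/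
lemma jacobi_minor_dvd {m' n : ℕ} [IsDomain R] (hnm : n ≤ m' + 1)
    (W : Matrix (Fin (m' + 1)) (Fin (m' + 1)) R) (hW : W.det ≠ 0)
    {r : ℕ} (e : Fin r → Fin n) (g : Fin r → Fin (m' + 1))
    (he : Function.Injective e) (hg : Function.Injective g) :
    W.det ^ (r - 1) ∣ Matrix.det (Matrix.of fun s t : Fin r =>
      (W.submatrix (Fin.succAbove (Fin.castLE hnm (e s))) (Fin.succAbove (g t))).det) := by
  classical
  set ce : Fin r → Fin (m' + 1) := fun s => Fin.castLE hnm (e s) with hce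
  have hcei : Function.Injective ce := fun a b h => he (Fin.castLE_injective hnm h)
  have hentry : ∀ s t : Fin r,
      (W.submatrix (Fin.succAbove (ce s)) (Fin.succAbove (g t))).det
      = (-1 : R) ^ ((ce s : ℕ)) * ((-1 : R) ^ ((g t : ℕ)) * W.adjugate (g t) (ce s)) := by
    intro s t
    rw [Matrix.adjugate_fin_succ_eq_det_submatrix, ← mul_assoc, ← pow_add, ← mul_assoc,
      ← pow_add, Even.neg_one_pow ⟨(ce s : ℕ) + (g t : ℕ), by ring⟩, one_mul]
  have hmat : (Matrix.of fun s t : Fin r =>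
      (W.submatrix (Fin.succAbove (Fin.castLE hnm (e s))) (Fin.succAbove (g t))).det)
      = Matrix.of fun s t : Fin r =>
          (-1 : R) ^ ((ce s : ℕ)) * ((-1 : R) ^ ((g t : ℕ)) * W.adjugate (g t) (ce s)) := by
    ext s t
    exact hentry s t
  rw [hmat, Matrix.det_mul_column (fun s => (-1 : R) ^ ((ce s : ℕ)))
    (fun s t => (-1 : R) ^ ((g t : ℕ)) * W.adjugate (g t) (ce s))]
  rw [show (fun s t : Fin r => (-1 : R) ^ ((g t : ℕ)) * W.adjugate (g t) (ce s))
      = Matrix.of (fun s t : Fin r => (-1 : R) ^ ((g t : ℕ)) * W.adjugate (g t) (ce s)) from rfl,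
    Matrix.det_mul_row (fun t => (-1 : R) ^ ((g t : ℕ))) (fun s t => W.adjugate (g t) (ce s))]
  rw [show (fun s t : Fin r => W.adjugate (g t) (ce s))
      = Matrix.of (fun s t : Fin r => W.adjugate (g t) (ce s)) from rfl]
  have htr : Matrix.det (Matrix.of fun s t : Fin r => W.adjugate (g t) (ce s))
      = Matrix.det (Matrix.of fun s t : Fin r => W.adjugate (g s) (ce t)) := by
    rw [show (Matrix.of fun s t : Fin r => W.adjugate (g t) (ce s))
        = (Matrix.of fun s t : Fin r => W.adjugate (g s) (ce t))ᵀ from rfl,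
      Matrix.det_transpose]
  rw [htr]
  obtain ⟨E, hE⟩ := exists_equiv_extend g hg
  obtain ⟨G, hG⟩ := exists_equiv_extend ce hcei
  have hre : (Matrix.of fun s t : Fin r => W.adjugate (g s) (ce t))
      = Matrix.of fun s t : Fin r => W.adjugate (E (Sum.inl s)) (G (Sum.inl t)) := by
    ext s t
    simp only [Matrix.of_apply]
    rw [hE, hG]
  rw [hre]
  have hj := jacobi_dvd W hW E G
  rw [Fintype.card_fin] at hj
  exact (hj.mul_left _).mul_left _

/-- the block-diagonal step: maximal minors of the row-selected matrix are divisible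
by `d ^ (n - k)`. -/
lemma dvd_det_blockish {n k m : ℕ} (d : R) (C : Fin n → Fin m → R)
    (hC : ∀ (r : ℕ) (e : Fin r → Fin n) (g : Fin r → Fin m), Function.Injective e →
      Function.Injective g →
      d ^ (r - 1) ∣ Matrix.det (Matrix.of fun s t : Fin r => C (e s) (g t)))
    (a : Fin n → Fin k) (l : Fin n → Fin k × Fin m) (hl : Function.Injective l) :
    d ^ (n - k) ∣ Matrix.det (Matrix.of fun i j : Fin n =>
      if a i = (l j).1 then C i (l j).2 else 0) := by
  classical
  by_cases hcard : ∀ c : Fin k,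
      (univ.filter fun i => (l i).1 = c).card = (univ.filter fun i => a i = c).card
  · let F : ∀ c : Fin k, {i : Fin n // a i = c} ≃ {i : Fin n // (l i).1 = c} := fun c =>
      Fintype.equivOfCardEq (by
        rw [Fintype.card_subtype, Fintype.card_subtype, hcard c])
    let τ : Equiv.Perm (Fin n) :=
      (Equiv.sigmaFiberEquiv a).symm.trans
        ((Equiv.sigmaCongrRight F).trans (Equiv.sigmaFiberEquiv fun i => (l i).1))
    have hτ : ∀ i, (l (τ i)).1 = a i := fun i => (F (a i) ⟨i, rfl⟩).2
    set X := Matrix.of fun i j : Fin n =>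
      (if a i = (l j).1 then C i (l j).2 else 0 : R) with hX
    have hXdet : X.det = ((Equiv.Perm.sign τ : ℤ) : R) * (X.submatrix id τ).det := by
      rw [Matrix.det_permute' τ X, ← mul_assoc, ← Int.cast_mul]
      norm_num
    rw [hXdet]
    refine Dvd.dvd.mul_left ?_ _
    set D := X.submatrix id τ with hD
    have hbt : D.BlockTriangular a := by
      intro i j hij
      have hne : a i ≠ (l (τ j)).1 := by
        rw [hτ j]
        exact ne_of_gt hij
      simp [hD, hX, Matrix.submatrix_apply, hne]
    rw [hbt.det]
    have hdvd : ∀ c ∈ Finset.image a Finset.univ,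
        d ^ ((univ.filter fun i => a i = c).card - 1) ∣ (D.toSquareBlock a c).det := by
      intro c _
      have hcards : Fintype.card {i // a i = c} = (univ.filter fun i => a i = c).card :=
        Fintype.card_subtype _
      set rc := Fintype.card {i // a i = c} with hrc
      let ε : Fin rc ≃ {i // a i = c} := (Fintype.equivFin _).symm
      have hsub : (D.toSquareBlock a c).det
          = Matrix.det (Matrix.of fun s t : Fin rc =>
              C ((ε s) : Fin n) ((l (τ ((ε t) : Fin n))).2)) := by
        rw [← Matrix.det_submatrix_equiv_self ε (D.toSquareBlock a c)]
        congr 1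
        ext s t
        have h1 : a ((ε s) : Fin n) = a ((ε t) : Fin n) := by rw [(ε s).2, (ε t).2]
        have h2 : a ((ε s) : Fin n) = (l (τ ((ε t) : Fin n))).1 := by rw [hτ, h1]
        simp [Matrix.toSquareBlock, Matrix.toSquareBlockProp, Matrix.toBlock,
          hD, hX, Matrix.submatrix_apply, h2]
      rw [hsub, ← hcards]
      apply hC
      · exact fun s t h => ε.injective (Subtype.ext h)
      · intro s t h
        have h1 : (l (τ ((ε s) : Fin n))).1 = (l (τ ((ε t) : Fin n))).1 := by
          rw [hτ, hτ, (ε s).2, (ε t).2]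
        have h3 := τ.injective (hl (Prod.ext h1 h))
        exact ε.injective (Subtype.ext h3)
    have hsum1 : ∑ c ∈ Finset.image a univ, (univ.filter fun i => a i = c).card = n := by
      rw [← Finset.card_eq_sum_card_fiberwise
        (fun x _ => Finset.mem_image_of_mem a (Finset.mem_univ x))]
      simp
    have hone : ∀ c ∈ Finset.image a univ, 1 ≤ (univ.filter fun i => a i = c).card := by
      intro c hc
      obtain ⟨i, _, hi⟩ := Finset.mem_image.mp hc
      exact Finset.card_pos.mpr ⟨i, by simp [hi]⟩
    have hS : (∑ c ∈ Finset.image a univ, ((univ.filter fun i => a i = c).card - 1))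
        + (Finset.image a univ).card = n := by
      rw [Finset.card_eq_sum_ones, ← Finset.sum_add_distrib]
      exact (Finset.sum_congr rfl fun c hc => Nat.sub_add_cancel (hone c hc)).trans hsum1
    have himg : (Finset.image a univ).card ≤ k := by
      have := Finset.card_le_univ (Finset.image a univ)
      simpa using this
    have hmain : d ^ (∑ c ∈ Finset.image a univ, ((univ.filter fun i => a i = c).card - 1))
        ∣ ∏ c ∈ Finset.image a univ, (D.toSquareBlock a c).det := by
      rw [← Finset.prod_pow_eq_pow_sum]
      exact Finset.prod_dvd_prod_of_dvd _ _ hdvd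
    exact dvd_trans (pow_dvd_pow d (by omega)) hmain
  · have hdet : Matrix.det (Matrix.of fun i j : Fin n =>
        (if a i = (l j).1 then C i (l j).2 else 0 : R)) = 0 := by
      rw [Matrix.det_apply]
      refine Finset.sum_eq_zero fun σ _ => ?_
      have hex : ∃ i, a (σ i) ≠ (l i).1 := by
        by_contra hno
        push_neg at hno
        apply hcard
        have hle : ∀ c : Fin k, (univ.filter fun i => (l i).1 = c).card
            ≤ (univ.filter fun i => a i = c).card := by
          intro c
          apply Finset.card_le_card_of_injOn σ
          · intro i hi
            simp only [Finset.coe_filter, Set.mem_setOf_eq, Finset.mem_filter, Finset.mem_univ, true_and] at hi ⊢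
            rw [hno i, hi]
          · exact fun x _ y _ h => σ.injective h
        have hsum : ∑ c : Fin k, (univ.filter fun i => (l i).1 = c).card
            = ∑ c : Fin k, (univ.filter fun i => a i = c).card := by
          rw [← Finset.card_eq_sum_card_fiberwise
              (fun x _ => Finset.mem_univ ((l x).1)),
            ← Finset.card_eq_sum_card_fiberwise (fun x _ => Finset.mem_univ (a x))]
        exact fun c =>
          (Finset.sum_eq_sum_iff_of_le (fun c _ => hle c)).mp hsum c (Finset.mem_univ c)
      obtain ⟨i, hi⟩ := hex
      have hzero : (∏ x, (Matrix.of fun i j : Fin n =>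
          (if a i = (l j).1 then C i (l j).2 else 0 : R)) (σ x) x) = 0 :=
        Finset.prod_eq_zero (Finset.mem_univ i) (by simp [hi])
      rw [hzero, smul_zero]
    rw [hdet]
    exact dvd_zero _

/-- expanding a determinant whose rows are sums of `k` scaled rows. -/
lemma det_sum_rows {n k : ℕ} (u : Fin n → Fin k → R) (G : Fin k → Fin n → Fin n → R) :
    Matrix.det (Matrix.of fun i j : Fin n => ∑ b : Fin k, u i b * G b i j)
      = ∑ a : Fin n → Fin k,
          (∏ i, u i (a i)) * Matrix.det (Matrix.of fun i j => G (a i) i j) := by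
  simp only [det_eq_sum_perm, Matrix.of_apply, Finset.prod_univ_sum, Fintype.piFinset_univ,
    Finset.smul_sum, Finset.mul_sum]
  rw [Finset.sum_comm]
  refine Finset.sum_congr rfl fun a _ => ?_
  refine Finset.sum_congr rfl fun σ _ => ?_
  rw [Finset.prod_mul_distrib, Units.smul_def, Units.smul_def, zsmul_eq_mul, zsmul_eq_mul]
  ring

/-- Laplace expansion along the last row, with the sign in the convenient form. -/
lemma det_expand_last {m' : ℕ} (A : Matrix (Fin (m' + 1)) (Fin (m' + 1)) R) :
    A.det = ∑ c : Fin (m' + 1),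
      (-1 : R) ^ (m' + (c : ℕ)) * A (Fin.last m') c *
        (A.submatrix Fin.castSucc (Fin.succAbove c)).det := by
  rw [Matrix.det_succ_row _ (Fin.last m')]
  refine Finset.sum_congr rfl fun c _ => ?_
  rw [Fin.succAbove_last, Fin.val_last]

end SlaterAux

/-- The variables: `z_1,…,z_m`, `y_1,…,y_n`, `u_i^a`, `v_j^a`. -/
abbrev SlaterVars (m n k : ℕ) := (Fin m ⊕ Fin n) ⊕ ((Fin n × Fin k) ⊕ (Fin n × Fin k))

/-- The Slater determinant `P(x_1,…,x_m) = det (f_j (x_i))`, evaluated on arguments in the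
polynomial ring `ℂ[z, y, u, v]`. -/
noncomputable def slaterP (m n k : ℕ) (f : Fin m → Polynomial ℂ)
    (x : Fin m → MvPolynomial (SlaterVars m n k) ℂ) :
    MvPolynomial (SlaterVars m n k) ℂ :=
  Matrix.det (Matrix.of fun i j : Fin m => Polynomial.aeval (x i) (f j))

open MvPolynomial in
/-- `slaterP` is the evaluation of a "generic" determinant polynomial. -/
lemma slaterP_eq_aeval (m n k : ℕ) (f : Fin m → Polynomial ℂ)
    (x : Fin m → MvPolynomial (SlaterVars m n k) ℂ) :
    slaterP m n k f x = MvPolynomial.aeval x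
      (Matrix.det (Matrix.of fun i c : Fin m =>
        Polynomial.aeval (X i : MvPolynomial (Fin m) ℂ) (f c))) := by
  rw [slaterP, AlgHom.map_det]
  congr 1
  refine Matrix.ext fun i c => ?_
  simp only [AlgHom.mapMatrix_apply, Matrix.map_apply, Matrix.of_apply]
  rw [← Polynomial.aeval_algHom_apply]
  simp

open MvPolynomial in
/-- `P(z)^(n-k)` divides `det ( ∑_a u_i^a v_j^a P(z_1,…,ẑ_i,…,z_m, y_j) )` in
`ℂ[z_1,…,z_m, y_1,…,y_n, (u_i^a), (v_j^a)]`. -/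
theorem slater_det_divisibility (m n k : ℕ) (hnm : n ≤ m) (hkn : k ≤ n)
    (f : Fin m → Polynomial ℂ) :
    slaterP m n k f (fun r => X (Sum.inl (Sum.inl r))) ^ (n - k) ∣
    Matrix.det (Matrix.of fun i j : Fin n =>
      ∑ a : Fin k,
        X (Sum.inr (Sum.inl (i, a))) * X (Sum.inr (Sum.inr (j, a))) *
        slaterP m n k f (fun r =>
          if hr : (r : ℕ) < m - 1 then
            (if (r : ℕ) < (i : ℕ) then
              X (Sum.inl (Sum.inl (⟨(r : ℕ), by have := r.isLt; omega⟩ : Fin m)))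
            else
              X (Sum.inl (Sum.inl (⟨(r : ℕ) + 1, by omega⟩ : Fin m))))
          else X (Sum.inl (Sum.inr j)))) := by
  classical
  rcases Nat.eq_zero_or_pos n with hn0 | hnpos
  · subst hn0
    obtain rfl : k = 0 := Nat.le_zero.mp hkn
    simpa using one_dvd _
  obtain ⟨m', rfl⟩ : ∃ m', m = m' + 1 := ⟨m - 1, by omega⟩
  -- the Wronskian-style matrix in the z-variables
  set W : Matrix (Fin (m' + 1)) (Fin (m' + 1)) (MvPolynomial (SlaterVars (m' + 1) n k) ℂ) :=
    Matrix.of (fun i c => Polynomial.aeval (X (Sum.inl (Sum.inl i)) : (MvPolynomial (SlaterVars (m' + 1) n k) ℂ)) (f c)) with hWdef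
  have hdP : slaterP (m' + 1) n k f (fun r => X (Sum.inl (Sum.inl r))) = W.det := rfl
  -- abbreviations for the variables
  set u : Fin n → Fin k → (MvPolynomial (SlaterVars (m' + 1) n k) ℂ) := fun i b => X (Sum.inr (Sum.inl (i, b))) with hu
  set v : Fin n → Fin k → (MvPolynomial (SlaterVars (m' + 1) n k) ℂ) := fun j b => X (Sum.inr (Sum.inr (j, b))) with hv
  by_cases hd : W.det = 0
  · -- degenerate case: all the inner Slater determinants vanish
    have hgen0 : (Matrix.det (Matrix.of fun i c : Fin (m' + 1) =>
        Polynomial.aeval (X i : MvPolynomial (Fin (m' + 1)) ℂ) (f c))) = 0 := by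
      have h1 : slaterP (m' + 1) n k f (fun r => X (Sum.inl (Sum.inl r))) = 0 := by
        rw [hdP]; exact hd
      rw [slaterP_eq_aeval] at h1
      have h2 : (MvPolynomial.aeval
            (fun r => (X (Sum.inl (Sum.inl r)) : (MvPolynomial (SlaterVars (m' + 1) n k) ℂ))) :
            MvPolynomial (Fin (m' + 1)) ℂ →ₐ[ℂ] (MvPolynomial (SlaterVars (m' + 1) n k) ℂ))
          = MvPolynomial.rename (fun r : Fin (m' + 1) => (Sum.inl (Sum.inl r) :
              SlaterVars (m' + 1) n k)) := by
        ext r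
        simp
      rw [h2] at h1
      exact MvPolynomial.rename_injective _
        (Sum.inl_injective.comp Sum.inl_injective) (by rw [map_zero]; exact h1)
    have hz : Matrix.det (Matrix.of fun i j : Fin n =>
        ∑ a : Fin k,
          X (Sum.inr (Sum.inl (i, a))) * X (Sum.inr (Sum.inr (j, a))) *
          slaterP (m' + 1) n k f (fun r =>
            if hr : (r : ℕ) < m' + 1 - 1 then
              (if (r : ℕ) < (i : ℕ) then
                X (Sum.inl (Sum.inl (⟨(r : ℕ), by have := r.isLt; omega⟩ : Fin (m' + 1))))
              else
                X (Sum.inl (Sum.inl (⟨(r : ℕ) + 1, by omega⟩ : Fin (m' + 1)))))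
            else X (Sum.inl (Sum.inr j))))
        = 0 := by
      refine Matrix.det_eq_zero_of_row_eq_zero ⟨0, hnpos⟩ fun j => ?_
      simp only [Matrix.of_apply]
      refine Finset.sum_eq_zero fun b _ => ?_
      rw [slaterP_eq_aeval, hgen0, map_zero, mul_zero]
    rw [hz]
    exact dvd_zero _
  · -- main case
    -- the cofactor-minor matrix and the sign-twisted evaluation matrix
    set Cm : Fin n → Fin (m' + 1) → (MvPolynomial (SlaterVars (m' + 1) n k) ℂ) := fun i c =>
      (W.submatrix (Fin.succAbove (Fin.castLE hnm i)) (Fin.succAbove c)).det with hCm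
    set Fm : Fin (m' + 1) → Fin n → (MvPolynomial (SlaterVars (m' + 1) n k) ℂ) := fun c j =>
      (-1 : (MvPolynomial (SlaterVars (m' + 1) n k) ℂ)) ^ (m' + (c : ℕ)) * Polynomial.aeval (X (Sum.inl (Sum.inr j)) : (MvPolynomial (SlaterVars (m' + 1) n k) ℂ)) (f c)
      with hFm
    -- Step A: cofactor expansion of the inner Slater determinants
    have hQ : ∀ i j : Fin n,
        slaterP (m' + 1) n k f (fun r =>
          if hr : (r : ℕ) < m' + 1 - 1 then
            (if (r : ℕ) < (i : ℕ) then
              X (Sum.inl (Sum.inl (⟨(r : ℕ), by have := r.isLt; omega⟩ : Fin (m' + 1))))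
            else
              X (Sum.inl (Sum.inl (⟨(r : ℕ) + 1, by omega⟩ : Fin (m' + 1)))))
          else X (Sum.inl (Sum.inr j)))
        = ∑ c, Cm i c * Fm c j := by
      intro i j
      set xm : Fin (m' + 1) → (MvPolynomial (SlaterVars (m' + 1) n k) ℂ) := fun r =>
        if hr : (r : ℕ) < m' + 1 - 1 then
          (if (r : ℕ) < (i : ℕ) then
            X (Sum.inl (Sum.inl (⟨(r : ℕ), by have := r.isLt; omega⟩ : Fin (m' + 1))))
          else
            X (Sum.inl (Sum.inl (⟨(r : ℕ) + 1, by omega⟩ : Fin (m' + 1)))))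
        else X (Sum.inl (Sum.inr j)) with hxm
      have hslater : slaterP (m' + 1) n k f xm
          = (Matrix.of fun r c : Fin (m' + 1) => Polynomial.aeval (xm r) (f c)).det := rfl
      rw [hslater, SlaterAux.det_expand_last]
      refine Finset.sum_congr rfl fun c _ => ?_
      have hlastval : xm (Fin.last m') = X (Sum.inl (Sum.inr j)) := by
        rw [hxm]
        simp
      have hsubm : ((Matrix.of fun r c : Fin (m' + 1) =>
            Polynomial.aeval (xm r) (f c)).submatrix Fin.castSucc (Fin.succAbove c))
          = W.submatrix (Fin.succAbove (Fin.castLE hnm i)) (Fin.succAbove c) := by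
        ext r' c'
        have hxval : xm (Fin.castSucc r')
            = X (Sum.inl (Sum.inl ((Fin.castLE hnm i).succAbove r'))) := by
          have hlt : ((Fin.castSucc r' : Fin (m' + 1)) : ℕ) < m' + 1 - 1 := by
            simpa using r'.isLt
          simp only [hxm]
          rw [dif_pos hlt]
          by_cases hri : ((Fin.castSucc r' : Fin (m' + 1)) : ℕ) < (i : ℕ)
          · rw [if_pos hri]
            have hfin : (⟨((Fin.castSucc r' : Fin (m' + 1)) : ℕ),
                  by have := (Fin.castSucc r').isLt; omega⟩ : Fin (m' + 1))
                = (Fin.castLE hnm i).succAbove r' := by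
              ext
              simp only [Fin.succAbove]
              rw [if_pos (by simpa [Fin.lt_def] using hri)]
            rw [hfin]
          · rw [if_neg hri]
            have hfin : (⟨((Fin.castSucc r' : Fin (m' + 1)) : ℕ) + 1,
                  by have := r'.isLt; omega⟩ : Fin (m' + 1))
                = (Fin.castLE hnm i).succAbove r' := by
              ext
              simp only [Fin.succAbove]
              rw [if_neg (by simpa [Fin.lt_def] using hri)]
              simp
            rw [hfin]
        simp only [Matrix.submatrix_apply, Matrix.of_apply, hWdef, hxval]
      simp only [Matrix.of_apply]
      rw [hlastval, hsubm]
      rw [hCm, hFm]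
      simp only [Matrix.of_apply]
      ring
    -- rewrite the target matrix
    have hMeq : (Matrix.of fun i j : Fin n =>
        ∑ a : Fin k,
          X (Sum.inr (Sum.inl (i, a))) * X (Sum.inr (Sum.inr (j, a))) *
          slaterP (m' + 1) n k f (fun r =>
            if hr : (r : ℕ) < m' + 1 - 1 then
              (if (r : ℕ) < (i : ℕ) then
                X (Sum.inl (Sum.inl (⟨(r : ℕ), by have := r.isLt; omega⟩ : Fin (m' + 1))))
              else
                X (Sum.inl (Sum.inl (⟨(r : ℕ) + 1, by omega⟩ : Fin (m' + 1)))))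
            else X (Sum.inl (Sum.inr j))))
        = Matrix.of fun i j : Fin n =>
            ∑ b : Fin k, u i b * (v j b * ∑ c, Cm i c * Fm c j) := by
      refine Matrix.ext fun i j => ?_
      simp only [Matrix.of_apply]
      refine Finset.sum_congr rfl fun b _ => ?_
      rw [hQ i j, hu, hv]
      ring
    rw [hMeq, hdP]
    rw [SlaterAux.det_sum_rows u (fun b i j => v j b * ∑ c, Cm i c * Fm c j)]
    refine Finset.dvd_sum fun a _ => ?_
    refine Dvd.dvd.mul_left ?_ _
    -- Step D: factor the inner matrix as a product
    set A2 : Matrix (Fin n) (Fin k × Fin (m' + 1)) (MvPolynomial (SlaterVars (m' + 1) n k) ℂ) :=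
      Matrix.of fun i p => if a i = p.1 then Cm i p.2 else 0 with hA2
    set B2 : Matrix (Fin k × Fin (m' + 1)) (Fin n) (MvPolynomial (SlaterVars (m' + 1) n k) ℂ) :=
      Matrix.of fun p j => v j p.1 * Fm p.2 j with hB2
    have hprod : (Matrix.of fun i j : Fin n => v j (a i) * ∑ c, Cm i c * Fm c j)
        = A2 * B2 := by
      refine Matrix.ext fun i j => ?_
      rw [Matrix.mul_apply, Fintype.sum_prod_type]
      simp only [Matrix.of_apply]
      rw [Finset.sum_eq_single (a i)]
      · simp only [hA2, hB2, Matrix.of_apply, eq_self_iff_true, if_true]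
        rw [Finset.mul_sum]
        refine (Finset.sum_congr rfl fun c _ => ?_).symm
        ring
      · intro b _ hb
        refine Finset.sum_eq_zero fun c _ => ?_
        simp [hA2, Ne.symm hb]
      · intro h
        exact absurd (Finset.mem_univ _) h
    rw [hprod]
    refine SlaterAux.dvd_det_mul A2 B2 _ fun l hl => ?_
    have hsub2 : A2.submatrix id l = Matrix.of fun i s : Fin n =>
        if a i = (l s).1 then Cm i (l s).2 else 0 := rfl
    rw [hsub2]
    refine SlaterAux.dvd_det_blockish (W.det) Cm (fun r e g he hg => ?_) a l hl
    exact SlaterAux.jacobi_minor_dvd hnm W hd e g he hg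
end

section
/- Let n ≥ 2 and 0 ≤ ℓ' ≤ ℓ be integers and set q = exp(2πi/(ℓ+2)). For any three distinct integers g, h, k in {0,1,…,ℓ+1}, the polynomial identity s_{λ_{n,ℓ,ℓ'}}(z_1,…,z_{2n−3}, q^g w, q^h w, q^k w) = 0 holds in ℂ[z_1,…,z_{2n−3}, w]; i.e., the 2-staircase Schur polynomial vanishes identically whenever three of its 2n arguments are specialized to q^g w, q^h w, q^k w. (Since s_{λ_{n,ℓ,ℓ'}} is symmetric, the three specialized arguments may be placed in any three distinct positions.) -/
/-- The shifted Vandermonde determinant `Δ_λ(v) = det (v_i ^ (λ_j + N - j))`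
(indices `j` one-based, so the exponent is `λ j + (N - 1 - j)` for zero-based `j`). -/
def shiftedVdm {R : Type*} [CommRing R] {N : ℕ} (lam : Fin N → ℕ) (v : Fin N → R) : R :=
  Matrix.det (Matrix.of fun i j : Fin N => v i ^ (lam j + (N - 1 - (j : ℕ))))

/-- The Vandermonde product `Δ(v) = ∏_{i<j} (v i - v j)`. -/
def vdmProd {R : Type*} [CommRing R] {N : ℕ} (v : Fin N → R) : R :=
  ∏ i : Fin N, ∏ j ∈ Finset.Ioi i, (v i - v j)

/-- The 2-staircase partition `λ_{n,ℓ,ℓ'}` of length `2n`: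
its `(2j-1)`-th part is `(n-j)ℓ + ℓ'` and its `(2j)`-th part is `(n-j)ℓ` (1-based). -/
def twoStaircase (n ℓ ℓ' : ℕ) : Fin (2 * n) → ℕ := fun t =>
  if (t : ℕ) % 2 = 0 then (n - 1 - (t : ℕ) / 2) * ℓ + ℓ'
  else (n - ((t : ℕ) + 1) / 2) * ℓ

/-- The staircase partition `μ_{N,h} = ((N-1)h, (N-2)h, …, h, 0)`. -/
def staircasePart (N h : ℕ) : Fin N → ℕ := fun t => (N - 1 - (t : ℕ)) * h

/-- `exp(2πi/d)`. -/
noncomputable def qRoot (d : ℕ) : ℂ := Complex.exp (2 * Real.pi * Complex.I / (d : ℂ))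

open Matrix in
lemma det_zero_of_three_rows_rel {R : Type*} [CommRing R] [IsDomain R] {N : ℕ}
    (M : Matrix (Fin N) (Fin N) R) (i1 i2 i3 : Fin N)
    (h13 : i1 ≠ i3) (h23 : i2 ≠ i3)
    (a b c : R) (hc : c ≠ 0)
    (hrel : ∀ j, a * M i1 j + b * M i2 j + c * M i3 j = 0) :
    M.det = 0 := by
  have h1 : c • M i3 = (-a) • M i1 + (-b) • M i2 := by
    funext j
    have := hrel j
    simp only [Pi.add_apply, Pi.smul_apply, smul_eq_mul]
    linear_combination this
  have key : c * M.det = 0 := by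
    calc c * M.det = (M.updateRow i3 (c • M i3)).det := by
          rw [det_updateRow_smul, updateRow_eq_self]
      _ = 0 := by
          rw [h1, det_updateRow_add, det_updateRow_smul, det_updateRow_smul,
            det_updateRow_eq_zero h13, det_updateRow_eq_zero h23]
          ring
  rcases mul_eq_zero.mp key with h | h
  · exact absurd h hc
  · exact h

lemma twoStaircase_expo (n ℓ ℓ' : ℕ) (j : Fin (2 * n)) :
    ∃ m : ℕ, twoStaircase n ℓ ℓ' j + (2 * n - 1 - (j : ℕ)) = m * (ℓ + 2)
      ∨ twoStaircase n ℓ ℓ' j + (2 * n - 1 - (j : ℕ)) = m * (ℓ + 2) + (ℓ' + 1) := by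
  obtain ⟨t, ht⟩ := j
  simp only [twoStaircase]
  rcases Nat.even_or_odd t with ⟨a, rfl⟩ | ⟨a, rfl⟩
  · refine ⟨n - 1 - a, Or.inr ?_⟩
    have h1 : (a + a) % 2 = 0 := by omega
    have h2 : (a + a) / 2 = a := by omega
    rw [if_pos h1, h2]
    have h3 : 2 * n - 1 - (a + a) = 2 * (n - 1 - a) + 1 := by omega
    rw [h3]; ring
  · refine ⟨n - 1 - a, Or.inl ?_⟩
    have h1 : ¬((2 * a + 1) % 2 = 0) := by omega
    have h2 : (2 * a + 1 + 1) / 2 = a + 1 := by omega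
    rw [if_neg h1, h2]
    have h3 : n - (a + 1) = n - 1 - a := by omega
    have h4 : 2 * n - 1 - (2 * a + 1) = 2 * (n - 1 - a) := by omega
    rw [h3, h4]; ring

open MvPolynomial in
/-- Wheel condition for 2-staircase Schur polynomials: if `q = exp(2πi/(ℓ+2))` and three of
the `2n` arguments of `s_{λ_{n,ℓ,ℓ'}}` are specialized to `q^g w, q^h w, q^k w` for distinct
`g, h, k ∈ {0,…,ℓ+1}`, the result is the zero polynomial in `ℂ[z_1,…,z_{2n-3}, w]`.
Here `S` is the Schur polynomial of `λ_{n,ℓ,ℓ'}`, characterized by `Δ_λ = S * Δ`. -/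
theorem twoStaircase_wheel (n ℓ ℓ' : ℕ) (hn : 2 ≤ n) (hl : ℓ' ≤ ℓ)
    (g h k : ℕ) (hg : g ≤ ℓ + 1) (hh : h ≤ ℓ + 1) (hk : k ≤ ℓ + 1)
    (hgh : g ≠ h) (hgk : g ≠ k) (hhk : h ≠ k)
    (S : MvPolynomial (Fin (2 * n)) ℂ)
    (hS : shiftedVdm (twoStaircase n ℓ ℓ') (fun i => X i)
        = S * vdmProd (fun i => X i)) :
    aeval (fun v : Fin (2 * n) =>
      if hv : (v : ℕ) < 2 * n - 3 then
        (X (Sum.inl ⟨(v : ℕ), hv⟩) : MvPolynomial (Fin (2 * n - 3) ⊕ Unit) ℂ)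
      else if (v : ℕ) = 2 * n - 3 then C (qRoot (ℓ + 2) ^ g) * X (Sum.inr ())
      else if (v : ℕ) = 2 * n - 2 then C (qRoot (ℓ + 2) ^ h) * X (Sum.inr ())
      else C (qRoot (ℓ + 2) ^ k) * X (Sum.inr ())) S = 0 := by
  have hd : (ℓ + 2 : ℕ) ≠ 0 := by omega
  have hq : IsPrimitiveRoot (qRoot (ℓ + 2)) (ℓ + 2) := by
    have := Complex.isPrimitiveRoot_exp (ℓ + 2) hd
    simpa [qRoot] using this
  set q := qRoot (ℓ + 2) with hqdef
  have hq1 : q ^ (ℓ + 2) = 1 := hq.pow_eq_one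
  have hqinj : ∀ a b : ℕ, a ≤ ℓ + 1 → b ≤ ℓ + 1 → a ≠ b → q ^ a ≠ q ^ b := by
    intro a b ha hb hab hEq
    exact hab (hq.pow_inj (by omega) (by omega) hEq)
  set Φ : Fin (2 * n) → MvPolynomial (Fin (2 * n - 3) ⊕ Unit) ℂ := fun v =>
      if hv : (v : ℕ) < 2 * n - 3 then
        (X (Sum.inl ⟨(v : ℕ), hv⟩) : MvPolynomial (Fin (2 * n - 3) ⊕ Unit) ℂ)
      else if (v : ℕ) = 2 * n - 3 then C (q ^ g) * X (Sum.inr ())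
      else if (v : ℕ) = 2 * n - 2 then C (q ^ h) * X (Sum.inr ())
      else C (q ^ k) * X (Sum.inr ()) with hΦ
  -- values of Φ at the three special indices (and in general above 2n-3)
  have hΦC : ∀ v : Fin (2 * n), ¬ (v : ℕ) < 2 * n - 3 → ∃ p : ℕ,
      (p = g ∧ (v : ℕ) = 2 * n - 3 ∨ p = h ∧ (v : ℕ) = 2 * n - 2 ∨ p = k ∧ (v : ℕ) = 2 * n - 1)
      ∧ Φ v = C (q ^ p) * X (Sum.inr ()) := by
    intro v hv
    by_cases h1 : (v : ℕ) = 2 * n - 3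
    · exact ⟨g, Or.inl ⟨rfl, h1⟩, by simp only [hΦ]; rw [dif_neg hv, if_pos h1]⟩
    by_cases h2 : (v : ℕ) = 2 * n - 2
    · exact ⟨h, Or.inr (Or.inl ⟨rfl, h2⟩), by simp only [hΦ]; rw [dif_neg hv, if_neg h1, if_pos h2]⟩
    · have h3 : (v : ℕ) = 2 * n - 1 := by omega
      exact ⟨k, Or.inr (Or.inr ⟨rfl, h3⟩), by simp only [hΦ]; rw [dif_neg hv, if_neg h1, if_neg h2]⟩
  -- separation: distinct variables stay distinct
  have hsep : ∀ i j : Fin (2 * n), (i : ℕ) < (j : ℕ) → Φ i - Φ j ≠ 0 := by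
    intro i j hij hzero
    have hz : Φ i = Φ j := sub_eq_zero.mp hzero
    by_cases hj : (j : ℕ) < 2 * n - 3
    · have hi : (i : ℕ) < 2 * n - 3 := by omega
      simp only [hΦ] at hz
      rw [dif_pos hi, dif_pos hj] at hz
      have := congrArg (MvPolynomial.eval
        (fun x => if x = (Sum.inl ⟨(i : ℕ), hi⟩ : Fin (2 * n - 3) ⊕ Unit) then (1 : ℂ) else 0)) hz
      rw [eval_X, eval_X, if_pos rfl, if_neg (by simp; omega)] at this
      exact one_ne_zero this
    · obtain ⟨pj, hpj, hΦj⟩ := hΦC j hj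
      by_cases hi : (i : ℕ) < 2 * n - 3
      · rw [hΦj] at hz
        simp only [hΦ] at hz
        rw [dif_pos hi] at hz
        have := congrArg (MvPolynomial.eval
          (fun x => if x = (Sum.inl ⟨(i : ℕ), hi⟩ : Fin (2 * n - 3) ⊕ Unit) then (1 : ℂ) else 0)) hz
        rw [eval_X, if_pos rfl, eval_mul, eval_C, eval_X, if_neg (by simp)] at this
        simp at this
      · obtain ⟨pi, hpi, hΦi⟩ := hΦC i hi
        rw [hΦi, hΦj] at hz
        have := congrArg (MvPolynomial.eval (fun _ => (1 : ℂ))) hz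
        simp only [eval_mul, eval_C, eval_X, mul_one] at this
        rcases hpi with ⟨rfl, hv1⟩ | ⟨rfl, hv1⟩ | ⟨rfl, hv1⟩ <;>
          rcases hpj with ⟨rfl, hv2⟩ | ⟨rfl, hv2⟩ | ⟨rfl, hv2⟩ <;>
          first
            | omega
            | exact hqinj _ _ (by omega) (by omega) (by omega) this
  -- the three special rows
  obtain ⟨r1, hr1⟩ : ∃ r : Fin (2 * n), (r : ℕ) = 2 * n - 3 := ⟨⟨2 * n - 3, by omega⟩, rfl⟩
  obtain ⟨r2, hr2⟩ : ∃ r : Fin (2 * n), (r : ℕ) = 2 * n - 2 := ⟨⟨2 * n - 2, by omega⟩, rfl⟩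
  obtain ⟨r3, hr3⟩ : ∃ r : Fin (2 * n), (r : ℕ) = 2 * n - 1 := ⟨⟨2 * n - 1, by omega⟩, rfl⟩
  have hΦ1 : Φ r1 = C (q ^ g) * X (Sum.inr ()) := by
    simp only [hΦ]; rw [dif_neg (by omega), if_pos hr1]
  have hΦ2 : Φ r2 = C (q ^ h) * X (Sum.inr ()) := by
    simp only [hΦ]; rw [dif_neg (by omega), if_neg (by omega), if_pos hr2]
  have hΦ3 : Φ r3 = C (q ^ k) * X (Sum.inr ()) := by
    simp only [hΦ]; rw [dif_neg (by omega), if_neg (by omega), if_neg (by omega)]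
  -- exponents
  set E : Fin (2 * n) → ℕ := fun j => twoStaircase n ℓ ℓ' j + (2 * n - 1 - (j : ℕ)) with hE
  set s : ℕ := ℓ' + 1 with hs
  have hpow0 : ∀ p m : ℕ, q ^ (p * (m * (ℓ + 2))) = 1 := by
    intro p m
    rw [show p * (m * (ℓ + 2)) = (ℓ + 2) * (p * m) by ring, pow_mul, hq1, one_pow]
  have hpow1 : ∀ p m : ℕ, q ^ (p * (m * (ℓ + 2) + s)) = q ^ (p * s) := by
    intro p m
    rw [show p * (m * (ℓ + 2) + s) = (ℓ + 2) * (p * m) + p * s by ring, pow_add, pow_mul,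
      hq1, one_pow, one_mul]
  have hentry : ∀ (p : ℕ) (j : Fin (2 * n)),
      ((C (q ^ p) * X (Sum.inr ()) : MvPolynomial (Fin (2 * n - 3) ⊕ Unit) ℂ)) ^ (E j)
        = C (q ^ (p * E j)) * X (Sum.inr ()) ^ (E j) := by
    intro p j
    rw [mul_pow, ← C_pow, ← pow_mul]
  -- apply aeval to the defining equation
  have H := congrArg (aeval Φ) hS
  rw [map_mul] at H
  have hDlam : (aeval Φ) (shiftedVdm (twoStaircase n ℓ ℓ') (fun i => (X i : MvPolynomial (Fin (2 * n)) ℂ)))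
      = Matrix.det (Matrix.of fun i j : Fin (2 * n) => (Φ i) ^ (E j)) := by
    unfold shiftedVdm
    rw [AlgHom.map_det]
    congr 1
    ext i j
    simp [Matrix.map_apply, map_pow, hE]
  have hdet : Matrix.det (Matrix.of fun i j : Fin (2 * n) => (Φ i) ^ (E j)) = 0 := by
    by_cases hc : q ^ (g * s) = q ^ (h * s)
    · apply Matrix.det_zero_of_row_eq (M := Matrix.of fun i j : Fin (2 * n) => (Φ i) ^ (E j))
        (i := r1) (j := r2) (Fin.ne_of_val_ne (by omega))
      funext j
      simp only [Matrix.of_apply]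
      rw [hΦ1, hΦ2, hentry, hentry]
      obtain ⟨m, hm | hm⟩ := twoStaircase_expo n ℓ ℓ' j
      · rw [show E j = m * (ℓ + 2) from hm, hpow0, hpow0]
      · rw [show E j = m * (ℓ + 2) + s from hm, hpow1, hpow1, hc]
    · apply det_zero_of_three_rows_rel _ r1 r2 r3
        (Fin.ne_of_val_ne (by omega)) (Fin.ne_of_val_ne (by omega))
        (C (q ^ (h * s) - q ^ (k * s))) (C (q ^ (k * s) - q ^ (g * s)))
        (C (q ^ (g * s) - q ^ (h * s)))
      · intro h0
        have : q ^ (g * s) - q ^ (h * s) = 0 :=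
          C_injective _ ℂ (by rw [map_zero]; exact h0)
        exact hc (sub_eq_zero.mp this)
      · intro j
        simp only [Matrix.of_apply]
        rw [hΦ1, hΦ2, hΦ3, hentry, hentry, hentry]
        obtain ⟨m, hm | hm⟩ := twoStaircase_expo n ℓ ℓ' j
        · rw [show E j = m * (ℓ + 2) from hm, hpow0, hpow0, hpow0]
          simp only [map_sub, map_one]
          ring
        · rw [show E j = m * (ℓ + 2) + s from hm, hpow1, hpow1, hpow1]
          simp only [map_sub]
          ring
  have hΔ : (aeval Φ) (vdmProd (fun i : Fin (2 * n) => (X i : MvPolynomial (Fin (2 * n)) ℂ))) ≠ 0 := by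
    rw [vdmProd]
    simp only [map_prod, map_sub, aeval_X]
    rw [Finset.prod_ne_zero_iff]
    intro i _
    rw [Finset.prod_ne_zero_iff]
    intro j hj
    exact hsep i j (Fin.lt_def.mp (Finset.mem_Ioi.mp hj))
  rw [hDlam, hdet] at H
  rcases mul_eq_zero.mp H.symm with h0 | h0
  · exact h0
  · exact absurd h0 hΔ
end

section
/- Let n ≥ 2 and 0 ≤ ℓ' ≤ ℓ be integers and set q = exp(2πi/(ℓ+2)). Then for every k ∈ {1,…,ℓ+1}, the following identity holds in ℂ[z_1,…,z_{2n−2}, w]: s_{λ_{n,ℓ,ℓ'}}(z_1,…,z_{2n−2}, w, q^k w) = w^{ℓ'} · U_{ℓ'}(1, q^k) · ( ∏_{m=1}^{2n−2} ∏_{t ∈ {1,…,ℓ+1}, t ≠ k} (z_m − q^t w) ) · s_{λ_{n−1,ℓ,ℓ'}}(z_1,…,z_{2n−2}). (Equivalently, the inner product over t equals U_{ℓ+1}(z_m, w)/(z_m − q^k w), since U_{ℓ+1}(x,w) = ∏_{t=1}^{ℓ+1}(x − q^t w).) -/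
/-- clean exponent function: `EE P l l' j = twoStaircase P l l' j + (2P - 1 - j)` -/
def EE (P l l' : ℕ) (j : ℕ) : ℕ :=
  if j % 2 = 0 then (P - 1 - j / 2) * (l + 2) + (l' + 1) else (P - (j + 1) / 2) * (l + 2)

lemma EE_spec' (P l l' : ℕ) (j : ℕ) (hj : j < 2 * P) :
    (if j % 2 = 0 then (P - 1 - j / 2) * l + l' else (P - (j + 1) / 2) * l) + (2 * P - 1 - j)
      = EE P l l' j := by
  unfold EE
  rcases Nat.mod_two_eq_zero_or_one j with h | h
  · rw [if_pos h, if_pos h]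
    obtain ⟨a, rfl⟩ : ∃ a, j = 2 * a := ⟨j / 2, by omega⟩
    obtain ⟨b, rfl⟩ : ∃ b, P = a + b + 1 := ⟨P - a - 1, by omega⟩
    have h1 : 2 * a / 2 = a := by omega
    rw [h1]
    have h2 : a + b + 1 - 1 - a = b := by omega
    rw [h2]
    have h3 : 2 * (a + b + 1) - 1 - 2 * a = 2 * b + 1 := by omega
    rw [h3]; ring
  · rw [if_neg (by omega), if_neg (by omega)]
    obtain ⟨a, rfl⟩ : ∃ a, j = 2 * a + 1 := ⟨j / 2, by omega⟩
    obtain ⟨b, rfl⟩ : ∃ b, P = a + b + 1 := ⟨P - a - 1, by omega⟩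
    have h1 : (2 * a + 1 + 1) / 2 = a + 1 := by omega
    rw [h1]
    have h2 : a + b + 1 - (a + 1) = b := by omega
    rw [h2]
    have h3 : 2 * (a + b + 1) - 1 - (2 * a + 1) = 2 * b := by omega
    rw [h3]; ring

lemma EE_spec (P l l' : ℕ) (j : Fin (2 * P)) :
    twoStaircase P l l' j + (2 * P - 1 - (j : ℕ)) = EE P l l' (j : ℕ) :=
  EE_spec' P l l' (j : ℕ) j.isLt

lemma EE_shift (p l l' j : ℕ) (hj : j < 2 * p + 2) :
    EE (p + 2) l l' j = EE (p + 1) l l' j + (l + 2) := by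
  unfold EE
  rcases Nat.mod_two_eq_zero_or_one j with h | h
  · rw [if_pos h, if_pos h]
    have h1 : p + 2 - 1 - j / 2 = (p + 1 - 1 - j / 2) + 1 := by omega
    rw [h1]; ring
  · rw [if_neg (by omega), if_neg (by omega)]
    have h1 : p + 2 - (j + 1) / 2 = (p + 1 - (j + 1) / 2) + 1 := by omega
    rw [h1]; ring

lemma EE_two (p l l' j : ℕ) :
    EE (p + 2) l l' (j + 2) = EE (p + 1) l l' j := by
  unfold EE
  rcases Nat.mod_two_eq_zero_or_one j with h | h
  · rw [if_pos (by omega), if_pos h]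
    have h1 : (j + 2) / 2 = j / 2 + 1 := by omega
    rw [h1]
    have h2 : p + 2 - 1 - (j / 2 + 1) = p + 1 - 1 - j / 2 := by omega
    rw [h2]
  · rw [if_neg (by omega), if_neg (by omega)]
    have h1 : (j + 2 + 1) / 2 = (j + 1) / 2 + 1 := by omega
    rw [h1]
    have h2 : p + 2 - ((j + 1) / 2 + 1) = p + 1 - (j + 1) / 2 := by omega
    rw [h2]

lemma EE_top0 (p l l' : ℕ) : EE (p + 2) l l' (2 * p + 2) = l' + 1 := by
  unfold EE
  rw [if_pos (by omega)]
  have h1 : (2 * p + 2) / 2 = p + 1 := by omega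
  rw [h1]
  have h2 : p + 2 - 1 - (p + 1) = 0 := by omega
  rw [h2, zero_mul, zero_add]

lemma EE_top1 (p l l' : ℕ) : EE (p + 2) l l' (2 * p + 3) = 0 := by
  unfold EE
  rw [if_neg (by omega)]
  have h1 : (2 * p + 3 + 1) / 2 = p + 2 := by omega
  rw [h1]
  have h2 : p + 2 - (p + 2) = 0 := by omega
  rw [h2, zero_mul]

lemma map_shiftedVdm {A B : Type*} [CommRing A] [CommRing B] (f : A →+* B) {N : ℕ}
    (lam : Fin N → ℕ) (v : Fin N → A) :
    f (shiftedVdm lam v) = shiftedVdm lam (fun i => f (v i)) := by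
  unfold shiftedVdm
  rw [RingHom.map_det]
  congr 1
  ext i j
  simp [Matrix.map_apply, map_pow]

lemma map_vdmProd {A B : Type*} [CommRing A] [CommRing B] (f : A →+* B) {N : ℕ}
    (v : Fin N → A) :
    f (vdmProd v) = vdmProd (fun i => f (v i)) := by
  unfold vdmProd
  rw [map_prod]
  exact Finset.prod_congr rfl fun i _ => by
    rw [map_prod]
    exact Finset.prod_congr rfl fun j _ => map_sub f _ _

lemma vdmProd_ne_zero {R : Type*} [CommRing R] [IsDomain R] {N : ℕ} {y : Fin N → R}
    (hy : Function.Injective y) : vdmProd y ≠ 0 := by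
  unfold vdmProd
  rw [Finset.prod_ne_zero_iff]
  intro i _
  rw [Finset.prod_ne_zero_iff]
  intro j hj
  have hij : i ≠ j := ne_of_lt (Finset.mem_Ioi.1 hj)
  exact sub_ne_zero.2 fun h => hij (hy h)

lemma vdmProd_snoc {R : Type*} [CommRing R] {M : ℕ} (v : Fin (M + 1) → R) :
    vdmProd v = (∏ i : Fin M, (v (Fin.castSucc i) - v (Fin.last M)))
      * vdmProd (fun i => v (Fin.castSucc i)) := by
  unfold vdmProd
  rw [Fin.prod_univ_castSucc]
  have hlast : Finset.Ioi (Fin.last M) = (∅ : Finset (Fin (M + 1))) := by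
    ext j
    simp only [Finset.mem_Ioi, Finset.notMem_empty, iff_false, not_lt]
    exact Fin.le_last j
  rw [hlast, Finset.prod_empty, mul_one]
  have hstep : ∀ i : Fin M,
      (∏ j ∈ Finset.Ioi (Fin.castSucc i), (v (Fin.castSucc i) - v j))
      = (v (Fin.castSucc i) - v (Fin.last M))
        * ∏ j ∈ Finset.Ioi i, (v (Fin.castSucc i) - v (Fin.castSucc j)) := by
    intro i
    have hins : Finset.Ioi (Fin.castSucc i)
        = insert (Fin.last M) ((Finset.Ioi i).map Fin.castSuccEmb) := by
      ext j
      simp only [Finset.mem_Ioi, Finset.mem_insert, Finset.mem_map]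
      constructor
      · intro hj
        rw [Fin.lt_def] at hj
        simp only [Fin.coe_castSucc] at hj
        by_cases hjM : (j : ℕ) = M
        · left
          exact Fin.ext (by simpa [Fin.val_last] using hjM)
        · right
          refine ⟨⟨(j : ℕ), by have := j.isLt; omega⟩, ?_, ?_⟩
          · rw [Fin.lt_def]
            simpa using hj
          · exact Fin.ext (by simp [Fin.castSuccEmb])
      · rintro (rfl | ⟨j', hj', rfl⟩)
        · rw [Fin.lt_def]
          simpa [Fin.val_last] using i.isLt
        · exact Fin.lt_def.2 (Fin.lt_def.1 hj')
    have hnotmem : Fin.last M ∉ (Finset.Ioi i).map Fin.castSuccEmb := by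
      simp only [Finset.mem_map, not_exists]
      rintro j' ⟨hj', hj2⟩
      have := congrArg Fin.val hj2
      simp [Fin.castSuccEmb, Fin.val_last] at this
      omega
    rw [hins, Finset.prod_insert hnotmem, Finset.prod_map]
    rfl
  rw [Finset.prod_congr rfl fun i _ => hstep i, Finset.prod_mul_distrib]

open Finset in
lemma prod_root_c (d : ℕ) (hd : d ≠ 0) (a b : ℂ) :
    ∏ t ∈ Finset.range d, (a - qRoot d ^ t * b) = a ^ d - b ^ d := by
  have hprim : IsPrimitiveRoot (qRoot d) d := Complex.isPrimitiveRoot_exp d hd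
  have himg : Finset.image (fun t => qRoot d ^ t) (Finset.range d)
      = Polynomial.nthRootsFinset d (1 : ℂ) := by
    apply Finset.eq_of_subset_of_card_le
    · intro x hx
      simp only [Finset.mem_image, Finset.mem_range] at hx
      obtain ⟨t, _, rfl⟩ := hx
      rw [Polynomial.mem_nthRootsFinset (by omega) (1 : ℂ)]
      rw [← pow_mul, mul_comm, pow_mul, hprim.pow_eq_one, one_pow]
    · rw [hprim.card_nthRootsFinset, Finset.card_image_of_injOn hprim.injOn_pow,
        Finset.card_range]
  calc ∏ t ∈ Finset.range d, (a - qRoot d ^ t * b)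
      = ∏ ζ ∈ Polynomial.nthRootsFinset d (1 : ℂ), (a - ζ * b) := by
        rw [← himg, Finset.prod_image]
        intro x hx y hy hxy
        exact hprim.injOn_pow (by simpa using hx) (by simpa using hy) hxy
    _ = a ^ d - b ^ d :=
        (IsPrimitiveRoot.pow_sub_pow_eq_prod_sub_mul a b (by omega) hprim).symm

open MvPolynomial in
lemma rootfact {m : ℕ} (l : ℕ) (i : Fin m) :
    ((X (Sum.inl i) : MvPolynomial (Fin m ⊕ Unit) ℂ) - X (Sum.inr ()))
      * ∏ t ∈ Finset.Icc 1 (l + 1),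
        ((X (Sum.inl i) : MvPolynomial (Fin m ⊕ Unit) ℂ) - C (qRoot (l + 2) ^ t) * X (Sum.inr ()))
    = X (Sum.inl i) ^ (l + 2) - X (Sum.inr ()) ^ (l + 2) := by
  apply MvPolynomial.funext
  intro x
  simp only [map_mul, map_sub, map_prod, map_pow, eval_X, eval_C]
  have h0 := prod_root_c (l + 2) (by omega) (x (Sum.inl i)) (x (Sum.inr ()))
  have hins : Finset.range (l + 2) = insert 0 (Finset.Icc 1 (l + 1)) := by
    ext t
    simp only [Finset.mem_range, Finset.mem_insert, Finset.mem_Icc]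
    omega
  rw [hins, Finset.prod_insert (by simp)] at h0
  simpa using h0

open Matrix in
lemma lemA {R : Type*} [CommRing R] (p l l' : ℕ) (u w : R) (hu : u ^ (l + 2) = 1)
    (z : Fin (2 * p + 2) → R) (v : Fin (2 * (p + 2)) → R)
    (hv : ∀ i : Fin (2 * (p + 2)), v i =
      if h : (i : ℕ) < 2 * p + 2 then z ⟨(i : ℕ), h⟩
      else if (i : ℕ) = 2 * p + 2 then w else u * w) :
    shiftedVdm (twoStaircase (p + 2) l l') v
    = (1 - u ^ (l' + 1)) * w ^ (l' + 1) * (∏ i, (z i ^ (l + 2) - w ^ (l + 2)))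
      * shiftedVdm (twoStaircase (p + 1) l l') z := by
  classical
  set M : Matrix (Fin (2 * p + 4)) (Fin (2 * p + 4)) R :=
    Matrix.of (fun i j => v i ^ EE (p + 2) l l' (j : ℕ)) with hM
  have hMdet : shiftedVdm (twoStaircase (p + 2) l l') v = M.det := by
    have h0 : shiftedVdm (twoStaircase (p + 2) l l') v
        = Matrix.det (Matrix.of fun i j : Fin (2 * p + 4) =>
            v i ^ (twoStaircase (p + 2) l l' j + (2 * (p + 2) - 1 - (j : ℕ)))) := rfl
    rw [h0, hM]
    congr 1
    ext i j
    simp only [Matrix.of_apply]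
    rw [EE_spec (p + 2) l l' j]
  -- column operation matrix
  set T : Matrix (Fin (2 * p + 4)) (Fin (2 * p + 4)) R :=
    Matrix.of (fun c j => if c = j then 1 else
      if (c : ℕ) = (j : ℕ) + 2 then -(w ^ (l + 2)) else 0) with hT
  have hTdet : T.det = 1 := by
    have htri : T.BlockTriangular OrderDual.toDual := by
      intro i j hij
      have hij' : i < j := hij
      simp only [hT, Matrix.of_apply]
      rw [if_neg (ne_of_lt hij'), if_neg (by have := Fin.lt_def.1 hij'; omega)]
    rw [Matrix.det_of_lowerTriangular T htri]
    have : ∀ i : Fin (2 * p + 4), T i i = 1 := by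
      intro i; simp [hT]
    simp [this]
  set T₂ : Matrix (Fin (2 * p + 4)) (Fin (2 * p + 4)) R :=
    Matrix.of (fun c j => if (c : ℕ) = (j : ℕ) + 2 then -(w ^ (l + 2)) else 0) with hT2
  have hTsum : T = 1 + T₂ := by
    ext c j
    simp only [hT, hT2, Matrix.add_apply, Matrix.one_apply, Matrix.of_apply]
    rcases eq_or_ne c j with rfl | hne
    · rw [if_pos rfl, if_pos rfl, if_neg (by omega), add_zero]
    · rw [if_neg hne, if_neg hne, zero_add]
  have hMT2 : ∀ i j : Fin (2 * p + 4), (M * T₂) i j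
      = if (j : ℕ) < 2 * p + 2 then -(w ^ (l + 2)) * v i ^ EE (p + 1) l l' (j : ℕ) else 0 := by
    intro i j
    rw [Matrix.mul_apply]
    by_cases hj : (j : ℕ) < 2 * p + 2
    · rw [if_pos hj]
      have hsum : ∀ c : Fin (2 * p + 4), M i c * T₂ c j
          = if c = (⟨(j : ℕ) + 2, by omega⟩ : Fin (2 * p + 4))
            then M i c * -(w ^ (l + 2)) else 0 := by
        intro c
        simp only [hT2, Matrix.of_apply]
        by_cases hc : (c : ℕ) = (j : ℕ) + 2
        · rw [if_pos hc, if_pos (Fin.ext hc)]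
        · rw [if_neg hc, if_neg (fun h => hc (by rw [h])), mul_zero]
      rw [Finset.sum_congr rfl fun c _ => hsum c, Finset.sum_ite_eq',
        if_pos (Finset.mem_univ _)]
      simp only [hM, Matrix.of_apply]
      have hE : EE (p + 2) l l' ((⟨(j : ℕ) + 2, by omega⟩ : Fin (2 * p + 4)) : ℕ)
          = EE (p + 1) l l' (j : ℕ) := EE_two p l l' (j : ℕ)
      rw [hE]; ring
    · rw [if_neg hj]
      apply Finset.sum_eq_zero
      intro c _
      simp only [hT2, Matrix.of_apply]
      rw [if_neg (by have := c.isLt; omega), mul_zero]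
  set M₂ : Matrix (Fin (2 * p + 4)) (Fin (2 * p + 4)) R :=
    Matrix.of (fun i j =>
      if (j : ℕ) < 2 * p + 2
      then v i ^ EE (p + 2) l l' (j : ℕ) - w ^ (l + 2) * v i ^ EE (p + 1) l l' (j : ℕ)
      else v i ^ EE (p + 2) l l' (j : ℕ)) with hM2
  have hMT : M * T = M₂ := by
    rw [hTsum, Matrix.mul_add, Matrix.mul_one]
    ext i j
    rw [Matrix.add_apply, hMT2 i j]
    simp only [hM, hM2, Matrix.of_apply]
    by_cases hj : (j : ℕ) < 2 * p + 2
    · rw [if_pos hj, if_pos hj]; ring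
    · rw [if_neg hj, if_neg hj]; ring
  have hdet12 : M.det = M₂.det := by
    rw [← hMT, Matrix.det_mul, hTdet, mul_one]
  -- value facts
  have hcl : ∀ b : Fin (2 * p + 2),
      ((finSumFinEquiv (m := 2 * p + 2) (n := 2) (Sum.inl b) : ℕ) : ℕ) = (b : ℕ) := fun _ => rfl
  have hcrb : ∀ b : Fin 2,
      ((finSumFinEquiv (m := 2 * p + 2) (n := 2) (Sum.inr b) : ℕ) : ℕ) = 2 * p + 2 + (b : ℕ) :=
    fun _ => rfl
  have hva : ∀ a : Fin (2 * p + 2),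
      v (finSumFinEquiv (m := 2 * p + 2) (n := 2) (Sum.inl a)) = z a := by
    intro a
    rw [hv]
    exact dif_pos a.isLt
  have hvr : ∀ a : Fin 2, v (finSumFinEquiv (m := 2 * p + 2) (n := 2) (Sum.inr a))
      = if (a : ℕ) = 0 then w else u * w := by
    intro a
    rcases (by omega : (a : ℕ) = 0 ∨ (a : ℕ) = 1) with ha | ha
    · rw [if_pos ha, hv, dif_neg (by rw [hcrb]; omega), if_pos (by rw [hcrb, ha])]
    · rw [if_neg (by omega), hv, dif_neg (by rw [hcrb]; omega), if_neg (by rw [hcrb, ha]; omega)]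
  -- blocks
  set A : Matrix (Fin (2 * p + 2)) (Fin (2 * p + 2)) R :=
    Matrix.of (fun i j => (z i ^ (l + 2) - w ^ (l + 2)) * z i ^ EE (p + 1) l l' (j : ℕ)) with hA
  set B : Matrix (Fin (2 * p + 2)) (Fin 2) R :=
    Matrix.of (fun i j => if (j : ℕ) = 0 then z i ^ (l' + 1) else 1) with hB
  set D : Matrix (Fin 2) (Fin 2) R :=
    Matrix.of (fun i j =>
      if (i : ℕ) = 0 then (if (j : ℕ) = 0 then w ^ (l' + 1) else 1)
      else (if (j : ℕ) = 0 then u ^ (l' + 1) * w ^ (l' + 1) else 1)) with hD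
  have hblocks : M₂.submatrix (finSumFinEquiv (m := 2 * p + 2) (n := 2)) (finSumFinEquiv (m := 2 * p + 2) (n := 2)) = Matrix.fromBlocks A B 0 D := by
    ext i j
    rcases i with a | a <;> rcases j with b | b
    · -- inl inl
      simp only [Matrix.submatrix_apply, Matrix.fromBlocks_apply₁₁, hM2, hA, Matrix.of_apply]
      rw [hcl b, if_pos b.isLt, hva a, EE_shift p l l' (b : ℕ) b.isLt, pow_add]
      ring
    · -- inl inr
      simp only [Matrix.submatrix_apply, Matrix.fromBlocks_apply₁₂, hM2, hB, Matrix.of_apply]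
      rw [hcrb b, if_neg (by omega), hva a]
      rcases (by omega : (b : ℕ) = 0 ∨ (b : ℕ) = 1) with hb | hb
      · rw [hb, Nat.add_zero, EE_top0, if_pos rfl]
      · rw [hb, show 2 * p + 2 + 1 = 2 * p + 3 from rfl, EE_top1, pow_zero, if_neg (by omega)]
    · -- inr inl
      simp only [Matrix.submatrix_apply, Matrix.fromBlocks_apply₂₁, hM2, Matrix.of_apply,
        Matrix.zero_apply]
      rw [hcl b, if_pos b.isLt, hvr a]
      rcases (by omega : (a : ℕ) = 0 ∨ (a : ℕ) = 1) with ha | ha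
      · rw [if_pos ha, EE_shift p l l' (b : ℕ) b.isLt, pow_add]
        ring
      · rw [if_neg (by omega), EE_shift p l l' (b : ℕ) b.isLt, mul_pow, mul_pow,
          pow_add u (EE (p + 1) l l' (b : ℕ)) (l + 2),
          pow_add w (EE (p + 1) l l' (b : ℕ)) (l + 2), hu]
        ring
    · -- inr inr
      simp only [Matrix.submatrix_apply, Matrix.fromBlocks_apply₂₂, hM2, hD, Matrix.of_apply]
      rw [hcrb b, if_neg (by omega), hvr a]
      rcases (by omega : (a : ℕ) = 0 ∨ (a : ℕ) = 1) with ha | ha <;>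
        rcases (by omega : (b : ℕ) = 0 ∨ (b : ℕ) = 1) with hb | hb
      · rw [if_pos ha, if_pos ha, if_pos hb, hb, Nat.add_zero, EE_top0]
      · rw [if_pos ha, if_pos ha, if_neg (by omega), hb,
          show 2 * p + 2 + 1 = 2 * p + 3 from rfl, EE_top1, pow_zero]
      · rw [if_neg (by omega), if_neg (by omega), if_pos hb, hb, Nat.add_zero, EE_top0, mul_pow]
      · rw [if_neg (by omega), if_neg (by omega), if_neg (by omega), hb,
          show 2 * p + 2 + 1 = 2 * p + 3 from rfl, EE_top1, pow_zero]
  have hsubdet : M₂.det = A.det * D.det := by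
    rw [← Matrix.det_submatrix_equiv_self (finSumFinEquiv (m := 2 * p + 2) (n := 2)) M₂, hblocks,
      Matrix.det_fromBlocks_zero₂₁]
  have hDdet : D.det = (1 - u ^ (l' + 1)) * w ^ (l' + 1) := by
    rw [Matrix.det_fin_two]
    have h00 : D 0 0 = w ^ (l' + 1) := by simp [hD]
    have h01 : D 0 1 = 1 := by simp [hD]
    have h10 : D 1 0 = u ^ (l' + 1) * w ^ (l' + 1) := by simp [hD]
    have h11 : D 1 1 = 1 := by simp [hD]
    rw [h00, h01, h10, h11]
    ring
  have hAdet : A.det = (∏ i, (z i ^ (l + 2) - w ^ (l + 2)))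
      * Matrix.det (Matrix.of fun i j : Fin (2 * p + 2) => z i ^ EE (p + 1) l l' (j : ℕ)) := by
    rw [hA]
    exact Matrix.det_mul_column _ _
  have hsmall : Matrix.det (Matrix.of fun i j : Fin (2 * p + 2) => z i ^ EE (p + 1) l l' (j : ℕ))
      = shiftedVdm (twoStaircase (p + 1) l l') z := by
    have h0 : shiftedVdm (twoStaircase (p + 1) l l') z
        = Matrix.det (Matrix.of fun i j : Fin (2 * p + 2) =>
            z i ^ (twoStaircase (p + 1) l l' j + (2 * (p + 1) - 1 - (j : ℕ)))) := rfl
    rw [h0]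
    congr 1
    ext i j
    simp only [Matrix.of_apply]
    rw [EE_spec (p + 1) l l' j]
  rw [hMdet, hdet12, hsubdet, hDdet, hAdet, hsmall]
  ring

lemma map_shiftedVdm' {A B : Type*} [CommRing A] [CommRing B] {F : Type*} [FunLike F A B]
    [RingHomClass F A B] (f : F) {N : ℕ} (lam : Fin N → ℕ) (v : Fin N → A) :
    f (shiftedVdm lam v) = shiftedVdm lam (fun i => f (v i)) := by
  have := map_shiftedVdm (RingHomClass.toRingHom f) lam v
  simpa using this

lemma map_vdmProd' {A B : Type*} [CommRing A] [CommRing B] {F : Type*} [FunLike F A B]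
    [RingHomClass F A B] (f : F) {N : ℕ} (v : Fin N → A) :
    f (vdmProd v) = vdmProd (fun i => f (v i)) := by
  have := map_vdmProd (RingHomClass.toRingHom f) v
  simpa using this

open MvPolynomial in
lemma Xsub_ne {m : ℕ} (i : Fin m) (a : ℂ) :
    ((X (Sum.inl i) : MvPolynomial (Fin m ⊕ Unit) ℂ) - C a * X (Sum.inr ())) ≠ 0 := by
  intro h
  have h2 := congrArg (eval (Sum.elim (fun _ => (1 : ℂ)) (fun _ => 0))) h
  simp at h2

open MvPolynomial in
lemma XsubX_ne {m : ℕ} (i : Fin m) :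
    ((X (Sum.inl i) : MvPolynomial (Fin m ⊕ Unit) ℂ) - X (Sum.inr ())) ≠ 0 := by
  intro h
  have h2 := congrArg (eval (Sum.elim (fun _ => (1 : ℂ)) (fun _ => 0))) h
  simp at h2

open MvPolynomial in
lemma WsubW_ne {m : ℕ} {a : ℂ} (ha : a ≠ 1) :
    ((X (Sum.inr ()) : MvPolynomial (Fin m ⊕ Unit) ℂ) - C a * X (Sum.inr ())) ≠ 0 := by
  intro h
  have h2 := congrArg (eval (fun _ => (1 : ℂ))) h
  rw [map_sub, map_mul, eval_C, eval_X, map_zero] at h2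
  exact ha (by linear_combination -h2)

open MvPolynomial in
lemma ZvdmZ_ne {m : ℕ} :
    vdmProd (fun i : Fin m => (X (Sum.inl i) : MvPolynomial (Fin m ⊕ Unit) ℂ)) ≠ 0 := by
  intro h
  have h2 := congrArg (eval (Sum.elim (fun i : Fin m => ((i : ℕ) : ℂ)) (fun _ => 0))) h
  rw [map_vdmProd (eval (Sum.elim (fun i : Fin m => ((i : ℕ) : ℂ)) (fun _ => 0))),
    map_zero] at h2
  simp only [eval_X, Sum.elim_inl] at h2
  exact vdmProd_ne_zero (fun a b hab => Fin.ext (Nat.cast_injective hab)) h2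


open MvPolynomial in
/-- Recursion relation for 2-staircase Schur polynomials:  with `q = exp(2πi/(ℓ+2))` and
`1 ≤ k ≤ ℓ+1`, in `ℂ[z_1,…,z_{2n-2},w]` one has
`s_{λ_{n,ℓ,ℓ'}}(z, w, q^k w) = w^{ℓ'} U_{ℓ'}(1,q^k) ∏_m ∏_{t ≠ k} (z_m - q^t w) ·
s_{λ_{n-1,ℓ,ℓ'}}(z)`, where `U_{ℓ'}(1,q^k) = ∑_{t=0}^{ℓ'} q^{kt}`.
`S` and `S'` are the Schur polynomials of `λ_{n,ℓ,ℓ'}` and `λ_{n-1,ℓ,ℓ'}`,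
characterized by `Δ_λ = S * Δ`. -/
theorem twoStaircase_recursion (n ℓ ℓ' : ℕ) (hn : 2 ≤ n) (hl : ℓ' ≤ ℓ)
    (k : ℕ) (hk1 : 1 ≤ k) (hk2 : k ≤ ℓ + 1)
    (S : MvPolynomial (Fin (2 * n)) ℂ)
    (hS : shiftedVdm (twoStaircase n ℓ ℓ') (fun i => X i)
        = S * vdmProd (fun i => X i))
    (S' : MvPolynomial (Fin (2 * (n - 1))) ℂ)
    (hS' : shiftedVdm (twoStaircase (n - 1) ℓ ℓ') (fun i => X i)
        = S' * vdmProd (fun i => X i)) :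
    aeval (fun v : Fin (2 * n) =>
      if hv : (v : ℕ) < 2 * n - 2 then
        (X (Sum.inl ⟨(v : ℕ), hv⟩) : MvPolynomial (Fin (2 * n - 2) ⊕ Unit) ℂ)
      else if (v : ℕ) = 2 * n - 2 then X (Sum.inr ())
      else C (qRoot (ℓ + 2) ^ k) * X (Sum.inr ())) S
    =
    X (Sum.inr ()) ^ ℓ' *
      C (∑ t ∈ Finset.range (ℓ' + 1), qRoot (ℓ + 2) ^ (k * t)) *
      (∏ m : Fin (2 * n - 2), ∏ t ∈ (Finset.Icc 1 (ℓ + 1)).erase k,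
        (X (Sum.inl m) - C (qRoot (ℓ + 2) ^ t) * X (Sum.inr ()))) *
      aeval (fun j : Fin (2 * (n - 1)) =>
        (X (Sum.inl (⟨(j : ℕ), by have := j.isLt; omega⟩ : Fin (2 * n - 2)))
          : MvPolynomial (Fin (2 * n - 2) ⊕ Unit) ℂ)) S' := by
  obtain ⟨p, rfl⟩ : ∃ p, n = p + 2 := ⟨n - 2, by omega⟩
  show aeval (fun i : Fin (2 * (p + 2)) =>
      if h : (i : ℕ) < 2 * p + 2 then
        (X (Sum.inl (⟨(i : ℕ), h⟩ : Fin (2 * p + 2))) : MvPolynomial (Fin (2 * p + 2) ⊕ Unit) ℂ)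
      else if (i : ℕ) = 2 * p + 2 then X (Sum.inr ())
      else C (qRoot (ℓ + 2) ^ k) * X (Sum.inr ())) S
    =
    (X (Sum.inr ()) : MvPolynomial (Fin (2 * p + 2) ⊕ Unit) ℂ) ^ ℓ' *
      (C (∑ t ∈ Finset.range (ℓ' + 1), qRoot (ℓ + 2) ^ (k * t))
        : MvPolynomial (Fin (2 * p + 2) ⊕ Unit) ℂ) *
      (∏ m : Fin (2 * p + 2), ∏ t ∈ (Finset.Icc 1 (ℓ + 1)).erase k,
        ((X (Sum.inl m) : MvPolynomial (Fin (2 * p + 2) ⊕ Unit) ℂ)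
          - (C (qRoot (ℓ + 2) ^ t) : MvPolynomial (Fin (2 * p + 2) ⊕ Unit) ℂ)
            * (X (Sum.inr ()) : MvPolynomial (Fin (2 * p + 2) ⊕ Unit) ℂ))) *
      aeval (fun j : Fin (2 * (p + 1)) =>
        (X (Sum.inl (⟨(j : ℕ), j.isLt⟩ : Fin (2 * p + 2)))
          : MvPolynomial (Fin (2 * p + 2) ⊕ Unit) ℂ)) S'
  have hqprim : IsPrimitiveRoot (qRoot (ℓ + 2)) (ℓ + 2) :=
    Complex.isPrimitiveRoot_exp _ (by omega)
  have hq1 : qRoot (ℓ + 2) ^ (ℓ + 2) = 1 := hqprim.pow_eq_one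
  have hune : qRoot (ℓ + 2) ^ k ≠ 1 := hqprim.pow_ne_one_of_pos_of_lt (by omega) (by omega)
  set vf : Fin (2 * (p + 2)) → MvPolynomial (Fin (2 * p + 2) ⊕ Unit) ℂ := fun i =>
      if h : (i : ℕ) < 2 * p + 2 then
        (X (Sum.inl (⟨(i : ℕ), h⟩ : Fin (2 * p + 2))) : MvPolynomial (Fin (2 * p + 2) ⊕ Unit) ℂ)
      else if (i : ℕ) = 2 * p + 2 then X (Sum.inr ())
      else C (qRoot (ℓ + 2) ^ k) * X (Sum.inr ()) with hvf
  set gf : Fin (2 * (p + 1)) → MvPolynomial (Fin (2 * p + 2) ⊕ Unit) ℂ := fun j =>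
      (X (Sum.inl (⟨(j : ℕ), j.isLt⟩ : Fin (2 * p + 2)))
        : MvPolynomial (Fin (2 * p + 2) ⊕ Unit) ℂ) with hgf
  -- big Schur relation, specialized
  have e1 : aeval (R := ℂ) vf (shiftedVdm (twoStaircase (p + 2) ℓ ℓ') (fun i => X i))
      = shiftedVdm (twoStaircase (p + 2) ℓ ℓ') vf := by
    rw [map_shiftedVdm' (aeval (R := ℂ) vf)]
    congr 1
    funext i
    simp
  have e2 : aeval (R := ℂ) vf (vdmProd (fun i => X i)) = vdmProd vf := by
    rw [map_vdmProd' (aeval (R := ℂ) vf)]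
    congr 1
    funext i
    simp
  have hbig : shiftedVdm (twoStaircase (p + 2) ℓ ℓ') vf = aeval vf S * vdmProd vf := by
    have h0 := congrArg (aeval vf) hS
    rw [map_mul, e1, e2] at h0
    exact h0
  -- small Schur relation, specialized
  have hS'2 : shiftedVdm (twoStaircase (p + 1) ℓ ℓ')
        (fun i => (X i : MvPolynomial (Fin (2 * (p + 1))) ℂ))
      = @HMul.hMul (MvPolynomial (Fin (2 * (p + 1))) ℂ) _ _ instHMul S'
        (vdmProd (fun i => (X i : MvPolynomial (Fin (2 * (p + 1))) ℂ))) := hS'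
  have e3 : aeval gf (shiftedVdm (twoStaircase (p + 1) ℓ ℓ')
        (fun i => (X i : MvPolynomial (Fin (2 * (p + 1))) ℂ)))
      = shiftedVdm (twoStaircase (p + 1) ℓ ℓ') gf := by
    rw [map_shiftedVdm' (aeval (R := ℂ) gf)]
    congr 1
    funext i
    simp
  have e4 : aeval gf (vdmProd (fun i => (X i : MvPolynomial (Fin (2 * (p + 1))) ℂ)))
      = vdmProd gf := by
    rw [map_vdmProd' (aeval (R := ℂ) gf)]
    congr 1
    funext i
    simp
  have hsml : shiftedVdm (twoStaircase (p + 1) ℓ ℓ') gf = aeval gf S' * vdmProd gf := by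
    have h0 := congrArg (aeval gf) hS'2
    rw [map_mul, e3, e4] at h0
    exact h0
  have hsml' : shiftedVdm (twoStaircase (p + 1) ℓ ℓ')
        (fun i : Fin (2 * p + 2) => (X (Sum.inl i) : MvPolynomial (Fin (2 * p + 2) ⊕ Unit) ℂ))
      = aeval gf S' * vdmProd
        (fun i : Fin (2 * p + 2) => (X (Sum.inl i) : MvPolynomial (Fin (2 * p + 2) ⊕ Unit) ℂ)) :=
    hsml
  -- determinant identity
  have hCu : (C (qRoot (ℓ + 2) ^ k) : MvPolynomial (Fin (2 * p + 2) ⊕ Unit) ℂ) ^ (ℓ + 2)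
      = 1 := by
    rw [← map_pow, ← pow_mul, mul_comm k (ℓ + 2), pow_mul, hq1, one_pow, map_one]
  have hLA := lemA p ℓ ℓ' (C (qRoot (ℓ + 2) ^ k)) (X (Sum.inr ())) hCu
    (fun i : Fin (2 * p + 2) => (X (Sum.inl i) : MvPolynomial (Fin (2 * p + 2) ⊕ Unit) ℂ))
    vf (fun i => by rw [hvf])
  -- splitting of the Vandermonde product
  have c1 : ∀ i : Fin (2 * p + 2), vf (Fin.castSucc (Fin.castSucc i)) = X (Sum.inl i) := by
    intro i
    rw [hvf]
    exact dif_pos i.isLt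
  have c2 : vf (Fin.castSucc (Fin.last (2 * p + 2))) = X (Sum.inr ()) := by
    rw [hvf]
    exact (dif_neg (by simp only [Fin.coe_castSucc, Fin.val_last]; omega)).trans (if_pos rfl)
  have c3 : vf (Fin.last (2 * p + 3)) = C (qRoot (ℓ + 2) ^ k) * X (Sum.inr ()) := by
    rw [hvf]
    exact (dif_neg (by simp only [Fin.val_last]; omega)).trans
      (if_neg (by simp only [Fin.val_last]; omega))
  have hsplit : vdmProd vf
      = ((∏ i : Fin (2 * p + 2), (X (Sum.inl i) - C (qRoot (ℓ + 2) ^ k) * X (Sum.inr ())))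
          * (X (Sum.inr ()) - C (qRoot (ℓ + 2) ^ k) * X (Sum.inr ())))
        * ((∏ i : Fin (2 * p + 2), (X (Sum.inl i) - X (Sum.inr ())))
          * vdmProd (fun i : Fin (2 * p + 2) =>
              (X (Sum.inl i) : MvPolynomial (Fin (2 * p + 2) ⊕ Unit) ℂ))) := by
    rw [vdmProd_snoc (M := 2 * p + 3) vf]
    rw [vdmProd_snoc (M := 2 * p + 2) (fun i => vf (Fin.castSucc i))]
    rw [Fin.prod_univ_castSucc
      (f := fun i : Fin (2 * p + 3) => vf (Fin.castSucc i) - vf (Fin.last (2 * p + 3)))]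
    rw [c2, c3]
    have r1 : (∏ i : Fin (2 * p + 2),
        (vf (Fin.castSucc (Fin.castSucc i)) - C (qRoot (ℓ + 2) ^ k) * X (Sum.inr ())))
        = ∏ i : Fin (2 * p + 2),
          (X (Sum.inl i) - C (qRoot (ℓ + 2) ^ k) * X (Sum.inr ())) :=
      Finset.prod_congr rfl fun i _ => by rw [c1 i]
    have r2 : (∏ i : Fin (2 * p + 2),
        (vf (Fin.castSucc (Fin.castSucc i)) - X (Sum.inr ())))
        = ∏ i : Fin (2 * p + 2), (X (Sum.inl i) - X (Sum.inr ())) :=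
      Finset.prod_congr rfl fun i _ => by rw [c1 i]
    have r3 : vdmProd (fun i : Fin (2 * p + 2) => vf (Fin.castSucc (Fin.castSucc i)))
        = vdmProd (fun i : Fin (2 * p + 2) =>
            (X (Sum.inl i) : MvPolynomial (Fin (2 * p + 2) ⊕ Unit) ℂ)) := by
      congr 1
      funext i
      rw [c1 i]
    rw [r1, r2, r3]
  have hvfne : vdmProd vf ≠ 0 := by
    rw [hsplit]
    refine mul_ne_zero (mul_ne_zero ?_ (WsubW_ne hune)) (mul_ne_zero ?_ ZvdmZ_ne)
    · rw [Finset.prod_ne_zero_iff]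
      exact fun i _ => Xsub_ne i _
    · rw [Finset.prod_ne_zero_iff]
      exact fun i _ => XsubX_ne i
  -- key per-variable factorisation
  have hkey : ∀ i : Fin (2 * p + 2),
      (X (Sum.inl i) : MvPolynomial (Fin (2 * p + 2) ⊕ Unit) ℂ) ^ (ℓ + 2)
        - X (Sum.inr ()) ^ (ℓ + 2)
      = (X (Sum.inl i) - X (Sum.inr ())) *
        ((X (Sum.inl i) - C (qRoot (ℓ + 2) ^ k) * X (Sum.inr ())) *
          ∏ t ∈ (Finset.Icc 1 (ℓ + 1)).erase k,
            (X (Sum.inl i) - C (qRoot (ℓ + 2) ^ t) * X (Sum.inr ()))) := by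
    intro i
    have h0 := rootfact (m := 2 * p + 2) ℓ i
    rw [← Finset.mul_prod_erase (Finset.Icc 1 (ℓ + 1))
      (fun t => (X (Sum.inl i) : MvPolynomial (Fin (2 * p + 2) ⊕ Unit) ℂ)
        - C (qRoot (ℓ + 2) ^ t) * X (Sum.inr ()))
      (Finset.mem_Icc.2 ⟨hk1, hk2⟩)] at h0
    exact h0.symm
  have hprod : (∏ i : Fin (2 * p + 2),
        ((X (Sum.inl i) : MvPolynomial (Fin (2 * p + 2) ⊕ Unit) ℂ) ^ (ℓ + 2)
          - X (Sum.inr ()) ^ (ℓ + 2)))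
      = (∏ i : Fin (2 * p + 2), (X (Sum.inl i) - X (Sum.inr ()))) *
        ((∏ i : Fin (2 * p + 2),
          (X (Sum.inl i) - C (qRoot (ℓ + 2) ^ k) * X (Sum.inr ()))) *
         (∏ i : Fin (2 * p + 2), ∏ t ∈ (Finset.Icc 1 (ℓ + 1)).erase k,
            (X (Sum.inl i) - C (qRoot (ℓ + 2) ^ t) * X (Sum.inr ())))) := by
    rw [← Finset.prod_mul_distrib, ← Finset.prod_mul_distrib]
    exact Finset.prod_congr rfl fun i _ => hkey i
  -- geometric sum identity
  have hgeomC : (1 : ℂ) - (qRoot (ℓ + 2) ^ k) ^ (ℓ' + 1)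
      = (∑ t ∈ Finset.range (ℓ' + 1), qRoot (ℓ + 2) ^ (k * t)) * (1 - qRoot (ℓ + 2) ^ k) := by
    have hg := geom_sum_mul (qRoot (ℓ + 2) ^ k) (ℓ' + 1)
    have hr : (∑ t ∈ Finset.range (ℓ' + 1), qRoot (ℓ + 2) ^ (k * t))
        = ∑ t ∈ Finset.range (ℓ' + 1), (qRoot (ℓ + 2) ^ k) ^ t :=
      Finset.sum_congr rfl fun t _ => pow_mul _ k t
    rw [hr]
    linear_combination hg
  have hgeom : (1 : MvPolynomial (Fin (2 * p + 2) ⊕ Unit) ℂ)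
        - (C (qRoot (ℓ + 2) ^ k)) ^ (ℓ' + 1)
      = C (∑ t ∈ Finset.range (ℓ' + 1), qRoot (ℓ + 2) ^ (k * t))
        * (1 - C (qRoot (ℓ + 2) ^ k)) := by
    have h0 := congrArg (C : ℂ →+* MvPolynomial (Fin (2 * p + 2) ⊕ Unit) ℂ) hgeomC
    simpa [map_sub, map_mul, map_pow, map_one] using h0
  -- final cancellation
  refine mul_right_cancel₀ (b := vdmProd vf * vdmProd (fun i : Fin (2 * p + 2) =>
    (X (Sum.inl i) : MvPolynomial (Fin (2 * p + 2) ⊕ Unit) ℂ)))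
    (mul_ne_zero hvfne ZvdmZ_ne) ?_
  have final : aeval vf S * (vdmProd vf * vdmProd (fun i : Fin (2 * p + 2) =>
        (X (Sum.inl i) : MvPolynomial (Fin (2 * p + 2) ⊕ Unit) ℂ)))
      = ((X (Sum.inr ()) : MvPolynomial (Fin (2 * p + 2) ⊕ Unit) ℂ) ^ ℓ' *
          (C (∑ t ∈ Finset.range (ℓ' + 1), qRoot (ℓ + 2) ^ (k * t))
            : MvPolynomial (Fin (2 * p + 2) ⊕ Unit) ℂ) *
          (∏ m : Fin (2 * p + 2), ∏ t ∈ (Finset.Icc 1 (ℓ + 1)).erase k,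
            ((X (Sum.inl m) : MvPolynomial (Fin (2 * p + 2) ⊕ Unit) ℂ)
              - (C (qRoot (ℓ + 2) ^ t) : MvPolynomial (Fin (2 * p + 2) ⊕ Unit) ℂ)
                * (X (Sum.inr ()) : MvPolynomial (Fin (2 * p + 2) ⊕ Unit) ℂ))) *
          aeval gf S') *
        (vdmProd vf * vdmProd (fun i : Fin (2 * p + 2) =>
          (X (Sum.inl i) : MvPolynomial (Fin (2 * p + 2) ⊕ Unit) ℂ))) := by
    rw [← mul_assoc, ← hbig, hLA, hsml', hsplit, hprod, hgeom]
    ring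
  exact final
end

section
/- Let n ≥ 2 and 0 ≤ ℓ' ≤ ℓ be integers with gcd(ℓ'+1, ℓ+2) = 1. Then the 2-staircase Schur polynomial s_{λ_{n,ℓ,ℓ'}} ∈ ℂ[z_1,…,z_{2n}] has no linear binomial factors: for every pair of distinct indices 1 ≤ i, j ≤ 2n and every complex number η, the polynomial z_i − η z_j does not divide s_{λ_{n,ℓ,ℓ'}}(z_1,…,z_{2n}) in ℂ[z_1,…,z_{2n}]. -/
open MvPolynomial Finset

private lemma prod_X_pow_monomial {N : ℕ} (s : Finset (Fin N)) (g : Fin N → ℕ) :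
    (∏ k ∈ s, (X k : MvPolynomial (Fin N) ℂ) ^ g k)
      = monomial (∑ k ∈ s, Finsupp.single k (g k)) 1 := by
  induction s using Finset.induction with
  | empty => simp
  | @insert a s h ih =>
      rw [Finset.prod_insert h, Finset.sum_insert h, ih, X_pow_eq_monomial, monomial_mul,
        one_mul]

private lemma sum_single_apply {N : ℕ} (s : Finset (Fin N)) (g : Fin N → ℕ) (k₀ : Fin N) :
    (∑ k ∈ s, Finsupp.single k (g k)) k₀ = if k₀ ∈ s then g k₀ else 0 := by
  rw [Finsupp.finset_sum_apply]
  simp only [Finsupp.single_apply]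
  exact Finset.sum_ite_eq' s k₀ g

private lemma exists_perm {N : ℕ} {i j a b : Fin N} (hij : i ≠ j) (hab : a ≠ b) :
    ∃ σ : Equiv.Perm (Fin N), σ i = a ∧ σ j = b := by
  refine ⟨(Equiv.swap (Equiv.swap i a j) b) * (Equiv.swap i a), ?_, ?_⟩
  · have h1 : Equiv.swap i a j ≠ a := by
      intro h
      apply hij
      have := congrArg (Equiv.swap i a) h
      rw [Equiv.swap_apply_self, Equiv.swap_apply_right] at this
      exact this.symm
    simp only [Equiv.Perm.mul_apply, Equiv.swap_apply_left]
    exact Equiv.swap_apply_of_ne_of_ne (Ne.symm h1) hab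
  · simp only [Equiv.Perm.mul_apply, Equiv.swap_apply_left]

private lemma classify {N : ℕ} {e : Fin N → ℕ} (he : Function.Injective e)
    {i j : Fin N} (hij : i ≠ j) (σ₀ σ : Equiv.Perm (Fin N))
    (hrest : ∀ k, k ≠ i → k ≠ j → e (σ k) = e (σ₀ k))
    (hsum : e (σ i) + e (σ j) = e (σ₀ i) + e (σ₀ j)) :
    σ = σ₀ ∨ σ = σ₀ * Equiv.swap i j := by
  have hr : ∀ k, k ≠ i → k ≠ j → σ k = σ₀ k := fun k h1 h2 => he (hrest k h1 h2)
  have hcases : σ i = σ₀ i ∨ σ i = σ₀ j := by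
    by_contra hc
    push_neg at hc
    set k := σ₀⁻¹ (σ i) with hk
    have h0 : σ₀ k = σ i := Equiv.apply_symm_apply σ₀ (σ i)
    have hki : k ≠ i := by intro h; rw [h] at h0; exact hc.1 h0.symm
    have hkj : k ≠ j := by intro h; rw [h] at h0; exact hc.2 h0.symm
    have : σ k = σ i := by rw [hr k hki hkj, h0]
    exact hki (σ.injective this)
  rcases hcases with h | h
  · left
    have hj : σ j = σ₀ j := by
      rw [h] at hsum
      exact he (Nat.add_left_cancel hsum)
    refine Equiv.ext fun k => ?_
    by_cases hki : k = i
    · rw [hki, h]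
    · by_cases hkj : k = j
      · rw [hkj, hj]
      · exact hr k hki hkj
  · right
    have hj : σ j = σ₀ i := by
      rw [h] at hsum
      apply he
      omega
    refine Equiv.ext fun k => ?_
    by_cases hki : k = i
    · rw [hki]
      simp only [Equiv.Perm.mul_apply, Equiv.swap_apply_left]
      rw [h]
    · by_cases hkj : k = j
      · rw [hkj]
        simp only [Equiv.Perm.mul_apply, Equiv.swap_apply_right]
        rw [hj]
      · simp only [Equiv.Perm.mul_apply, Equiv.swap_apply_of_ne_of_ne hki hkj]
        exact hr k hki hkj

private noncomputable def mexp {N : ℕ} (j : Fin N) (A : ℕ) (E : Finset (Fin N)) (g : Fin N → ℕ) :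
    Fin N →₀ ℕ :=
  Finsupp.single j A + ∑ k ∈ E, Finsupp.single k (g k)

private lemma mexp_apply_j {N : ℕ} {j : Fin N} {A : ℕ} {E : Finset (Fin N)} {g : Fin N → ℕ}
    (hjE : j ∉ E) : mexp j A E g j = A := by
  rw [mexp, Finsupp.add_apply, Finsupp.single_eq_same, sum_single_apply, if_neg hjE, add_zero]

private lemma mexp_apply_mem {N : ℕ} {j : Fin N} {A : ℕ} {E : Finset (Fin N)} {g : Fin N → ℕ}
    {k : Fin N} (hk : k ∈ E) (hjk : j ≠ k) : mexp j A E g k = g k := by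
  rw [mexp, Finsupp.add_apply, Finsupp.single_apply, if_neg hjk, sum_single_apply, if_pos hk,
    zero_add]

private lemma mexp_congr {N : ℕ} {j : Fin N} {A A' : ℕ} {E : Finset (Fin N)} {g g' : Fin N → ℕ}
    (hA : A = A') (hg : ∀ k ∈ E, g k = g' k) : mexp j A E g = mexp j A' E g' := by
  rw [mexp, mexp, hA]
  congr 1
  exact Finset.sum_congr rfl fun k hk => by rw [hg k hk]

private lemma prod_phi_pow {N : ℕ} {i j : Fin N} (hij : i ≠ j) (η : ℂ) (d : Fin N → ℕ) :
    (∏ k : Fin N, (if k = i then C η * X j else X k : MvPolynomial (Fin N) ℂ) ^ d k)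
      = C (η ^ d i) *
        monomial (mexp j (d i + d j) ((Finset.univ.erase i).erase j) d) 1 := by
  have hjmem : j ∈ Finset.univ.erase i := Finset.mem_erase.mpr ⟨Ne.symm hij, Finset.mem_univ j⟩
  rw [← Finset.mul_prod_erase Finset.univ _ (Finset.mem_univ i),
    ← Finset.mul_prod_erase _ _ hjmem]
  rw [if_pos rfl, if_neg (Ne.symm hij : j ≠ i)]
  have hrest : (∏ k ∈ (Finset.univ.erase i).erase j,
      (if k = i then C η * X j else X k : MvPolynomial (Fin N) ℂ) ^ d k)
      = ∏ k ∈ (Finset.univ.erase i).erase j, (X k : MvPolynomial (Fin N) ℂ) ^ d k := by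
    refine Finset.prod_congr rfl fun k hk => ?_
    rw [if_neg (Finset.mem_erase.mp (Finset.mem_erase.mp hk).2).1]
  rw [hrest, prod_X_pow_monomial, mexp]
  have h2 : monomial (Finsupp.single j (d i + d j)
      + ∑ k ∈ (Finset.univ.erase i).erase j, Finsupp.single k (d k)) (1:ℂ)
      = X j ^ (d i + d j) *
        monomial (∑ k ∈ (Finset.univ.erase i).erase j, Finsupp.single k (d k)) 1 := by
    rw [X_pow_eq_monomial, monomial_mul, one_mul]
  rw [h2, mul_pow, ← C_pow, pow_add]
  ring

private lemma coe_sign_ne_zero {N : ℕ} (σ : Equiv.Perm (Fin N)) :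
    ((Equiv.Perm.sign σ : ℤ) : ℂ) ≠ 0 := by
  rcases Int.units_eq_one_or (Equiv.Perm.sign σ) with h | h <;> rw [h] <;> norm_num

private lemma key1 {N : ℕ} {e : Fin N → ℕ} (he : Function.Injective e)
    {i j : Fin N} (hij : i ≠ j) {a b : Fin N} (hab : a ≠ b) {η : ℂ}
    (hη : η ^ e a ≠ η ^ e b) :
    (aeval (fun k => if k = i then C η * X j else X k))
      (∑ σ : Equiv.Perm (Fin N),
        ((Equiv.Perm.sign σ : ℤ) • ∏ k, (X k : MvPolynomial (Fin N) ℂ) ^ e (σ k))) ≠ 0 := by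
  obtain ⟨σ₀, h0i, h0j⟩ := exists_perm hij hab
  set E : Finset (Fin N) := (Finset.univ.erase i).erase j with hE
  have hjE : j ∉ E := fun h => (Finset.mem_erase.mp h).1 rfl
  have hmemE : ∀ k : Fin N, k ≠ i → k ≠ j → k ∈ E := fun k h1 h2 =>
    Finset.mem_erase.mpr ⟨h2, Finset.mem_erase.mpr ⟨h1, Finset.mem_univ k⟩⟩
  set φ : Fin N → MvPolynomial (Fin N) ℂ := fun k => if k = i then C η * X j else X k with hφ
  set m : Equiv.Perm (Fin N) → (Fin N →₀ ℕ) :=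
    fun σ => mexp j (e (σ i) + e (σ j)) E (fun k => e (σ k)) with hm
  have hexp : (aeval φ)
      (∑ σ : Equiv.Perm (Fin N),
        ((Equiv.Perm.sign σ : ℤ) • ∏ k, (X k : MvPolynomial (Fin N) ℂ) ^ e (σ k)))
      = ∑ σ : Equiv.Perm (Fin N),
          C (((Equiv.Perm.sign σ : ℤ) : ℂ) * η ^ e (σ i)) * monomial (m σ) 1 := by
    rw [map_sum]
    refine Finset.sum_congr rfl fun σ _ => ?_
    rw [← Int.cast_smul_eq_zsmul ℂ, smul_eq_C_mul, map_mul, aeval_C, MvPolynomial.algebraMap_eq,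
      map_prod]
    simp only [map_pow, aeval_X, hφ]
    rw [prod_phi_pow hij η (fun k => e (σ k)), C_mul, hm]
    ring
  set σ₁ : Equiv.Perm (Fin N) := σ₀ * Equiv.swap i j with hσ₁
  have h1i : σ₁ i = b := by
    rw [hσ₁]; simp only [Equiv.Perm.mul_apply, Equiv.swap_apply_left]; exact h0j
  have h1j : σ₁ j = a := by
    rw [hσ₁]; simp only [Equiv.Perm.mul_apply, Equiv.swap_apply_right]; exact h0i
  have h1k : ∀ k, k ≠ i → k ≠ j → σ₁ k = σ₀ k := fun k hk1 hk2 => by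
    rw [hσ₁]; simp only [Equiv.Perm.mul_apply, Equiv.swap_apply_of_ne_of_ne hk1 hk2]
  have hne01 : σ₀ ≠ σ₁ := by
    intro h
    have : σ₀ i = σ₁ i := by rw [h]
    rw [h0i, h1i] at this
    exact hab this
  have hm1 : m σ₁ = m σ₀ := by
    rw [hm]
    refine mexp_congr ?_ fun k hk => ?_
    · rw [h1i, h1j, h0i, h0j, Nat.add_comm]
    · have hk1 : k ≠ i := (Finset.mem_erase.mp (Finset.mem_erase.mp hk).2).1
      have hk2 : k ≠ j := (Finset.mem_erase.mp hk).1
      rw [h1k k hk1 hk2]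
  intro hzero
  have hco : coeff (m σ₀) ((aeval φ)
      (∑ σ : Equiv.Perm (Fin N),
        ((Equiv.Perm.sign σ : ℤ) • ∏ k, (X k : MvPolynomial (Fin N) ℂ) ^ e (σ k)))) = 0 := by
    rw [hzero, coeff_zero]
  rw [hexp, coeff_sum] at hco
  have hval : ∀ σ : Equiv.Perm (Fin N),
      coeff (m σ₀) (C (((Equiv.Perm.sign σ : ℤ) : ℂ) * η ^ e (σ i)) * monomial (m σ) 1)
        = ((Equiv.Perm.sign σ : ℤ) : ℂ) * η ^ e (σ i) * (if m σ = m σ₀ then 1 else 0) := by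
    intro σ
    rw [coeff_C_mul, coeff_monomial]
  rw [Finset.sum_congr rfl fun σ _ => hval σ] at hco
  have hvanish : ∀ σ ∈ Finset.univ, σ ∉ ({σ₀, σ₁} : Finset (Equiv.Perm (Fin N))) →
      ((Equiv.Perm.sign σ : ℤ) : ℂ) * η ^ e (σ i) * (if m σ = m σ₀ then 1 else 0) = 0 := by
    intro σ _ hσ
    have hmne : m σ ≠ m σ₀ := by
      intro hmeq
      have hrest : ∀ k, k ≠ i → k ≠ j → e (σ k) = e (σ₀ k) := by
        intro k hk1 hk2
        have hkE := hmemE k hk1 hk2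
        have := DFunLike.congr_fun hmeq k
        rw [hm] at this
        rwa [mexp_apply_mem hkE (Ne.symm hk2), mexp_apply_mem hkE (Ne.symm hk2)] at this
      have hsum : e (σ i) + e (σ j) = e (σ₀ i) + e (σ₀ j) := by
        have := DFunLike.congr_fun hmeq j
        rw [hm] at this
        rwa [mexp_apply_j hjE, mexp_apply_j hjE] at this
      rcases classify he hij σ₀ σ hrest hsum with h | h
      · exact hσ (by rw [h]; exact Finset.mem_insert_self _ _)
      · refine hσ ?_
        rw [h, ← hσ₁]
        exact Finset.mem_insert_of_mem (Finset.mem_singleton_self σ₁)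
    rw [if_neg hmne, mul_zero]
  rw [← Finset.sum_subset (Finset.subset_univ ({σ₀, σ₁} : Finset (Equiv.Perm (Fin N))))
    hvanish] at hco
  rw [Finset.sum_pair hne01, if_pos rfl, if_pos hm1, h0i, h1i] at hco
  have hsgn : ((Equiv.Perm.sign σ₁ : ℤ) : ℂ) = -((Equiv.Perm.sign σ₀ : ℤ) : ℂ) := by
    rw [hσ₁, Equiv.Perm.sign_mul, Equiv.Perm.sign_swap hij, mul_neg_one]
    push_cast
    ring
  rw [hsgn] at hco
  have : ((Equiv.Perm.sign σ₀ : ℤ) : ℂ) * (η ^ e a - η ^ e b) = 0 := by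
    rw [← hco]; ring
  rcases mul_eq_zero.mp this with h | h
  · exact coe_sign_ne_zero σ₀ h
  · exact hη (sub_eq_zero.mp h)

private lemma key2 {N : ℕ} {e : Fin N → ℕ} (he : Function.Injective e)
    {i j : Fin N} (hij : i ≠ j) {a b : Fin N} (hab : a ≠ b)
    (hea : 1 ≤ e a) (heb : 1 ≤ e b) :
    (aeval (fun k => if k = i then C (1:ℂ) * X j else X k))
      ((pderiv i) (∑ σ : Equiv.Perm (Fin N),
        ((Equiv.Perm.sign σ : ℤ) • ∏ k, (X k : MvPolynomial (Fin N) ℂ) ^ e (σ k)))) ≠ 0 := by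
  obtain ⟨σ₀, h0i, h0j⟩ := exists_perm hij hab
  set E : Finset (Fin N) := (Finset.univ.erase i).erase j with hE
  have hjE : j ∉ E := fun h => (Finset.mem_erase.mp h).1 rfl
  have hmemE : ∀ k : Fin N, k ≠ i → k ≠ j → k ∈ E := fun k h1 h2 =>
    Finset.mem_erase.mpr ⟨h2, Finset.mem_erase.mpr ⟨h1, Finset.mem_univ k⟩⟩
  set φ : Fin N → MvPolynomial (Fin N) ℂ := fun k => if k = i then C (1:ℂ) * X j else X k with hφ
  set m : Equiv.Perm (Fin N) → (Fin N →₀ ℕ) :=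
    fun σ => mexp j ((e (σ i) - 1) + e (σ j)) E (fun k => e (σ k)) with hm
  -- the little exponent-function facts
  have hd : ∀ σ : Equiv.Perm (Fin N), ∀ k : Fin N,
      (((∑ k' ∈ Finset.univ, Finsupp.single k' (e (σ k'))) - Finsupp.single i 1 : Fin N →₀ ℕ)) k
        = if k = i then e (σ i) - 1 else e (σ k) := by
    intro σ k
    rw [Finsupp.tsub_apply, sum_single_apply, if_pos (Finset.mem_univ k), Finsupp.single_apply]
    by_cases hk : k = i
    · rw [if_pos hk, if_pos hk.symm, hk]
    · rw [if_neg hk, if_neg (fun h : i = k => hk h.symm), Nat.sub_zero]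
  have hexp : (aeval φ)
      ((pderiv i) (∑ σ : Equiv.Perm (Fin N),
        ((Equiv.Perm.sign σ : ℤ) • ∏ k, (X k : MvPolynomial (Fin N) ℂ) ^ e (σ k))))
      = ∑ σ : Equiv.Perm (Fin N),
          C (((Equiv.Perm.sign σ : ℤ) : ℂ) * (e (σ i) : ℂ)) * monomial (m σ) 1 := by
    rw [map_sum, map_sum]
    refine Finset.sum_congr rfl fun σ _ => ?_
    rw [← Int.cast_smul_eq_zsmul ℂ, smul_eq_C_mul, prod_X_pow_monomial, pderiv_C_mul,
      pderiv_monomial, map_mul, aeval_C, MvPolynomial.algebraMap_eq, one_mul]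
    rw [sum_single_apply, if_pos (Finset.mem_univ i)]
    rw [aeval_monomial, MvPolynomial.algebraMap_eq]
    rw [Finsupp.prod_fintype _ _ (fun k => pow_zero (φ k))]
    have hprod : (∏ k, φ k ^
        ((((∑ k' ∈ Finset.univ, Finsupp.single k' (e (σ k'))) - Finsupp.single i 1 : Fin N →₀ ℕ) k)))
        = C ((1:ℂ) ^ (e (σ i) - 1)) * monomial (m σ) 1 := by
      rw [hφ, prod_phi_pow hij (1:ℂ)
        (fun k => (((∑ k' ∈ Finset.univ, Finsupp.single k' (e (σ k'))) - Finsupp.single i 1 : Fin N →₀ ℕ) k))]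
      congr 1
      · rw [hd σ i, if_pos rfl]
      · rw [hm]
        refine congrArg (fun z => monomial z (1:ℂ)) ?_
        refine mexp_congr ?_ fun k hk => ?_
        · rw [hd σ i, if_pos rfl, hd σ j, if_neg (fun h => hij h.symm)]
        · have hk1 : k ≠ i := (Finset.mem_erase.mp (Finset.mem_erase.mp hk).2).1
          rw [hd σ k, if_neg hk1]
    rw [hprod, one_pow, map_one, one_mul, C_mul]
    ring
  set σ₁ : Equiv.Perm (Fin N) := σ₀ * Equiv.swap i j with hσ₁
  have h1i : σ₁ i = b := by
    rw [hσ₁]; simp only [Equiv.Perm.mul_apply, Equiv.swap_apply_left]; exact h0j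
  have h1j : σ₁ j = a := by
    rw [hσ₁]; simp only [Equiv.Perm.mul_apply, Equiv.swap_apply_right]; exact h0i
  have h1k : ∀ k, k ≠ i → k ≠ j → σ₁ k = σ₀ k := fun k hk1 hk2 => by
    rw [hσ₁]; simp only [Equiv.Perm.mul_apply, Equiv.swap_apply_of_ne_of_ne hk1 hk2]
  have hne01 : σ₀ ≠ σ₁ := by
    intro h
    have : σ₀ i = σ₁ i := by rw [h]
    rw [h0i, h1i] at this
    exact hab this
  have hm1 : m σ₁ = m σ₀ := by
    rw [hm]
    refine mexp_congr ?_ fun k hk => ?_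
    · rw [h1i, h1j, h0i, h0j]
      omega
    · have hk1 : k ≠ i := (Finset.mem_erase.mp (Finset.mem_erase.mp hk).2).1
      have hk2 : k ≠ j := (Finset.mem_erase.mp hk).1
      rw [h1k k hk1 hk2]
  intro hzero
  have hco : coeff (m σ₀) ((aeval φ)
      ((pderiv i) (∑ σ : Equiv.Perm (Fin N),
        ((Equiv.Perm.sign σ : ℤ) • ∏ k, (X k : MvPolynomial (Fin N) ℂ) ^ e (σ k))))) = 0 := by
    rw [hzero, coeff_zero]
  rw [hexp, coeff_sum] at hco
  have hval : ∀ σ : Equiv.Perm (Fin N),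
      coeff (m σ₀) (C (((Equiv.Perm.sign σ : ℤ) : ℂ) * (e (σ i) : ℂ)) * monomial (m σ) 1)
        = ((Equiv.Perm.sign σ : ℤ) : ℂ) * (e (σ i) : ℂ) * (if m σ = m σ₀ then 1 else 0) := by
    intro σ
    rw [coeff_C_mul, coeff_monomial]
  rw [Finset.sum_congr rfl fun σ _ => hval σ] at hco
  have hvanish : ∀ σ ∈ Finset.univ, σ ∉ ({σ₀, σ₁} : Finset (Equiv.Perm (Fin N))) →
      ((Equiv.Perm.sign σ : ℤ) : ℂ) * (e (σ i) : ℂ) * (if m σ = m σ₀ then 1 else 0) = 0 := by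
    intro σ _ hσ
    by_cases hz : e (σ i) = 0
    · rw [hz]
      norm_num
    have hmne : m σ ≠ m σ₀ := by
      intro hmeq
      have hrest : ∀ k, k ≠ i → k ≠ j → e (σ k) = e (σ₀ k) := by
        intro k hk1 hk2
        have hkE := hmemE k hk1 hk2
        have := DFunLike.congr_fun hmeq k
        rw [hm] at this
        rwa [mexp_apply_mem hkE (Ne.symm hk2), mexp_apply_mem hkE (Ne.symm hk2)] at this
      have hsum : e (σ i) + e (σ j) = e (σ₀ i) + e (σ₀ j) := by
        have := DFunLike.congr_fun hmeq j
        rw [hm] at this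
        rw [mexp_apply_j hjE, mexp_apply_j hjE] at this
        have h0a : 1 ≤ e (σ₀ i) := by rw [h0i]; exact hea
        omega
      rcases classify he hij σ₀ σ hrest hsum with h | h
      · exact hσ (by rw [h]; exact Finset.mem_insert_self _ _)
      · refine hσ ?_
        rw [h, ← hσ₁]
        exact Finset.mem_insert_of_mem (Finset.mem_singleton_self σ₁)
    rw [if_neg hmne, mul_zero]
  rw [← Finset.sum_subset (Finset.subset_univ ({σ₀, σ₁} : Finset (Equiv.Perm (Fin N))))
    hvanish] at hco
  rw [Finset.sum_pair hne01, if_pos rfl, if_pos hm1, h0i, h1i] at hco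
  have hsgn : ((Equiv.Perm.sign σ₁ : ℤ) : ℂ) = -((Equiv.Perm.sign σ₀ : ℤ) : ℂ) := by
    rw [hσ₁, Equiv.Perm.sign_mul, Equiv.Perm.sign_swap hij, mul_neg_one]
    push_cast
    ring
  rw [hsgn] at hco
  have : ((Equiv.Perm.sign σ₀ : ℤ) : ℂ) * ((e a : ℂ) - (e b : ℂ)) = 0 := by
    rw [← hco]; ring
  rcases mul_eq_zero.mp this with h | h
  · exact coe_sign_ne_zero σ₀ h
  · have : (e a : ℂ) = (e b : ℂ) := sub_eq_zero.mp h
    have : e a = e b := Nat.cast_injective this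
    exact hab (he this)

private lemma shiftedVdm' {R : Type*} [CommRing R] {N : ℕ} (lam : Fin N → ℕ) (v : Fin N → R) :
  Matrix.det (Matrix.of fun i j : Fin N => v i ^ (lam j + (N - 1 - (j : ℕ))))
      = ∑ σ : Equiv.Perm (Fin N),
          ((Equiv.Perm.sign σ : ℤ) •
            ∏ k, (v k) ^ (lam (σ k) + (N - 1 - ((σ k : Fin N) : ℕ)))) := by
  rw [← Matrix.det_transpose, Matrix.det_apply]
  refine Finset.sum_congr rfl fun σ _ => ?_
  rw [Units.smul_def]
  congr 1

private lemma expo_step (n ℓ ℓ' : ℕ) (hl : ℓ' ≤ ℓ) (t : ℕ) (h : t + 1 < 2 * n) :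
    twoStaircase n ℓ ℓ' ⟨t + 1, h⟩ + (2 * n - 1 - (t + 1))
      < twoStaircase n ℓ ℓ' ⟨t, by omega⟩ + (2 * n - 1 - t) := by
  simp only [twoStaircase]
  by_cases ht : t % 2 = 0
  · rw [if_pos ht, if_neg (by omega : ¬((t + 1) % 2 = 0))]
    have h3 : (t + 1 + 1) / 2 = t / 2 + 1 := by omega
    have h4 : n - (t / 2 + 1) = n - 1 - t / 2 := by omega
    rw [h3, h4]
    set A := (n - 1 - t / 2) * ℓ with hA
    omega
  · rw [if_neg ht, if_pos (by omega : (t + 1) % 2 = 0)]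
    have h4 : n - (t + 1) / 2 = (n - 1 - (t + 1) / 2) + 1 := by omega
    rw [h4, add_mul, one_mul]
    set A := (n - 1 - (t + 1) / 2) * ℓ with hA
    omega

private def expo (n ℓ ℓ' : ℕ) (m : Fin (2 * n)) : ℕ :=
  twoStaircase n ℓ ℓ' m + (2 * n - 1 - (m : ℕ))

private lemma expo_strict (n ℓ ℓ' : ℕ) (hl : ℓ' ≤ ℓ) :
    ∀ s t : Fin (2 * n), s < t → expo n ℓ ℓ' t < expo n ℓ ℓ' s := by
  have hstep : ∀ (t : ℕ) (h : t + 1 < 2 * n),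
      expo n ℓ ℓ' ⟨t + 1, h⟩ < expo n ℓ ℓ' ⟨t, by omega⟩ := fun t h => expo_step n ℓ ℓ' hl t h
  have key : ∀ (d s : ℕ) (hs : s + d + 1 < 2 * n),
      expo n ℓ ℓ' ⟨s + d + 1, hs⟩ < expo n ℓ ℓ' ⟨s, by omega⟩ := by
    intro d
    induction d with
    | zero => exact fun s hs => hstep s hs
    | succ d ih =>
        intro s hs
        have h1 : s + d + 1 < 2 * n := by omega
        calc expo n ℓ ℓ' ⟨s + (d + 1) + 1, hs⟩
            < expo n ℓ ℓ' ⟨s + d + 1, h1⟩ := by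
              exact hstep (s + d + 1) (by omega : (s + d + 1) + 1 < 2 * n)
          _ < expo n ℓ ℓ' ⟨s, by omega⟩ := ih s h1
  intro s t hst
  have h1 : (s : ℕ) + ((t : ℕ) - (s : ℕ) - 1) + 1 < 2 * n := by
    have := t.isLt
    have : (s : ℕ) < (t : ℕ) := hst
    omega
  have h2 : t = ⟨(s : ℕ) + ((t : ℕ) - (s : ℕ) - 1) + 1, h1⟩ := by
    apply Fin.ext
    simp only []
    have : (s : ℕ) < (t : ℕ) := hst
    omega
  rw [h2]
  exact key _ _ h1

private lemma expo_inj (n ℓ ℓ' : ℕ) (hl : ℓ' ≤ ℓ) : Function.Injective (expo n ℓ ℓ') := by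
  intro s t hst
  by_contra hne
  rcases lt_or_gt_of_ne hne with h | h
  · have := expo_strict n ℓ ℓ' hl s t h; omega
  · have := expo_strict n ℓ ℓ' hl t s h; omega

private lemma expo_rel01 (n ℓ ℓ' : ℕ) (hn : 2 ≤ n) (h0 : (0:ℕ) < 2*n) (h1 : (1:ℕ) < 2*n) :
    expo n ℓ ℓ' ⟨0, h0⟩ = expo n ℓ ℓ' ⟨1, h1⟩ + (ℓ' + 1) := by
  simp only [expo, twoStaircase, Fin.val_mk]
  norm_num
  set A := (n - 1) * ℓ with hA
  omega

private lemma expo_rel12 (n ℓ ℓ' : ℕ) (hn : 2 ≤ n) (hl : ℓ' ≤ ℓ) (h1 : (1:ℕ) < 2*n)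
    (h2 : (2:ℕ) < 2*n) :
    expo n ℓ ℓ' ⟨1, h1⟩ = expo n ℓ ℓ' ⟨2, h2⟩ + (ℓ - ℓ' + 1) := by
  simp only [expo, twoStaircase, Fin.val_mk]
  norm_num
  have h5 : n - 1 - 1 = n - 2 := by omega
  rw [h5]
  have h4 : n - 1 = (n - 2) + 1 := by omega
  rw [h4, add_mul, one_mul]
  set A := (n - 2) * ℓ with hA
  omega

private lemma expo_last (n ℓ ℓ' : ℕ) (hn : 2 ≤ n) (h : 2*n - 1 < 2*n) :
    expo n ℓ ℓ' ⟨2*n - 1, h⟩ = 0 := by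
  simp only [expo, twoStaircase, Fin.val_mk]
  rw [if_neg (by omega : ¬((2*n-1) % 2 = 0))]
  have h4 : (2*n - 1 + 1) / 2 = n := by omega
  rw [h4, Nat.sub_self, Nat.zero_mul, Nat.sub_self, Nat.add_zero]

private lemma expo_pos1 (n ℓ ℓ' : ℕ) (hn : 2 ≤ n) (h1 : (1:ℕ) < 2*n) :
    1 ≤ expo n ℓ ℓ' ⟨1, h1⟩ := by
  simp only [expo, twoStaircase, Fin.val_mk]
  norm_num
  omega

open MvPolynomial in
/-- If `gcd(ℓ'+1, ℓ+2) = 1` and `n ≥ 2`, the 2-staircase Schur polynomial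
`s_{λ_{n,ℓ,ℓ'}} ∈ ℂ[z_1,…,z_{2n}]` (characterized by `Δ_λ = S * Δ`) has no linear binomial
factor `z_i - η z_j`. -/
theorem twoStaircase_no_binomial_factor (n ℓ ℓ' : ℕ) (hn : 2 ≤ n) (hl : ℓ' ≤ ℓ)
    (hgcd : Nat.gcd (ℓ' + 1) (ℓ + 2) = 1)
    (S : MvPolynomial (Fin (2 * n)) ℂ)
    (hS : shiftedVdm (twoStaircase n ℓ ℓ') (fun i => X i)
        = S * vdmProd (fun i => X i)) :
    ∀ i j : Fin (2 * n), i ≠ j → ∀ η : ℂ, ¬ (X i - C η * X j ∣ S) := by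
  intro i j hij η hdvd
  have he := expo_inj n ℓ ℓ' hl
  have h0N : (0:ℕ) < 2*n := by omega
  have h1N : (1:ℕ) < 2*n := by omega
  have h2N : (2:ℕ) < 2*n := by omega
  have h3N : 2*n - 1 < 2*n := by omega
  have hv01 := expo_rel01 n ℓ ℓ' hn h0N h1N
  have hv12 := expo_rel12 n ℓ ℓ' hn hl h1N h2N
  have hvlast := expo_last n ℓ ℓ' hn h3N
  have hp1 := expo_pos1 n ℓ ℓ' hn h1N
  have hab01 : (⟨0, h0N⟩ : Fin (2*n)) ≠ ⟨1, h1N⟩ := Fin.ne_of_val_ne (by simp)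
  have hab12 : (⟨1, h1N⟩ : Fin (2*n)) ≠ ⟨2, h2N⟩ := Fin.ne_of_val_ne (by simp)
  have hab03 : (⟨0, h0N⟩ : Fin (2*n)) ≠ ⟨2*n - 1, h3N⟩ := Fin.ne_of_val_ne (by simp only [Fin.val_mk]; omega)
  obtain ⟨u, hu⟩ := hdvd
  have haevalp : (aeval (fun k => if k = i then C η * X j else X k))
      (X i - C η * X j : MvPolynomial (Fin (2*n)) ℂ) = 0 := by
    simp only [map_sub, map_mul, aeval_X, aeval_C, MvPolynomial.algebraMap_eq,
      eq_self_iff_true, if_true]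
    rw [if_neg (fun h : j = i => hij h.symm)]
    ring
  have hexpand : shiftedVdm (twoStaircase n ℓ ℓ') (fun i => (X i : MvPolynomial (Fin (2*n)) ℂ))
      = ∑ σ : Equiv.Perm (Fin (2*n)),
          ((Equiv.Perm.sign σ : ℤ) •
            ∏ k, (X k : MvPolynomial (Fin (2*n)) ℂ) ^ (expo n ℓ ℓ' (σ k))) := by
    rw [shiftedVdm]
    exact shiftedVdm' _ _
  by_cases hη1 : η = 1
  · subst hη1
    have hpΔ : (X i - C (1:ℂ) * X j : MvPolynomial (Fin (2*n)) ℂ)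
        ∣ vdmProd (fun k => X k) := by
      rw [map_one, one_mul, vdmProd]
      rcases lt_or_gt_of_ne hij with h | h
      · have h1 : ((X i - X j : MvPolynomial (Fin (2*n)) ℂ))
            ∣ ∏ j' ∈ Finset.Ioi i, (X i - X j') :=
          Finset.dvd_prod_of_mem _ (Finset.mem_Ioi.mpr h)
        exact h1.trans (Finset.dvd_prod_of_mem
          (fun i' => ∏ j' ∈ Finset.Ioi i', (X i' - X j')) (Finset.mem_univ i))
      · have h1 : ((X j - X i : MvPolynomial (Fin (2*n)) ℂ))
            ∣ ∏ j' ∈ Finset.Ioi j, (X j - X j') :=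
          Finset.dvd_prod_of_mem _ (Finset.mem_Ioi.mpr h)
        have h2 : ((X j - X i : MvPolynomial (Fin (2*n)) ℂ))
            ∣ ∏ i' : Fin (2*n), ∏ j' ∈ Finset.Ioi i', (X i' - X j') :=
          h1.trans (Finset.dvd_prod_of_mem
            (fun i' => ∏ j' ∈ Finset.Ioi i', (X i' - X j')) (Finset.mem_univ j))
        have h3 : (X i - X j : MvPolynomial (Fin (2*n)) ℂ) = -(X j - X i) := by ring
        rw [h3]
        exact (neg_dvd).mpr h2
    obtain ⟨v, hv⟩ := hpΔ
    have h0 : (aeval fun k => if k = i then C (1:ℂ) * X j else X k)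
        ((pderiv i) (shiftedVdm (twoStaircase n ℓ ℓ')
          (fun i => (X i : MvPolynomial (Fin (2*n)) ℂ)))) = 0 := by
      rw [hS, hu, hv, pderiv_mul]
      simp only [map_add, map_mul, haevalp, zero_mul, mul_zero, add_zero, zero_add]
    rw [hexpand] at h0
    exact key2 he hij hab01
      (by omega : 1 ≤ expo n ℓ ℓ' ⟨0, h0N⟩) (by omega : 1 ≤ expo n ℓ ℓ' ⟨1, h1N⟩) h0
  · have h0 : (aeval fun k => if k = i then C η * X j else X k)
        (shiftedVdm (twoStaircase n ℓ ℓ')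
          (fun i => (X i : MvPolynomial (Fin (2*n)) ℂ))) = 0 := by
      rw [hS, hu, map_mul, map_mul, haevalp, zero_mul, zero_mul]
    rw [hexpand] at h0
    by_cases hη0 : η = 0
    · subst hη0
      refine key1 he hij hab03 ?_ h0
      rw [hvlast, pow_zero, zero_pow (by omega : expo n ℓ ℓ' ⟨0, h0N⟩ ≠ 0)]
      norm_num
    · have hkey : η ^ (ℓ' + 1) ≠ 1 ∨ η ^ (ℓ - ℓ' + 1) ≠ 1 := by
        by_contra hcc
        push_neg at hcc
        obtain ⟨hc1, hc2⟩ := hcc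
        have hgcd2 : Nat.gcd (ℓ' + 1) (ℓ - ℓ' + 1) = 1 := by
          have h : ℓ + 2 = (ℓ - ℓ' + 1) + (ℓ' + 1) := by omega
          rw [h, Nat.gcd_add_self_right] at hgcd
          exact hgcd
        set uu : ℂˣ := Units.mk0 η hη0 with huu
        have hu1 : uu ^ (ℓ' + 1) = 1 := by
          apply Units.ext
          rw [Units.val_pow_eq_pow_val, Units.val_one, huu, Units.val_mk0]
          exact hc1
        have hu2 : uu ^ (ℓ - ℓ' + 1) = 1 := by
          apply Units.ext
          rw [Units.val_pow_eq_pow_val, Units.val_one, huu, Units.val_mk0]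
          exact hc2
        have hord : orderOf uu ∣ 1 := by
          rw [← hgcd2]
          exact Nat.dvd_gcd (orderOf_dvd_of_pow_eq_one hu1) (orderOf_dvd_of_pow_eq_one hu2)
        have : uu = 1 := orderOf_eq_one_iff.mp (Nat.dvd_one.mp hord)
        apply hη1
        have := congrArg Units.val this
        rwa [huu, Units.val_mk0, Units.val_one] at this
      rcases hkey with hk | hk
      · refine key1 he hij hab01 ?_ h0
        rw [hv01, pow_add]
        intro heq
        apply hk
        have hne : η ^ expo n ℓ ℓ' ⟨1, h1N⟩ ≠ 0 := pow_ne_zero _ hη0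
        calc η ^ (ℓ' + 1)
            = (η ^ expo n ℓ ℓ' ⟨1, h1N⟩)⁻¹ * (η ^ expo n ℓ ℓ' ⟨1, h1N⟩ * η ^ (ℓ' + 1)) := by
              field_simp
          _ = (η ^ expo n ℓ ℓ' ⟨1, h1N⟩)⁻¹ * (η ^ expo n ℓ ℓ' ⟨1, h1N⟩) := by rw [heq]
          _ = 1 := inv_mul_cancel₀ hne
      · refine key1 he hij hab12 ?_ h0
        rw [hv12, pow_add]
        intro heq
        apply hk
        have hne : η ^ expo n ℓ ℓ' ⟨2, h2N⟩ ≠ 0 := pow_ne_zero _ hη0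
        calc η ^ (ℓ - ℓ' + 1)
            = (η ^ expo n ℓ ℓ' ⟨2, h2N⟩)⁻¹ * (η ^ expo n ℓ ℓ' ⟨2, h2N⟩ * η ^ (ℓ - ℓ' + 1)) := by
              field_simp
          _ = (η ^ expo n ℓ ℓ' ⟨2, h2N⟩)⁻¹ * (η ^ expo n ℓ ℓ' ⟨2, h2N⟩) := by rw [heq]
          _ = 1 := inv_mul_cancel₀ hne
end

section
/- Let n ≥ 2 and 0 ≤ ℓ' ≤ ℓ be integers with gcd(ℓ'+1, ℓ+2) > 1. Then Q_{n,ℓ,ℓ'}(z_1,…,z_{2n−2}) = 0 identically; that is, the determinant det( [coefficient of x^i y^j in s_{λ_{n,ℓ,ℓ'}}(z_1,…,z_{2n−2},x,y)] )_{0≤i,j≤ℓ(n−1)+ℓ'} vanishes identically as an element of ℂ[z_1,…,z_{2n−2}]. -/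
open MvPolynomial in
/-- The specialization of the `2n` variables sending the first `2n-2` of them to
`z_1,…,z_{2n-2}` and the last two to the polynomial variables `x` (inner) and `y` (outer)
of `ℂ[z][x][y]`. -/
noncomputable def xySpec (n : ℕ) :
    Fin (2 * n) → Polynomial (Polynomial (MvPolynomial (Fin (2 * n - 2)) ℂ)) := fun v =>
  if hv : (v : ℕ) < 2 * n - 2 then Polynomial.C (Polynomial.C (X ⟨(v : ℕ), hv⟩))
  else if (v : ℕ) = 2 * n - 2 then Polynomial.C Polynomial.X
  else Polynomial.X

/-- `Q_{n,ℓ,ℓ'}(z)`: the determinant of the `(ℓ(n-1)+ℓ'+1) × (ℓ(n-1)+ℓ'+1)` matrix whose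
`(i,j)` entry is the coefficient of `x^i y^j` in `S(z_1,…,z_{2n-2},x,y)`. -/
noncomputable def Qdet (n ℓ ℓ' : ℕ) (S : MvPolynomial (Fin (2 * n)) ℂ) :
    MvPolynomial (Fin (2 * n - 2)) ℂ :=
  Matrix.det (Matrix.of fun i j : Fin (ℓ * (n - 1) + ℓ' + 1) =>
    ((MvPolynomial.aeval (xySpec n) S).coeff (j : ℕ)).coeff (i : ℕ))

/-! ### Auxiliary lemmas -/

private lemma myMapShiftedVdm {R S : Type*} [CommRing R] [CommRing S] (f : R →+* S)
    {N : ℕ} (lam : Fin N → ℕ) (v : Fin N → R) :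
    f (shiftedVdm lam v) = shiftedVdm lam (fun i => f (v i)) := by
  unfold shiftedVdm
  rw [RingHom.map_det]
  congr 1
  ext i j
  simp [map_pow]

private lemma myMapVdmProd {R S : Type*} [CommRing R] [CommRing S] (f : R →+* S)
    {N : ℕ} (v : Fin N → R) :
    f (vdmProd v) = vdmProd (fun i => f (v i)) := by
  unfold vdmProd
  rw [map_prod]
  refine Finset.prod_congr rfl fun i _ => ?_
  rw [map_prod]
  exact Finset.prod_congr rfl fun j _ => map_sub f _ _

private lemma xySpec_lt (n : ℕ) (i : Fin (2 * n)) (h : (i : ℕ) < 2 * n - 2) :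
    xySpec n i = Polynomial.C (Polynomial.C (MvPolynomial.X ⟨(i : ℕ), h⟩)) := by
  unfold xySpec; rw [dif_pos h]

private lemma xySpec_x (n : ℕ) (i : Fin (2 * n)) (h1 : ¬ (i : ℕ) < 2 * n - 2)
    (h : (i : ℕ) = 2 * n - 2) : xySpec n i = Polynomial.C Polynomial.X := by
  unfold xySpec; rw [dif_neg h1, if_pos h]

private lemma xySpec_y (n : ℕ) (i : Fin (2 * n)) (h1 : ¬ (i : ℕ) < 2 * n - 2)
    (h2 : (i : ℕ) ≠ 2 * n - 2) : xySpec n i = Polynomial.X := by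
  unfold xySpec; rw [dif_neg h1, if_neg h2]

private lemma mvX_ne_C_mul_X {σ : Type*} [DecidableEq σ] (k k' : σ) {a : ℂ} (ha : a ≠ 1) :
    (MvPolynomial.X k : MvPolynomial σ ℂ) ≠ MvPolynomial.C a * MvPolynomial.X k' := by
  intro h
  have hc := congrArg (MvPolynomial.coeff (Finsupp.single k 1)) h
  rw [MvPolynomial.coeff_X, MvPolynomial.coeff_C_mul, MvPolynomial.coeff_X'] at hc
  by_cases hkk : k' = k
  · subst hkk
    rw [if_pos rfl, mul_one] at hc
    exact ha hc.symm
  · rw [if_neg (fun hh => hkk ((Finsupp.single_left_inj one_ne_zero).mp hh)), mul_zero] at hc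
    exact one_ne_zero ((if_pos rfl).symm.trans hc)

private lemma natDegree_shiftedVdm_le {A : Type*} [CommRing A] [Nontrivial A] {N B : ℕ}
    (lam : Fin N → ℕ) (v : Fin N → Polynomial A) (i1 : Fin N)
    (h0 : ∀ i, i ≠ i1 → ∃ q, v i = Polynomial.C q)
    (h1 : v i1 = Polynomial.X)
    (hB : ∀ j : Fin N, lam j + (N - 1 - (j : ℕ)) ≤ B) :
    (shiftedVdm lam v).natDegree ≤ B := by
  classical
  unfold shiftedVdm
  rw [Matrix.det_apply']
  apply Polynomial.natDegree_sum_le_of_forall_le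
  intro σ _
  refine Polynomial.natDegree_mul_le.trans ?_
  rw [Polynomial.natDegree_intCast, zero_add]
  refine (Polynomial.natDegree_prod_le _ _).trans ?_
  have hpt : ∀ i : Fin N,
      ((Matrix.of fun i j : Fin N => v i ^ (lam j + (N - 1 - (j : ℕ)))) (σ i) i).natDegree
        ≤ if i = σ.symm i1 then B else 0 := by
    intro i
    by_cases h : i = σ.symm i1
    · subst h
      rw [if_pos rfl]
      simp only [Matrix.of_apply, Equiv.apply_symm_apply]
      rw [h1, Polynomial.natDegree_X_pow]
      exact hB _
    · rw [if_neg h]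
      obtain ⟨q, hq⟩ := h0 (σ i)
        (fun hh => h (by rw [← hh, Equiv.symm_apply_apply]))
      simp only [Matrix.of_apply, hq, ← Polynomial.C_pow, Polynomial.natDegree_C, le_refl]
  refine (Finset.sum_le_sum fun i _ => hpt i).trans ?_
  rw [Finset.sum_ite_eq' Finset.univ (σ.symm i1) (fun _ => B)]
  simp

open MvPolynomial in
/-- If `gcd(ℓ'+1, ℓ+2) > 1` and `n ≥ 2`, then `Q_{n,ℓ,ℓ'}(z) = 0` identically, where `S` is
the 2-staircase Schur polynomial `s_{λ_{n,ℓ,ℓ'}}` characterized by `Δ_λ = S * Δ`. -/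
theorem Qdet_eq_zero_of_gcd_gt_one (n ℓ ℓ' : ℕ) (hn : 2 ≤ n) (hl : ℓ' ≤ ℓ)
    (hgcd : 1 < Nat.gcd (ℓ' + 1) (ℓ + 2))
    (S : MvPolynomial (Fin (2 * n)) ℂ)
    (hS : shiftedVdm (twoStaircase n ℓ ℓ') (fun i => X i)
        = S * vdmProd (fun i => X i)) :
    Qdet n ℓ ℓ' S = 0 := by
  classical
  unfold Qdet
  set d := Nat.gcd (ℓ' + 1) (ℓ + 2) with hd_def
  have hdl' : d ∣ ℓ' + 1 := Nat.gcd_dvd_left _ _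
  have hdl : d ∣ ℓ + 2 := Nat.gcd_dvd_right _ _
  have hprim : IsPrimitiveRoot (qRoot d) d := by
    unfold qRoot
    exact Complex.isPrimitiveRoot_exp d (by omega)
  have hω1 : qRoot d ≠ 1 := hprim.ne_one hgcd
  have hωpow : ∀ e : ℕ, d ∣ e → qRoot d ^ e = 1 := by
    rintro e ⟨k, rfl⟩
    rw [pow_mul, hprim.pow_eq_one, one_pow]
  -- exponent structure of the 2-staircase shifted exponents
  have hkey : ∀ j : Fin (2 * n), ∃ m, m ≤ n - 1 ∧
      (twoStaircase n ℓ ℓ' j + (2 * n - 1 - (j : ℕ)) = m * (ℓ + 2) + (ℓ' + 1) ∨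
       twoStaircase n ℓ ℓ' j + (2 * n - 1 - (j : ℕ)) = m * (ℓ + 2)) := by
    intro j
    have hj : (j : ℕ) < 2 * n := j.isLt
    unfold twoStaircase
    by_cases h2 : (j : ℕ) % 2 = 0
    · refine ⟨n - 1 - (j : ℕ) / 2, by omega, Or.inl ?_⟩
      rw [if_pos h2]
      have h1 : (n - 1 - (j : ℕ) / 2) * (ℓ + 2)
          = (n - 1 - (j : ℕ) / 2) * ℓ + 2 * (n - 1 - (j : ℕ) / 2) := by ring
      have h3 : 2 * n - 1 - (j : ℕ) = 2 * (n - 1 - (j : ℕ) / 2) + 1 := by omega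
      rw [h1, h3]
      try ring
    · refine ⟨n - ((j : ℕ) + 1) / 2, by omega, Or.inr ?_⟩
      rw [if_neg h2]
      have h1 : (n - ((j : ℕ) + 1) / 2) * (ℓ + 2)
          = (n - ((j : ℕ) + 1) / 2) * ℓ + 2 * (n - ((j : ℕ) + 1) / 2) := by ring
      have h3 : 2 * n - 1 - (j : ℕ) = 2 * (n - ((j : ℕ) + 1) / 2) := by omega
      rw [h1, h3]
      try ring
  have hediv : ∀ j : Fin (2 * n), d ∣ twoStaircase n ℓ ℓ' j + (2 * n - 1 - (j : ℕ)) := by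
    intro j
    obtain ⟨m, _, h | h⟩ := hkey j <;> rw [h]
    · exact dvd_add (Dvd.dvd.mul_left hdl m) hdl'
    · exact Dvd.dvd.mul_left hdl m
  have hele : ∀ j : Fin (2 * n),
      twoStaircase n ℓ ℓ' j + (2 * n - 1 - (j : ℕ)) ≤ ℓ * (n - 1) + ℓ' + (2 * n - 1) := by
    intro j
    obtain ⟨m, hm, h | h⟩ := hkey j <;> rw [h] <;>
    · have h1 : m * (ℓ + 2) ≤ (n - 1) * (ℓ + 2) := Nat.mul_le_mul_right _ hm
      have h2 : (n - 1) * (ℓ + 2) = ℓ * (n - 1) + 2 * (n - 1) := by ring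
      obtain ⟨A, hA⟩ : ∃ A, m * (ℓ + 2) = A := ⟨_, rfl⟩
      obtain ⟨Bv, hBv⟩ : ∃ Bv, (n - 1) * (ℓ + 2) = Bv := ⟨_, rfl⟩
      obtain ⟨Cv, hCv⟩ : ∃ Cv, ℓ * (n - 1) = Cv := ⟨_, rfl⟩
      rw [hA, hBv] at h1
      rw [hBv, hCv] at h2
      rw [hA, hCv]
      omega
  have h02 : 0 < 2 * n - 2 := by omega
  set i0 : Fin (2 * n - 2) := ⟨0, h02⟩ with hi0
  set c : MvPolynomial (Fin (2 * n - 2)) ℂ := MvPolynomial.C (qRoot d) * MvPolynomial.X i0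
    with hc
  set P : Polynomial (Polynomial (MvPolynomial (Fin (2 * n - 2)) ℂ)) := (aeval (xySpec n)) S
    with hP
  -- map the defining identity through the specialization
  have hS2 : shiftedVdm (twoStaircase n ℓ ℓ') (xySpec n) = P * vdmProd (xySpec n) := by
    have h2 := congrArg (aeval (xySpec n)) hS
    rw [map_mul] at h2
    have h3 := myMapShiftedVdm (S := Polynomial (Polynomial (MvPolynomial (Fin (2 * n - 2)) ℂ))) ((aeval (R := ℂ) (xySpec n)).toRingHom) (twoStaircase n ℓ ℓ')
      (fun i : Fin (2 * n) => (X i : MvPolynomial (Fin (2 * n)) ℂ))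
    have h4 := myMapVdmProd (S := Polynomial (Polynomial (MvPolynomial (Fin (2 * n - 2)) ℂ))) ((aeval (R := ℂ) (xySpec n)).toRingHom)
      (fun i : Fin (2 * n) => (X i : MvPolynomial (Fin (2 * n)) ℂ))
    simp only [AlgHom.toRingHom_eq_coe, RingHom.coe_coe, aeval_X] at h3 h4
    rw [h3, h4] at h2
    exact h2
  -- now evaluate the outer variable at c = ω z₁
  have hS3 : shiftedVdm (twoStaircase n ℓ ℓ')
        (fun i : Fin (2 * n) => Polynomial.eval (Polynomial.C c) (xySpec n i))
      = Polynomial.eval (Polynomial.C c) P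
        * vdmProd (fun i : Fin (2 * n) => Polynomial.eval (Polynomial.C c) (xySpec n i)) := by
    have h2 := congrArg (Polynomial.eval (Polynomial.C c)) hS2
    rw [Polynomial.eval_mul] at h2
    have h3 := myMapShiftedVdm (Polynomial.evalRingHom (Polynomial.C c))
      (twoStaircase n ℓ ℓ') (xySpec n)
    have h4 := myMapVdmProd (Polynomial.evalRingHom (Polynomial.C c)) (xySpec n)
    simp only [Polynomial.coe_evalRingHom] at h3 h4
    rw [h3, h4] at h2
    exact h2
  -- the specialized shifted Vandermonde vanishes: two equal rows
  have hvan : shiftedVdm (twoStaircase n ℓ ℓ')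
      (fun i : Fin (2 * n) => Polynomial.eval (Polynomial.C c) (xySpec n i)) = 0 := by
    unfold shiftedVdm
    apply Matrix.det_zero_of_row_eq
      (i := (⟨0, by omega⟩ : Fin (2 * n))) (j := (⟨2 * n - 1, by omega⟩ : Fin (2 * n)))
    · intro hEq
      have h5 := congrArg Fin.val hEq
      simp only [] at h5
      omega
    · funext j
      simp only [Matrix.of_apply]
      rw [xySpec_lt n ⟨0, by omega⟩ (show (0 : ℕ) < 2 * n - 2 by omega),
          xySpec_y n ⟨2 * n - 1, by omega⟩ (show ¬(2 * n - 1 < 2 * n - 2) by omega)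
            (show 2 * n - 1 ≠ 2 * n - 2 by omega)]
      rw [Polynomial.eval_C, Polynomial.eval_X]
      rw [← Polynomial.C_pow, ← Polynomial.C_pow]
      congr 1
      rw [hc, mul_pow, ← MvPolynomial.C_pow, hωpow _ (hediv j), MvPolynomial.C_1, one_mul]
  have hmulzero : Polynomial.eval (Polynomial.C c) P
      * vdmProd (fun i : Fin (2 * n) => Polynomial.eval (Polynomial.C c) (xySpec n i)) = 0 :=
    hS3.symm.trans hvan
  -- pairwise distinctness of the specialized values
  have hwne : ∀ i j : Fin (2 * n), i < j →
      Polynomial.eval (Polynomial.C c) (xySpec n i)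
        ≠ Polynomial.eval (Polynomial.C c) (xySpec n j) := by
    intro i j hij hEq
    have hij' : (i : ℕ) < (j : ℕ) := hij
    have hjlt : (j : ℕ) < 2 * n := j.isLt
    by_cases hj1 : (j : ℕ) < 2 * n - 2
    · rw [xySpec_lt n i (by omega), xySpec_lt n j hj1,
          Polynomial.eval_C, Polynomial.eval_C] at hEq
      have h5 := MvPolynomial.X_injective (Polynomial.C_injective hEq)
      have h6 := congrArg Fin.val h5
      simp only [] at h6
      omega
    · by_cases hj2 : (j : ℕ) = 2 * n - 2
      · rw [xySpec_lt n i (by omega), xySpec_x n j (by omega) hj2,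
            Polynomial.eval_C, Polynomial.eval_C] at hEq
        exact Polynomial.X_ne_C _ hEq.symm
      · rw [xySpec_y n j (by omega) hj2, Polynomial.eval_X] at hEq
        by_cases hi1 : (i : ℕ) < 2 * n - 2
        · rw [xySpec_lt n i hi1, Polynomial.eval_C] at hEq
          have h5 := Polynomial.C_injective hEq
          rw [hc] at h5
          exact mvX_ne_C_mul_X _ _ hω1 h5
        · have hi2 : (i : ℕ) = 2 * n - 2 := by omega
          rw [xySpec_x n i (by omega) hi2, Polynomial.eval_C] at hEq
          exact Polynomial.X_ne_C _ hEq
  have hspecne : ∀ i j : Fin (2 * n), i < j → xySpec n i - xySpec n j ≠ 0 := by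
    intro i j hij h
    apply hwne i j hij
    have h2 := congrArg (Polynomial.eval (Polynomial.C c)) h
    rw [Polynomial.eval_sub, Polynomial.eval_zero, sub_eq_zero] at h2
    exact h2
  have hvw : vdmProd (fun i : Fin (2 * n) => Polynomial.eval (Polynomial.C c) (xySpec n i))
      ≠ 0 := by
    unfold vdmProd
    rw [Finset.prod_ne_zero_iff]
    intro i _
    rw [Finset.prod_ne_zero_iff]
    intro j hj
    exact sub_ne_zero_of_ne (hwne i j (Finset.mem_Ioi.mp hj))
  have hP0 : Polynomial.eval (Polynomial.C c) P = 0 :=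
    (mul_eq_zero.mp hmulzero).resolve_right hvw
  -- degree bound for P
  have hvs : vdmProd (xySpec n) ≠ 0 := by
    intro h
    apply hvw
    have h2 := myMapVdmProd (Polynomial.evalRingHom (Polynomial.C c)) (xySpec n)
    simp only [Polynomial.coe_evalRingHom] at h2
    rw [← h2, h, Polynomial.eval_zero]
  have hdegΛ : (shiftedVdm (twoStaircase n ℓ ℓ') (xySpec n)).natDegree
      ≤ ℓ * (n - 1) + ℓ' + (2 * n - 1) := by
    apply natDegree_shiftedVdm_le _ _ (⟨2 * n - 1, by omega⟩ : Fin (2 * n))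
    · intro i hi
      have h1 : (i : ℕ) < 2 * n := i.isLt
      have hne : (i : ℕ) ≠ 2 * n - 1 := fun h => hi (Fin.ext h)
      by_cases h : (i : ℕ) < 2 * n - 2
      · exact ⟨_, xySpec_lt n i h⟩
      · exact ⟨_, xySpec_x n i h (by omega)⟩
    · exact xySpec_y n _ (show ¬(2 * n - 1 < 2 * n - 2) by omega)
        (show 2 * n - 1 ≠ 2 * n - 2 by omega)
    · exact hele
  have hdegfac : ∀ i : Fin (2 * n), i ≠ (⟨2 * n - 1, by omega⟩ : Fin (2 * n)) →
      (xySpec n i - xySpec n ⟨2 * n - 1, by omega⟩).natDegree = 1 := by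
    intro i hi
    have h1 : (i : ℕ) < 2 * n := i.isLt
    have hne : (i : ℕ) ≠ 2 * n - 1 := fun h => hi (Fin.ext h)
    have hy : xySpec n (⟨2 * n - 1, by omega⟩ : Fin (2 * n)) = Polynomial.X :=
      xySpec_y n _ (show ¬(2 * n - 1 < 2 * n - 2) by omega)
        (show 2 * n - 1 ≠ 2 * n - 2 by omega)
    have hq : ∃ q, xySpec n i = Polynomial.C q := by
      by_cases h : (i : ℕ) < 2 * n - 2
      · exact ⟨_, xySpec_lt n i h⟩
      · exact ⟨_, xySpec_x n i h (by omega)⟩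
    obtain ⟨q, hq⟩ := hq
    rw [hq, hy, show Polynomial.C q - Polynomial.X = -(Polynomial.X - Polynomial.C q) by ring,
        Polynomial.natDegree_neg, Polynomial.natDegree_X_sub_C]
  have hdegV : 2 * n - 1 ≤ (vdmProd (xySpec n)).natDegree := by
    unfold vdmProd
    rw [Polynomial.natDegree_prod _ _ (fun i _ => Finset.prod_ne_zero_iff.mpr
      (fun j hj => hspecne i j (Finset.mem_Ioi.mp hj)))]
    have hterm : ∀ i ∈ Finset.univ.erase (⟨2 * n - 1, by omega⟩ : Fin (2 * n)),
        1 ≤ (∏ j ∈ Finset.Ioi i, (xySpec n i - xySpec n j)).natDegree := by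
      intro i hi
      have hi' := Finset.ne_of_mem_erase hi
      rw [Polynomial.natDegree_prod _ _ (fun j hj => hspecne i j (Finset.mem_Ioi.mp hj))]
      have h1 : (i : ℕ) < 2 * n := i.isLt
      have h2 : (i : ℕ) ≠ 2 * n - 1 := fun h => hi' (Fin.ext h)
      have hmem : (⟨2 * n - 1, by omega⟩ : Fin (2 * n)) ∈ Finset.Ioi i := by
        rw [Finset.mem_Ioi, Fin.lt_def]
        exact (by omega : (i : ℕ) < 2 * n - 1)
      calc 1 = (xySpec n i - xySpec n ⟨2 * n - 1, by omega⟩).natDegree := (hdegfac i hi').symm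
        _ ≤ ∑ j ∈ Finset.Ioi i, (xySpec n i - xySpec n j).natDegree :=
            Finset.single_le_sum (f := fun j => (xySpec n i - xySpec n j).natDegree)
              (fun _ _ => Nat.zero_le _) hmem
    calc 2 * n - 1
        = (Finset.univ.erase (⟨2 * n - 1, by omega⟩ : Fin (2 * n))).card := by
          rw [Finset.card_erase_of_mem (Finset.mem_univ _), Finset.card_univ, Fintype.card_fin]
      _ = ∑ _i ∈ Finset.univ.erase (⟨2 * n - 1, by omega⟩ : Fin (2 * n)), 1 := by
          rw [Finset.card_eq_sum_ones]
      _ ≤ ∑ i ∈ Finset.univ.erase (⟨2 * n - 1, by omega⟩ : Fin (2 * n)),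
            (∏ j ∈ Finset.Ioi i, (xySpec n i - xySpec n j)).natDegree :=
          Finset.sum_le_sum hterm
      _ ≤ ∑ i : Fin (2 * n), (∏ j ∈ Finset.Ioi i, (xySpec n i - xySpec n j)).natDegree :=
          Finset.sum_le_sum_of_subset (Finset.erase_subset _ _)
  have hdegP : P.natDegree ≤ ℓ * (n - 1) + ℓ' := by
    by_cases hp : P = 0
    · rw [hp, Polynomial.natDegree_zero]
      exact Nat.zero_le _
    · have h2 : (P * vdmProd (xySpec n)).natDegree ≤ ℓ * (n - 1) + ℓ' + (2 * n - 1) :=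
        hS2 ▸ hdegΛ
      rw [Polynomial.natDegree_mul hp hvs] at h2
      obtain ⟨Cv, hCv⟩ : ∃ Cv, ℓ * (n - 1) = Cv := ⟨_, rfl⟩
      rw [hCv] at h2 ⊢
      omega
  -- the kernel relation for the coefficient matrix
  have hEval : ∀ i : ℕ,
      ∑ j ∈ Finset.range (ℓ * (n - 1) + ℓ' + 1), (P.coeff j).coeff i * c ^ j = 0 := by
    intro i
    have he : Polynomial.eval (Polynomial.C c) P
        = ∑ j ∈ Finset.range (ℓ * (n - 1) + ℓ' + 1), P.coeff j * (Polynomial.C c) ^ j :=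
      Polynomial.eval_eq_sum_range' (Nat.lt_succ_of_le hdegP) _
    have hsum := he.symm.trans hP0
    have h2 := congrArg (fun q => Polynomial.coeff q i) hsum
    simp only [Polynomial.finset_sum_coeff, Polynomial.coeff_zero, ← Polynomial.C_pow,
      Polynomial.coeff_mul_C] at h2
    exact h2
  have hker : (Matrix.of fun i j : Fin (ℓ * (n - 1) + ℓ' + 1) =>
      (P.coeff (j : ℕ)).coeff (i : ℕ)).mulVec
      (fun j : Fin (ℓ * (n - 1) + ℓ' + 1) => c ^ (j : ℕ)) = 0 := by
    funext i
    simp only [Matrix.mulVec, dotProduct, Matrix.of_apply, Pi.zero_apply]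
    rw [Fin.sum_univ_eq_sum_range (fun j => (P.coeff j).coeff (i : ℕ) * c ^ j)
      (ℓ * (n - 1) + ℓ' + 1)]
    exact hEval (i : ℕ)
  set M := Matrix.of fun i j : Fin (ℓ * (n - 1) + ℓ' + 1) =>
    (P.coeff (j : ℕ)).coeff (i : ℕ) with hM
  have h1 : M.det • (fun j : Fin (ℓ * (n - 1) + ℓ' + 1) => c ^ (j : ℕ)) = 0 := by
    have h2 : (M.adjugate * M).mulVec (fun j : Fin (ℓ * (n - 1) + ℓ' + 1) => c ^ (j : ℕ))
        = 0 := by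
      rw [← Matrix.mulVec_mulVec, hker, Matrix.mulVec_zero]
    rw [Matrix.adjugate_mul, Matrix.smul_mulVec, Matrix.one_mulVec] at h2
    exact h2
  have h3 := congrFun h1 0
  simpa using h3
end

section
/- Let λ = (λ_1 ≥ … ≥ λ_k ≥ 0) and μ = (μ_1 ≥ … ≥ μ_h ≥ 0) be partitions of lengths k and h respectively with λ_k ≥ μ_1, and let ν = (λ_1,…,λ_k,μ_1,…,μ_h) be their concatenation, a partition of length k+h. Then for all complex numbers z_1,…,z_k and y_1,…,y_h, the limit as ε → 0 (ε ∈ ℂ, ε ≠ 0) of s_ν(z_1,…,z_k, εy_1,…,εy_h)/ε^{|μ|} equals s_λ(z_1,…,z_k) · s_μ(y_1,…,y_h), where |μ| = μ_1 + … + μ_h. -/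
namespace SchurAux
open MvPolynomial Finset

/-- concatenation of two partitions -/
def nuF (k h : ℕ) (lam : Fin k → ℕ) (mu : Fin h → ℕ) : Fin (k + h) → ℕ := fun t =>
  if ht : (t : ℕ) < k then lam ⟨(t : ℕ), ht⟩
  else mu ⟨(t : ℕ) - k, Nat.sub_lt_left_of_lt_add (Nat.le_of_not_lt ht) t.isLt⟩

/-- exponents in the shifted Vandermonde for the concatenated partition -/
def eE (k h : ℕ) (lam : Fin k → ℕ) (mu : Fin h → ℕ) : Fin (k + h) → ℕ := fun t =>
  nuF k h lam mu t + (k + h - 1 - (t : ℕ))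

def Rset (k h : ℕ) : Finset (Fin (k + h)) := univ.filter fun i => ¬ ((i : ℕ) < k)

def cc (h : ℕ) : ℕ := ∑ b : Fin h, (h - 1 - (b : ℕ))

variable {k h : ℕ} {lam : Fin k → ℕ} {mu : Fin h → ℕ}

lemma nuF_castAdd (a : Fin k) : nuF k h lam mu (Fin.castAdd h a) = lam a := by
  simp [nuF]

lemma nuF_natAdd (b : Fin h) : nuF k h lam mu (Fin.natAdd k b) = mu b := by
  unfold nuF
  rw [dif_neg (by simp)]
  congr 1
  exact Fin.ext (by simp)

lemma eE_castAdd (a : Fin k) : eE k h lam mu (Fin.castAdd h a) = lam a + (k + h - 1 - (a : ℕ)) := by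
  unfold eE; rw [nuF_castAdd]; simp

lemma eE_natAdd (b : Fin h) : eE k h lam mu (Fin.natAdd k b) = mu b + (h - 1 - (b : ℕ)) := by
  unfold eE; rw [nuF_natAdd]
  congr 1
  simp only [Fin.coe_natAdd]
  omega

lemma card_Rset : (Rset k h).card = h := by
  classical
  rw [Rset, Finset.card_filter, Fin.sum_univ_add]
  simp

lemma sum_Rset : ∑ i ∈ Rset k h, eE k h lam mu i = (∑ j, mu j) + cc h := by
  classical
  rw [Rset, sum_filter, Fin.sum_univ_add]
  simp only [Fin.coe_castAdd, Fin.is_lt, not_true_eq_false, if_false, Fin.coe_natAdd,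
    not_lt, Nat.le_add_right, if_true, eE_natAdd, Fin.sum_univ_zero]
  rw [Finset.sum_add_distrib]
  simp [cc]

/-- key combinatorial bound: any other `h`-subset has strictly bigger exponent sum -/
lemma sum_e_gt (hmu : ∀ i j : Fin h, i ≤ j → mu j ≤ mu i)
    (hlm : ∀ (i : Fin k) (j : Fin h), mu j ≤ lam i)
    (S : Finset (Fin (k + h))) (hS : S.card = h) (hne : S ≠ Rset k h) :
    (∑ j, mu j) + cc h + 1 ≤ ∑ i ∈ S, eE k h lam mu i := by
  classical
  set R := Rset k h with hR
  set A := S \ R with hA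
  set B := R \ S with hB
  have hcardR : R.card = h := card_Rset
  have hcAB : A.card = B.card := by
    have h1 := card_sdiff_add_card_inter S R
    have h2 := card_sdiff_add_card_inter R S
    rw [inter_comm] at h2
    simp only [← hA, ← hB] at h1 h2
    omega
  have hAne : A.Nonempty := by
    rw [Finset.nonempty_iff_ne_empty]
    intro hemp
    apply hne
    have hsub : S ⊆ R := by
      rwa [hA, Finset.sdiff_eq_empty_iff_subset] at hemp
    exact Finset.eq_of_subset_of_card_le hsub (by omega)
  have hBne : B.Nonempty := by
    rw [← Finset.card_pos] at hAne ⊢; omega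
  obtain ⟨b₀, hb₀⟩ := hBne
  have hb₀R : b₀ ∈ R := (Finset.mem_sdiff.mp hb₀).1
  have hkb₀ : ¬ ((b₀ : ℕ) < k) := by
    rw [hR, Rset, Finset.mem_filter] at hb₀R; exact hb₀R.2
  have hhpos : 0 < h := by have := b₀.isLt; omega
  set M := mu ⟨0, hhpos⟩ with hM
  have hAbound : ∀ i ∈ A, M + h ≤ eE k h lam mu i := by
    intro i hi
    have hik : (i : ℕ) < k := by
      have := (Finset.mem_sdiff.mp hi).2
      rw [hR, Rset, Finset.mem_filter] at this
      push_neg at this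
      simpa using this (Finset.mem_univ i)
    unfold eE nuF
    rw [dif_pos hik]
    have h1 : M ≤ lam ⟨(i : ℕ), hik⟩ := hlm _ _
    have := i.isLt
    omega
  have hBbound : ∀ i ∈ B, eE k h lam mu i ≤ M + (h - 1) := by
    intro i hi
    have hik : ¬ ((i : ℕ) < k) := by
      have := (Finset.mem_sdiff.mp hi).1
      rw [hR, Rset, Finset.mem_filter] at this
      exact this.2
    unfold eE nuF
    rw [dif_neg hik]
    have h1 : mu ⟨(i : ℕ) - k, by have := i.isLt; omega⟩ ≤ M :=
      hmu _ _ (by simp [Fin.le_def])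
    have := i.isLt
    omega
  have hsumA : A.card * (M + h) ≤ ∑ i ∈ A, eE k h lam mu i := by
    simpa using Finset.card_nsmul_le_sum A _ _ hAbound
  have hsumB : ∑ i ∈ B, eE k h lam mu i ≤ B.card * (M + (h - 1)) := by
    simpa using Finset.sum_le_card_nsmul B _ _ hBbound
  have hsplitS : ∑ i ∈ S ∩ R, eE k h lam mu i + ∑ i ∈ A, eE k h lam mu i
      = ∑ i ∈ S, eE k h lam mu i := Finset.sum_inter_add_sum_sdiff S R _
  have hsplitR : ∑ i ∈ R ∩ S, eE k h lam mu i + ∑ i ∈ B, eE k h lam mu i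
      = ∑ i ∈ R, eE k h lam mu i := Finset.sum_inter_add_sum_sdiff R S _
  rw [inter_comm] at hsplitR
  have hRsum : ∑ i ∈ R, eE k h lam mu i = (∑ j, mu j) + cc h := sum_Rset
  have hcA : 1 ≤ A.card := Finset.card_pos.mpr hAne
  have hexp : A.card * (M + h) = B.card * (M + (h - 1)) + B.card := by
    rw [hcAB]
    have hh : M + h = M + (h - 1) + 1 := by omega
    rw [hh]; ring
  omega

lemma sum_e_ge (hmu : ∀ i j : Fin h, i ≤ j → mu j ≤ mu i)
    (hlm : ∀ (i : Fin k) (j : Fin h), mu j ≤ lam i)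
    (S : Finset (Fin (k + h))) (hS : S.card = h) :
    (∑ j, mu j) + cc h ≤ ∑ i ∈ S, eE k h lam mu i := by
  by_cases hne : S = Rset k h
  · rw [hne, sum_Rset]
  · have := sum_e_gt hmu hlm S hS hne; omega


noncomputable section

/-- substitution `X t ↦ X t` (t < k), `X t ↦ ε · X t` (t ≥ k), with `ε` the polynomial variable -/
def subG (k h : ℕ) : Fin (k + h) → Polynomial (MvPolynomial (Fin (k + h)) ℂ) :=
  fun t => if (t : ℕ) < k then Polynomial.C (X t) else Polynomial.X * Polynomial.C (X t)

def Tm (k h : ℕ) : MvPolynomial (Fin (k + h)) ℂ →ₐ[ℂ] Polynomial (MvPolynomial (Fin (k + h)) ℂ) :=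
  aeval (subG k h)

def wF (k : ℕ) {n : ℕ} (i : Fin n) : ℕ := if (i : ℕ) < k then 0 else 1

def Mm (k h : ℕ) (lam : Fin k → ℕ) (mu : Fin h → ℕ) :
    Matrix (Fin (k + h)) (Fin (k + h)) (Polynomial (MvPolynomial (Fin (k + h)) ℂ)) :=
  Matrix.of fun i j => Polynomial.X ^ (wF k i * eE k h lam mu j) *
    Polynomial.C ((X i : MvPolynomial (Fin (k + h)) ℂ) ^ eE k h lam mu j)

variable {k h : ℕ} {lam : Fin k → ℕ} {mu : Fin h → ℕ}

lemma Tm_entry (i j : Fin (k + h)) :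
    Tm k h ((X i : MvPolynomial (Fin (k + h)) ℂ) ^ eE k h lam mu j)
      = Polynomial.X ^ (wF k i * eE k h lam mu j) *
        Polynomial.C ((X i : MvPolynomial (Fin (k + h)) ℂ) ^ eE k h lam mu j) := by
  rw [map_pow]
  have hT : (Tm k h) (X i) = subG k h i := aeval_X _ _
  rw [hT]
  unfold subG wF
  by_cases hik : (i : ℕ) < k
  · rw [if_pos hik, if_pos hik]
    simp [← map_pow]
  · rw [if_neg hik, if_neg hik, mul_pow, ← map_pow]
    simp

lemma Tm_det : Tm k h (shiftedVdm (nuF k h lam mu) (fun i => X i)) = (Mm k h lam mu).det := by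
  unfold shiftedVdm
  rw [AlgHom.map_det]
  refine congrArg Matrix.det (Matrix.ext fun i j => ?_)
  rw [AlgHom.mapMatrix_apply, Matrix.map_apply, Matrix.of_apply]
  exact Tm_entry i j

lemma coeff_det_Mm (d : ℕ) :
    ((Mm k h lam mu).det).coeff d
      = ∑ σ : Equiv.Perm (Fin (k + h)), (Equiv.Perm.sign σ : ℤ) •
          (if (∑ j, wF k (σ j) * eE k h lam mu j) = d
            then (∏ j, (X (σ j) : MvPolynomial (Fin (k + h)) ℂ) ^ eE k h lam mu j) else 0) := by
  rw [Matrix.det_apply', Polynomial.finset_sum_coeff]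
  refine Finset.sum_congr rfl fun σ _ => ?_
  have h1 : ∏ j, (Mm k h lam mu) (σ j) j
      = Polynomial.C (∏ j, (X (σ j) : MvPolynomial (Fin (k + h)) ℂ) ^ eE k h lam mu j) *
        Polynomial.X ^ (∑ j, wF k (σ j) * eE k h lam mu j) := by
    simp only [Mm, Matrix.of_apply]
    rw [Finset.prod_mul_distrib, Finset.prod_pow_eq_pow_sum, map_prod, mul_comm]
  have h2 : ((Equiv.Perm.sign σ : ℤ) : Polynomial (MvPolynomial (Fin (k + h)) ℂ))
        * (∏ j, (Mm k h lam mu) (σ j) j)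
      = ((Equiv.Perm.sign σ : ℤ)) • (∏ j, (Mm k h lam mu) (σ j) j) := by
    rw [zsmul_eq_mul]
  rw [h2, Polynomial.coeff_smul, h1, Polynomial.coeff_C_mul, Polynomial.coeff_X_pow]
  by_cases hc : (∑ j, wF k (σ j) * eE k h lam mu j) = d
  · simp [hc]
  · simp [hc, Ne.symm hc]

lemma tsum_eq (σ : Equiv.Perm (Fin (k + h))) :
    ∑ j, wF k (σ j) * eE k h lam mu j
      = ∑ j ∈ univ.filter (fun j => ¬ ((σ j : ℕ) < k)), eE k h lam mu j := by
  rw [sum_filter]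
  refine Finset.sum_congr rfl fun j _ => ?_
  unfold wF
  split_ifs <;> simp

lemma card_filter_perm (σ : Equiv.Perm (Fin (k + h))) :
    (univ.filter fun j => ¬ ((σ j : ℕ) < k)).card = h := by
  have hb : (univ.filter fun j => ¬ ((σ j : ℕ) < k)).card = (Rset k h).card := by
    rw [Rset]
    apply Finset.card_bij (fun j _ => σ j)
    · intro a ha
      simp only [mem_filter, mem_univ, true_and] at ha ⊢
      exact ha
    · intro a _ b _ hab
      exact σ.injective hab
    · intro b hb
      refine ⟨σ.symm b, ?_, by simp⟩
      simp only [mem_filter, mem_univ, true_and] at hb ⊢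
      simpa using hb
  rw [hb, card_Rset]

lemma coeff_det_Mm_eq_zero (hmu : ∀ i j : Fin h, i ≤ j → mu j ≤ mu i)
    (hlm : ∀ (i : Fin k) (j : Fin h), mu j ≤ lam i)
    (d : ℕ) (hd : d < (∑ j, mu j) + cc h) :
    ((Mm k h lam mu).det).coeff d = 0 := by
  rw [coeff_det_Mm]
  refine Finset.sum_eq_zero fun σ _ => ?_
  have hcon : ¬ (∑ j, wF k (σ j) * eE k h lam mu j = d) := by
    rw [tsum_eq]
    intro hcon
    have := sum_e_ge hmu hlm _ (card_filter_perm σ)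
    omega
  rw [if_neg hcon, smul_zero]

end


noncomputable section

variable {k h : ℕ} {lam : Fin k → ℕ} {mu : Fin h → ℕ}

def Am (k h : ℕ) (lam : Fin k → ℕ) (mu : Fin h → ℕ) :
    Matrix (Fin k) (Fin k) (MvPolynomial (Fin (k + h)) ℂ) :=
  Matrix.of fun a a' => (X (Fin.castAdd h a) : MvPolynomial (Fin (k + h)) ℂ)
    ^ eE k h lam mu (Fin.castAdd h a')

def Dm (k h : ℕ) (lam : Fin k → ℕ) (mu : Fin h → ℕ) :
    Matrix (Fin h) (Fin h) (MvPolynomial (Fin (k + h)) ℂ) :=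
  Matrix.of fun b b' => (X (Fin.natAdd k b) : MvPolynomial (Fin (k + h)) ℂ)
    ^ eE k h lam mu (Fin.natAdd k b')

lemma Bm_eq :
    ((Matrix.fromBlocks (Am k h lam mu) 0 0 (Dm k h lam mu)).submatrix
      finSumFinEquiv.symm finSumFinEquiv.symm)
    = Matrix.of (fun i j : Fin (k + h) =>
        if (((i : ℕ) < k) ↔ ((j : ℕ) < k))
          then (X i : MvPolynomial (Fin (k + h)) ℂ) ^ eE k h lam mu j else 0) := by
  ext i j
  rcases lt_or_ge (i : ℕ) k with hi | hi <;> rcases lt_or_ge (j : ℕ) k with hj | hj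
  · obtain ⟨a, rfl⟩ : ∃ a : Fin k, i = Fin.castAdd h a := ⟨⟨(i : ℕ), hi⟩, Fin.ext rfl⟩
    obtain ⟨a', rfl⟩ : ∃ a' : Fin k, j = Fin.castAdd h a' := ⟨⟨(j : ℕ), hj⟩, Fin.ext rfl⟩
    simp [Am, Matrix.submatrix_apply, finSumFinEquiv_symm_apply_castAdd]
  · obtain ⟨a, rfl⟩ : ∃ a : Fin k, i = Fin.castAdd h a := ⟨⟨(i : ℕ), hi⟩, Fin.ext rfl⟩
    obtain ⟨b', rfl⟩ : ∃ b' : Fin h, j = Fin.natAdd k b' :=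
      ⟨⟨(j : ℕ) - k, by have := j.isLt; omega⟩, Fin.ext (by simp; omega)⟩
    simp only [Matrix.submatrix_apply, finSumFinEquiv_symm_apply_castAdd,
      finSumFinEquiv_symm_apply_natAdd, Matrix.fromBlocks_apply₁₂, Matrix.of_apply,
      Matrix.zero_apply]
    rw [if_neg]
    simp only [Fin.coe_castAdd, Fin.coe_natAdd]
    have := a.isLt
    omega
  · obtain ⟨b, rfl⟩ : ∃ b : Fin h, i = Fin.natAdd k b :=
      ⟨⟨(i : ℕ) - k, by have := i.isLt; omega⟩, Fin.ext (by simp; omega)⟩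
    obtain ⟨a', rfl⟩ : ∃ a' : Fin k, j = Fin.castAdd h a' := ⟨⟨(j : ℕ), hj⟩, Fin.ext rfl⟩
    simp only [Matrix.submatrix_apply, finSumFinEquiv_symm_apply_castAdd,
      finSumFinEquiv_symm_apply_natAdd, Matrix.fromBlocks_apply₂₁, Matrix.of_apply,
      Matrix.zero_apply]
    rw [if_neg]
    simp only [Fin.coe_castAdd, Fin.coe_natAdd]
    have := a'.isLt
    omega
  · obtain ⟨b, rfl⟩ : ∃ b : Fin h, i = Fin.natAdd k b :=
      ⟨⟨(i : ℕ) - k, by have := i.isLt; omega⟩, Fin.ext (by simp; omega)⟩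
    obtain ⟨b', rfl⟩ : ∃ b' : Fin h, j = Fin.natAdd k b' :=
      ⟨⟨(j : ℕ) - k, by have := j.isLt; omega⟩, Fin.ext (by simp; omega)⟩
    simp only [Matrix.submatrix_apply, finSumFinEquiv_symm_apply_natAdd,
      Matrix.fromBlocks_apply₂₂, Matrix.of_apply, Dm]
    rw [if_pos]
    simp only [Fin.coe_natAdd]
    omega

lemma coeff_det_Mm_top (hmu : ∀ i j : Fin h, i ≤ j → mu j ≤ mu i)
    (hlm : ∀ (i : Fin k) (j : Fin h), mu j ≤ lam i) :
    ((Mm k h lam mu).det).coeff ((∑ j, mu j) + cc h)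
      = (Am k h lam mu).det * (Dm k h lam mu).det := by
  classical
  have hdet2 : (Matrix.of (fun i j : Fin (k + h) =>
        if (((i : ℕ) < k) ↔ ((j : ℕ) < k))
          then (X i : MvPolynomial (Fin (k + h)) ℂ) ^ eE k h lam mu j else 0)).det
      = (Am k h lam mu).det * (Dm k h lam mu).det := by
    rw [← Bm_eq, Matrix.det_submatrix_equiv_self, Matrix.det_fromBlocks_zero₂₁]
  rw [coeff_det_Mm, ← hdet2, Matrix.det_apply']
  refine Finset.sum_congr rfl fun σ _ => ?_
  rw [zsmul_eq_mul]
  by_cases hσ : ∀ j : Fin (k + h), ((σ j : ℕ) < k ↔ (j : ℕ) < k)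
  · have hfil : univ.filter (fun j => ¬ ((σ j : ℕ) < k)) = Rset k h := by
      rw [Rset]; ext j
      simp only [mem_filter, mem_univ, true_and]
      exact not_congr (hσ j)
    have hts : (∑ j, wF k (σ j) * eE k h lam mu j) = (∑ j, mu j) + cc h := by
      rw [tsum_eq, hfil, sum_Rset]
    rw [if_pos hts]
    congr 1
    refine Finset.prod_congr rfl fun j _ => ?_
    rw [Matrix.of_apply, if_pos (hσ j)]
  · obtain ⟨j₀, hj₀⟩ := not_forall.mp hσ
    have hne : univ.filter (fun j => ¬ ((σ j : ℕ) < k)) ≠ Rset k h := by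
      intro heq
      apply hj₀
      have := Finset.ext_iff.mp heq j₀
      rw [Rset] at this
      simp only [mem_filter, mem_univ, true_and] at this
      tauto
    have hts : ¬ ((∑ j, wF k (σ j) * eE k h lam mu j) = (∑ j, mu j) + cc h) := by
      rw [tsum_eq]
      have := sum_e_gt hmu hlm _ (card_filter_perm σ) hne
      omega
    rw [if_neg hts, mul_zero]
    rw [Finset.prod_eq_zero (Finset.mem_univ j₀), mul_zero]
    rw [Matrix.of_apply, if_neg hj₀]

lemma detAm : (Am k h lam mu).det
    = ((∏ a : Fin k, (X (Fin.castAdd h a) : MvPolynomial (Fin (k + h)) ℂ)) ^ h) *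
      rename (Fin.castAdd h) (shiftedVdm lam (fun i => X i)) := by
  have h1 : (Am k h lam mu).det = Matrix.det (Matrix.of fun a a' : Fin k =>
      ((X (Fin.castAdd h a) : MvPolynomial (Fin (k + h)) ℂ) ^ h) *
      (Matrix.of fun a a' : Fin k => (X (Fin.castAdd h a) : MvPolynomial (Fin (k + h)) ℂ)
        ^ (lam a' + (k - 1 - (a' : ℕ)))) a a') := by
    refine congrArg _ (Matrix.ext fun a a' => ?_)
    simp only [Am, Matrix.of_apply, eE_castAdd, ← pow_add]
    congr 1
    have := a'.isLt
    omega
  rw [h1, Matrix.det_mul_column, ← Finset.prod_pow]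
  congr 1
  rw [shiftedVdm, AlgHom.map_det]
  refine congrArg Matrix.det (Matrix.ext fun a a' => ?_)
  simp only [AlgHom.mapMatrix_apply, Matrix.map_apply, Matrix.of_apply, map_pow, rename_X]

lemma detDm : (Dm k h lam mu).det = rename (Fin.natAdd k) (shiftedVdm mu (fun i => X i)) := by
  rw [shiftedVdm, AlgHom.map_det]
  refine congrArg Matrix.det (Matrix.ext fun b b' => ?_)
  simp only [AlgHom.mapMatrix_apply, Matrix.map_apply, Matrix.of_apply, map_pow, rename_X,
    Dm, eE_natAdd]

end


lemma prod_Ioi_eq {M : Type*} [CommMonoid M] {n : ℕ} (F : Fin n → Fin n → M) :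
    ∏ i, ∏ j ∈ Ioi i, F i j = ∏ i, ∏ j, if i < j then F i j else 1 := by
  refine Finset.prod_congr rfl fun i _ => ?_
  rw [show Ioi i = univ.filter (i < ·) from by ext x; simp, Finset.prod_filter]

noncomputable section

variable {k h : ℕ}

def Wp (k h : ℕ) : Polynomial (MvPolynomial (Fin (k + h)) ℂ) :=
  ∏ i : Fin (k + h), ∏ j ∈ Ioi i,
    (if (i : ℕ) < k ∧ ¬ ((j : ℕ) < k)
      then Polynomial.C (X i) - Polynomial.X * Polynomial.C (X j)
      else Polynomial.C ((X i : MvPolynomial (Fin (k + h)) ℂ) - X j))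

lemma TV : Tm k h (vdmProd (fun i => X i)) = Polynomial.X ^ cc h * Wp k h := by
  unfold vdmProd Wp
  rw [map_prod]
  have step1 : ∀ i : Fin (k + h), (Tm k h) (∏ j ∈ Ioi i, ((X i : MvPolynomial (Fin (k+h)) ℂ) - X j))
      = ∏ j ∈ Ioi i, (Polynomial.X ^ (wF k i) *
          (if (i : ℕ) < k ∧ ¬ ((j : ℕ) < k)
            then Polynomial.C (X i) - Polynomial.X * Polynomial.C (X j)
            else Polynomial.C ((X i : MvPolynomial (Fin (k + h)) ℂ) - X j))) := by
    intro i
    rw [map_prod]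
    refine Finset.prod_congr rfl fun j hj => ?_
    have hij : i < j := Finset.mem_Ioi.mp hj
    rw [map_sub]
    have hTi : (Tm k h) (X i) = subG k h i := aeval_X _ _
    have hTj : (Tm k h) (X j) = subG k h j := aeval_X _ _
    rw [hTi, hTj]
    unfold subG wF
    by_cases hik : (i : ℕ) < k
    · by_cases hjk : (j : ℕ) < k
      · simp only [if_pos hik, if_pos hjk,
          if_neg (show ¬ ((i : ℕ) < k ∧ ¬ ((j : ℕ) < k)) by tauto), pow_zero, one_mul, map_sub]
      · simp only [if_pos hik, if_neg hjk, if_pos (show (i : ℕ) < k ∧ ¬ ((j : ℕ) < k) from ⟨hik, hjk⟩),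
          pow_zero, one_mul]
    · have hjk : ¬ ((j : ℕ) < k) := by
        have := Fin.lt_def.mp hij; omega
      simp only [if_neg hik, if_neg hjk,
        if_neg (show ¬ ((i : ℕ) < k ∧ ¬ ((j : ℕ) < k)) by tauto), pow_one, map_sub]
      ring
  rw [Finset.prod_congr rfl fun i _ => step1 i]
  have step2 : ∀ i : Fin (k + h), ∏ j ∈ Ioi i, (Polynomial.X ^ (wF k i) *
          (if (i : ℕ) < k ∧ ¬ ((j : ℕ) < k)
            then Polynomial.C (X i) - Polynomial.X * Polynomial.C (X j)
            else Polynomial.C ((X i : MvPolynomial (Fin (k + h)) ℂ) - X j)))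
      = Polynomial.X ^ (wF k i * (k + h - 1 - (i : ℕ))) * ∏ j ∈ Ioi i,
          (if (i : ℕ) < k ∧ ¬ ((j : ℕ) < k)
            then Polynomial.C (X i) - Polynomial.X * Polynomial.C (X j)
            else Polynomial.C ((X i : MvPolynomial (Fin (k + h)) ℂ) - X j)) := by
    intro i
    rw [Finset.prod_mul_distrib, Finset.prod_const, ← pow_mul, Fin.card_Ioi, mul_comm (wF k i)]
  rw [Finset.prod_congr rfl fun i _ => step2 i, Finset.prod_mul_distrib,
    Finset.prod_pow_eq_pow_sum]
  congr 2
  rw [Fin.sum_univ_add]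
  have hcast : ∀ a : Fin k, wF k (Fin.castAdd h a) * (k + h - 1 - ((Fin.castAdd h a : Fin (k+h)) : ℕ)) = 0 := by
    intro a; unfold wF; rw [if_pos (by simpa using a.isLt)]; ring
  have hnat : ∀ b : Fin h, wF k (Fin.natAdd k b) * (k + h - 1 - ((Fin.natAdd k b : Fin (k+h)) : ℕ)) = h - 1 - (b : ℕ) := by
    intro b; unfold wF
    rw [if_neg (by simp)]
    simp only [Fin.coe_natAdd, one_mul]
    omega
  rw [Finset.sum_congr rfl fun a _ => hcast a, Finset.sum_congr rfl fun b _ => hnat b]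
  simp [cc]

lemma W0_eq : (Wp k h).coeff 0
    = rename (Fin.castAdd h) (vdmProd (fun i => (X i : MvPolynomial (Fin k) ℂ)))
      * (((∏ a : Fin k, (X (Fin.castAdd h a) : MvPolynomial (Fin (k + h)) ℂ)) ^ h)
      * rename (Fin.natAdd k) (vdmProd (fun i => (X i : MvPolynomial (Fin h) ℂ)))) := by
  classical
  rw [Polynomial.coeff_zero_eq_eval_zero, Wp]
  rw [Polynomial.eval_prod]
  have step1 : ∀ i : Fin (k + h), Polynomial.eval 0 (∏ j ∈ Ioi i,
      (if (i : ℕ) < k ∧ ¬ ((j : ℕ) < k)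
        then Polynomial.C (X i) - Polynomial.X * Polynomial.C (X j)
        else Polynomial.C ((X i : MvPolynomial (Fin (k + h)) ℂ) - X j)))
      = ∏ j ∈ Ioi i, (if (i : ℕ) < k ∧ ¬ ((j : ℕ) < k)
          then (X i : MvPolynomial (Fin (k + h)) ℂ) else X i - X j) := by
    intro i
    rw [Polynomial.eval_prod]
    refine Finset.prod_congr rfl fun j _ => ?_
    by_cases hc : (i : ℕ) < k ∧ ¬ ((j : ℕ) < k)
    · rw [if_pos hc, if_pos hc]; simp
    · rw [if_neg hc, if_neg hc]; simp
  rw [Finset.prod_congr rfl fun i _ => step1 i]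
  rw [prod_Ioi_eq, Fin.prod_univ_add]
  have hbl1 : ∀ a : Fin k, (∏ j : Fin (k + h),
      if (Fin.castAdd h a : Fin (k + h)) < j then
        (if ((Fin.castAdd h a : Fin (k+h)) : ℕ) < k ∧ ¬ ((j : ℕ) < k)
          then (X (Fin.castAdd h a) : MvPolynomial (Fin (k + h)) ℂ)
          else X (Fin.castAdd h a) - X j) else 1)
      = (∏ a' : Fin k, if a < a' then (X (Fin.castAdd h a) : MvPolynomial (Fin (k + h)) ℂ)
            - X (Fin.castAdd h a') else 1) * (X (Fin.castAdd h a)) ^ h := by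
    intro a
    rw [Fin.prod_univ_add]
    congr 1
    · refine Finset.prod_congr rfl fun a' _ => ?_
      have h1 : ((Fin.castAdd h a : Fin (k+h)) : ℕ) < k ∧ ¬ (((Fin.castAdd h a' : Fin (k+h)) : ℕ) < k) ↔ False := by
        simp only [Fin.coe_castAdd, iff_false, not_and, not_not]
        intro; exact a'.isLt
      have h2 : (Fin.castAdd h a : Fin (k+h)) < Fin.castAdd h a' ↔ a < a' := by
        simp only [Fin.lt_def, Fin.coe_castAdd]
      simp only [h1, if_false, h2]
    · have : ∀ b : Fin h, (if (Fin.castAdd h a : Fin (k + h)) < Fin.natAdd k b then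
          (if ((Fin.castAdd h a : Fin (k+h)) : ℕ) < k ∧ ¬ (((Fin.natAdd k b : Fin (k+h)) : ℕ) < k)
            then (X (Fin.castAdd h a) : MvPolynomial (Fin (k + h)) ℂ)
            else X (Fin.castAdd h a) - X (Fin.natAdd k b)) else 1)
          = X (Fin.castAdd h a) := by
        intro b
        rw [if_pos, if_pos]
        · constructor
          · simpa using a.isLt
          · simp
        · rw [Fin.lt_def]
          simp only [Fin.coe_castAdd, Fin.coe_natAdd]
          have := a.isLt; omega
      rw [Finset.prod_congr rfl fun b _ => this b, Finset.prod_const, Finset.card_univ,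
        Fintype.card_fin]
  have hbl2 : ∀ b : Fin h, (∏ j : Fin (k + h),
      if (Fin.natAdd k b : Fin (k + h)) < j then
        (if ((Fin.natAdd k b : Fin (k+h)) : ℕ) < k ∧ ¬ ((j : ℕ) < k)
          then (X (Fin.natAdd k b) : MvPolynomial (Fin (k + h)) ℂ)
          else X (Fin.natAdd k b) - X j) else 1)
      = ∏ b' : Fin h, if b < b' then (X (Fin.natAdd k b) : MvPolynomial (Fin (k + h)) ℂ)
          - X (Fin.natAdd k b') else 1 := by
    intro b
    rw [Fin.prod_univ_add]
    have hone : ∀ a' : Fin k, (if (Fin.natAdd k b : Fin (k + h)) < Fin.castAdd h a' then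
        (if ((Fin.natAdd k b : Fin (k+h)) : ℕ) < k ∧ ¬ (((Fin.castAdd h a' : Fin (k+h)) : ℕ) < k)
          then (X (Fin.natAdd k b) : MvPolynomial (Fin (k + h)) ℂ)
          else X (Fin.natAdd k b) - X (Fin.castAdd h a')) else 1) = 1 := by
      intro a'
      rw [if_neg]
      rw [Fin.lt_def]
      simp only [Fin.coe_castAdd, Fin.coe_natAdd]
      have := a'.isLt; omega
    rw [Finset.prod_congr rfl fun a' _ => hone a', Finset.prod_const_one, one_mul]
    refine Finset.prod_congr rfl fun b' _ => ?_
    have h1 : ((Fin.natAdd k b : Fin (k+h)) : ℕ) < k ∧ ¬ (((Fin.natAdd k b' : Fin (k+h)) : ℕ) < k) ↔ False := by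
      simp only [Fin.coe_natAdd, iff_false, not_and]
      intro hcon
      omega
    have h2 : (Fin.natAdd k b : Fin (k+h)) < Fin.natAdd k b' ↔ b < b' := by
      simp only [Fin.lt_def, Fin.coe_natAdd]
      omega
    simp only [h1, if_false, h2]
  rw [Finset.prod_congr rfl fun a _ => hbl1 a, Finset.prod_congr rfl fun b _ => hbl2 b]
  rw [Finset.prod_mul_distrib, ← Finset.prod_pow]
  have hVk : rename (Fin.castAdd h) (vdmProd (fun i => (X i : MvPolynomial (Fin k) ℂ)))
      = ∏ a : Fin k, ∏ a' : Fin k, if a < a' then (X (Fin.castAdd h a) : MvPolynomial (Fin (k + h)) ℂ)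
          - X (Fin.castAdd h a') else 1 := by
    unfold vdmProd
    rw [map_prod]
    rw [Finset.prod_congr rfl fun a _ => map_prod (rename (R := ℂ) (Fin.castAdd h : Fin k → Fin (k + h))) _ (Ioi a)]
    rw [prod_Ioi_eq]
    refine Finset.prod_congr rfl fun a _ => Finset.prod_congr rfl fun a' _ => ?_
    split_ifs
    · rw [map_sub, rename_X, rename_X]
    · rfl
  have hVh : rename (Fin.natAdd k) (vdmProd (fun i => (X i : MvPolynomial (Fin h) ℂ)))
      = ∏ b : Fin h, ∏ b' : Fin h, if b < b' then (X (Fin.natAdd k b) : MvPolynomial (Fin (k + h)) ℂ)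
          - X (Fin.natAdd k b') else 1 := by
    unfold vdmProd
    rw [map_prod]
    rw [Finset.prod_congr rfl fun b _ => map_prod (rename (R := ℂ) (Fin.natAdd k : Fin h → Fin (k + h))) _ (Ioi b)]
    rw [prod_Ioi_eq]
    refine Finset.prod_congr rfl fun b _ => Finset.prod_congr rfl fun b' _ => ?_
    split_ifs
    · rw [map_sub, rename_X, rename_X]
    · rfl
  rw [hVk, hVh]
  ring

end


lemma vdm_ne_zero (n : ℕ) : (vdmProd (fun i => (X i : MvPolynomial (Fin n) ℂ))) ≠ 0 := by
  unfold vdmProd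
  rw [Finset.prod_ne_zero_iff]
  intro i _
  rw [Finset.prod_ne_zero_iff]
  intro j hj
  have hij : i ≠ j := ne_of_lt (Finset.mem_Ioi.mp hj)
  exact sub_ne_zero.mpr fun hXX => hij (MvPolynomial.X_injective hXX)

lemma W0_ne_zero {k h : ℕ} : (Wp k h).coeff 0 ≠ 0 := by
  rw [W0_eq]
  apply mul_ne_zero
  · have hinj : Function.Injective (Fin.castAdd h : Fin k → Fin (k + h)) :=
      fun a b hab => Fin.ext (by simpa using congrArg Fin.val hab)
    intro h0
    exact vdm_ne_zero k (MvPolynomial.rename_injective _ hinj (h0.trans (map_zero _).symm))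
  · apply mul_ne_zero
    · apply pow_ne_zero
      rw [Finset.prod_ne_zero_iff]
      intro a _
      exact MvPolynomial.X_ne_zero _
    · have hinj : Function.Injective (Fin.natAdd k : Fin h → Fin (k + h)) :=
        fun a b hab => Fin.ext (by
          have := congrArg Fin.val hab
          simp only [Fin.coe_natAdd] at this
          omega)
      intro h0
      exact vdm_ne_zero h (MvPolynomial.rename_injective _ hinj (h0.trans (map_zero _).symm))

end SchurAux

open MvPolynomial in
/-- Splitting formula: if `ν` is the concatenation of partitions `λ` (length `k`) and `μ`
(length `h`) with `λ_k ≥ μ_1`, then for all `z ∈ ℂ^k`, `y ∈ ℂ^h`,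
`s_ν(z, εy)/ε^{|μ|} → s_λ(z) s_μ(y)` as `ε → 0`, `ε ≠ 0`.
`Snu`, `Slam`, `Smu` are the Schur polynomials of `ν`, `λ`, `μ`, characterized by
`Δ_λ = s_λ * Δ`. -/
theorem schur_splitting_limit (k h : ℕ) (lam : Fin k → ℕ) (mu : Fin h → ℕ)
    (hlam : ∀ i j : Fin k, i ≤ j → lam j ≤ lam i)
    (hmu : ∀ i j : Fin h, i ≤ j → mu j ≤ mu i)
    (hlm : ∀ (i : Fin k) (j : Fin h), mu j ≤ lam i)
    (Snu : MvPolynomial (Fin (k + h)) ℂ)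
    (hSnu : shiftedVdm (fun t : Fin (k + h) =>
        if ht : (t : ℕ) < k then lam ⟨(t : ℕ), ht⟩
        else mu ⟨(t : ℕ) - k, by have := t.isLt; omega⟩) (fun i => X i)
      = Snu * vdmProd (fun i => X i))
    (Slam : MvPolynomial (Fin k) ℂ)
    (hSlam : shiftedVdm lam (fun i => X i) = Slam * vdmProd (fun i => X i))
    (Smu : MvPolynomial (Fin h) ℂ)
    (hSmu : shiftedVdm mu (fun i => X i) = Smu * vdmProd (fun i => X i))
    (z : Fin k → ℂ) (y : Fin h → ℂ) :
    Filter.Tendsto (fun ε : ℂ =>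
        MvPolynomial.eval (fun t : Fin (k + h) =>
          if ht : (t : ℕ) < k then z ⟨(t : ℕ), ht⟩
          else ε * y ⟨(t : ℕ) - k, by have := t.isLt; omega⟩) Snu / ε ^ (∑ j, mu j))
      (nhdsWithin 0 {(0 : ℂ)}ᶜ)
      (nhds (MvPolynomial.eval z Slam * MvPolynomial.eval y Smu)) := by
  classical
  have hSnu' : shiftedVdm (SchurAux.nuF k h lam mu) (fun i => X i)
      = Snu * vdmProd (fun i => X i) := hSnu
  set m := ∑ j, mu j with hm
  have hdet : (SchurAux.Mm k h lam mu).det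
      = SchurAux.Tm k h Snu * (Polynomial.X ^ SchurAux.cc h * SchurAux.Wp k h) := by
    rw [← SchurAux.Tm_det, hSnu', map_mul, SchurAux.TV]
  have hdvd : Polynomial.X ^ (m + SchurAux.cc h) ∣ (SchurAux.Mm k h lam mu).det :=
    Polynomial.X_pow_dvd_iff.mpr fun d hd => SchurAux.coeff_det_Mm_eq_zero hmu hlm d hd
  obtain ⟨Q, hQ⟩ := hdvd
  have hQ0 : Q.coeff 0 = (SchurAux.Am k h lam mu).det * (SchurAux.Dm k h lam mu).det := by
    have h1 := Polynomial.coeff_X_pow_mul Q (m + SchurAux.cc h) 0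
    rw [← hQ, zero_add] at h1
    rw [← h1, SchurAux.coeff_det_Mm_top hmu hlm]
  have hXcne : (Polynomial.X : Polynomial (MvPolynomial (Fin (k + h)) ℂ)) ^ SchurAux.cc h ≠ 0 :=
    pow_ne_zero _ Polynomial.X_ne_zero
  have h1 : Polynomial.X ^ (m + SchurAux.cc h) * Q
      = SchurAux.Tm k h Snu * (Polynomial.X ^ SchurAux.cc h * SchurAux.Wp k h) :=
    hQ.symm.trans hdet
  have hcan : Polynomial.X ^ m * Q = SchurAux.Tm k h Snu * SchurAux.Wp k h := by
    apply mul_left_cancel₀ hXcne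
    linear_combination h1
  have hW0ne := SchurAux.W0_ne_zero (k := k) (h := h)
  have hndvd : ¬ ((Polynomial.X : Polynomial (MvPolynomial (Fin (k + h)) ℂ)) ∣ SchurAux.Wp k h) :=
    fun hx => hW0ne (Polynomial.X_dvd_iff.mp hx)
  have hdvd2 : Polynomial.X ^ m ∣ SchurAux.Tm k h Snu :=
    Polynomial.prime_X.pow_dvd_of_dvd_mul_right m hndvd ⟨Q, hcan.symm⟩
  obtain ⟨S', hS'⟩ := hdvd2
  have hQS : Q = S' * SchurAux.Wp k h := by
    apply mul_left_cancel₀ (pow_ne_zero m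
      (Polynomial.X_ne_zero (R := MvPolynomial (Fin (k + h)) ℂ)))
    rw [hcan, hS']
    ring
  have hS'0 : S'.coeff 0 = rename (Fin.castAdd h) Slam * rename (Fin.natAdd k) Smu := by
    apply mul_right_cancel₀ hW0ne
    have h2 : Q.coeff 0 = S'.coeff 0 * (SchurAux.Wp k h).coeff 0 := by
      rw [hQS, Polynomial.mul_coeff_zero]
    rw [← h2, hQ0, SchurAux.detAm, SchurAux.detDm, hSlam, hSmu, map_mul, map_mul,
      SchurAux.W0_eq]
    ring
  set wzy : Fin (k + h) → ℂ := fun t =>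
    if ht : (t : ℕ) < k then z ⟨(t : ℕ), ht⟩
    else y ⟨(t : ℕ) - k, by have := t.isLt; omega⟩ with hwzy
  have hkey : ∀ ε : ℂ,
      MvPolynomial.eval (fun t : Fin (k + h) =>
        if ht : (t : ℕ) < k then z ⟨(t : ℕ), ht⟩
        else ε * y ⟨(t : ℕ) - k, by have := t.isLt; omega⟩) Snu
      = Polynomial.eval ε (Polynomial.map (MvPolynomial.eval wzy) (SchurAux.Tm k h Snu)) := by
    intro ε
    have hhom : (MvPolynomial.eval (fun t : Fin (k + h) =>
        if ht : (t : ℕ) < k then z ⟨(t : ℕ), ht⟩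
        else ε * y ⟨(t : ℕ) - k, by have := t.isLt; omega⟩))
        = RingHom.comp (Polynomial.evalRingHom ε)
            (RingHom.comp (Polynomial.mapRingHom (MvPolynomial.eval wzy))
              (SchurAux.Tm k h).toRingHom) := by
      apply MvPolynomial.ringHom_ext
      · intro r
        simp [SchurAux.Tm, SchurAux.subG]
      · intro t
        rw [eval_X, RingHom.comp_apply, RingHom.comp_apply]
        rw [show ((SchurAux.Tm k h).toRingHom : MvPolynomial (Fin (k + h)) ℂ →+*
            Polynomial (MvPolynomial (Fin (k + h)) ℂ)) (X t) = SchurAux.subG k h t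
          from aeval_X _ _]
        unfold SchurAux.subG
        by_cases ht : (t : ℕ) < k
        · rw [dif_pos ht, if_pos ht]
          simp [hwzy, dif_pos ht]
        · rw [dif_neg ht, if_neg ht]
          simp [hwzy, dif_neg ht]
          ring
    rw [hhom]
    rfl
  set g := Polynomial.map (MvPolynomial.eval wzy) S' with hg
  have hg0 : Polynomial.eval 0 g = MvPolynomial.eval z Slam * MvPolynomial.eval y Smu := by
    rw [hg, ← Polynomial.coeff_zero_eq_eval_zero, Polynomial.coeff_map, hS'0, map_mul,
      MvPolynomial.eval_rename, MvPolynomial.eval_rename]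
    have hc1 : wzy ∘ Fin.castAdd h = z := by
      funext a
      show wzy (Fin.castAdd h a) = z a
      simp only [hwzy]
      rw [dif_pos (by simpa using a.isLt)]
      exact congrArg z (Fin.ext (by simp))
    have hc2 : wzy ∘ Fin.natAdd k = y := by
      funext b
      show wzy (Fin.natAdd k b) = y b
      simp only [hwzy]
      rw [dif_neg (by simp)]
      exact congrArg y (Fin.ext (by simp))
    rw [hc1, hc2]
  have hcont : Filter.Tendsto (fun ε : ℂ => Polynomial.eval ε g)
      (nhdsWithin 0 {(0 : ℂ)}ᶜ) (nhds (MvPolynomial.eval z Slam * MvPolynomial.eval y Smu)) := by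
    rw [← hg0]
    exact ((g.continuous).tendsto 0).mono_left nhdsWithin_le_nhds
  refine Filter.Tendsto.congr' ?_ hcont
  filter_upwards [self_mem_nhdsWithin] with ε hε
  have hεne : ε ≠ 0 := Set.mem_compl_singleton_iff.mp hε
  rw [hkey ε, hS', Polynomial.map_mul, Polynomial.map_pow, Polynomial.map_X,
    Polynomial.eval_mul, Polynomial.eval_pow, Polynomial.eval_X]
  rw [mul_comm, mul_div_assoc, div_self (pow_ne_zero _ hεne), mul_one]
end
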